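/- arXiv:2203.13578 — 7 statements merged into one kernel-verified Lean document; each statement's English description precedes it below -/
import Mathlib

section
/- For every n ≥ 0, the type II recursion polynomial satisfies the determinantal formula B_n = h_n · det M_n, where M_n is the p×p matrix with entries (M_n)_{i,a} = A^{(a)}_{n+i−1} for 1 ≤ i, a ≤ p. -/
open Polynomial
open Fin.NatCast

lemma sum_window {M : Type*} [AddCommMonoid M] (f : ℕ → M) {N a b : ℕ} (hb : b < N)
    (h0 : ∀ m, m < N → m < a → f m = 0) (h1 : ∀ m, m < N → b < m → f m = 0) :
    ∑ m ∈ Finset.range N, f m = ∑ m ∈ Finset.Ico a (b + 1), f m := by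
  symm
  apply Finset.sum_subset
  · intro x hx
    simp only [Finset.mem_Ico] at hx
    simp only [Finset.mem_range]
    omega
  · intro x hx hnx
    simp only [Finset.mem_range] at hx
    simp only [Finset.mem_Ico, not_and, not_lt] at hnx
    rcases lt_or_ge x a with hxa | hxa
    · exact h0 x hx hxa
    · exact h1 x hx (by omega)

lemma winA (p : ℕ) (T : ℕ → ℕ → ℝ) (hT1 : ∀ n, T n (n + 1) = 1)
    (hTsup : ∀ n m, n + 1 < m → T n m = 0) (hTsub : ∀ n m, m + p < n → T n m = 0)
    (g : ℕ → Polynomial ℝ) {N j : ℕ} (hj : j + p < N) :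
    ∑ m ∈ Finset.range N, C (T m j) * g m
      = (if j = 0 then 0 else g (j - 1))
        + ∑ i ∈ Finset.range (p + 1), C (T (j + i) j) * g (j + i) := by
  have h0 : ∀ m, m < N → m < j - 1 → C (T m j) * g m = 0 := fun m _ hm => by
    rw [hTsup m j (by omega), map_zero, zero_mul]
  have h1 : ∀ m, m < N → j + p < m → C (T m j) * g m = 0 := fun m _ hm => by
    rw [hTsub m j (by omega), map_zero, zero_mul]
  rw [sum_window _ (by omega : j + p < N) h0 h1]
  rcases Nat.eq_zero_or_pos j with rfl | hjpos
  · rw [if_pos rfl, zero_add, Finset.sum_Ico_eq_sum_range]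
    simp
  · rw [if_neg (by omega), Finset.sum_Ico_eq_sum_range]
    have hlen : j + p + 1 - (j - 1) = (p + 1) + 1 := by omega
    rw [hlen, Finset.sum_range_succ']
    have he : ∀ i, j - 1 + (i + 1) = j + i := fun i => by omega
    have hfirst : j - 1 + 0 = j - 1 := by omega
    rw [hfirst]
    have hT : T (j - 1) j = 1 := by
      have := hT1 (j - 1); rwa [show j - 1 + 1 = j by omega] at this
    rw [hT, map_one, one_mul, add_comm]
    congr 1
    refine Finset.sum_congr rfl fun i _ => ?_
    rw [he i]

lemma winB (p : ℕ) (T : ℕ → ℕ → ℝ) (hT1 : ∀ n, T n (n + 1) = 1)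
    (hTsup : ∀ n m, n + 1 < m → T n m = 0) (hTsub : ∀ n m, m + p < n → T n m = 0)
    (g : ℕ → Polynomial ℝ) {N k : ℕ} (hk : k < N) :
    ∑ m ∈ Finset.range N, C (T k m) * g m
      = (if k + 1 < N then g (k + 1) else 0) + C (T k k) * g k
        + ∑ j ∈ Finset.Icc 1 p, (if j ≤ k then C (T k (k - j)) * g (k - j) else 0) := by
  have h0 : ∀ m, m < N → m < k - p → C (T k m) * g m = 0 := fun m _ hm => by
    rw [hTsub k m (by omega), map_zero, zero_mul]
  have core : ∑ m ∈ Finset.Ico (k - p) (k + 1), C (T k m) * g m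
      = C (T k k) * g k
        + ∑ j ∈ Finset.Icc 1 p, (if j ≤ k then C (T k (k - j)) * g (k - j) else 0) := by
    rw [show k + 1 = k + 1 from rfl, Finset.sum_Ico_succ_top (by omega : k - p ≤ k), add_comm]
    congr 1
    -- ∑ m ∈ Ico (k-p) k = ∑ j ∈ Icc 1 p, ite ...
    rw [Finset.sum_Ico_eq_sum_range]
    set d := k - (k - p) with hd
    rw [← Finset.sum_range_reflect]
    have he : ∀ i, i < d → k - p + (d - 1 - i) = k - (i + 1) := fun i hi => by omega
    have step1 : ∑ i ∈ Finset.range d, C (T k (k - p + (d - 1 - i))) * g (k - p + (d - 1 - i))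
        = ∑ i ∈ Finset.range d, C (T k (k - (i + 1))) * g (k - (i + 1)) := by
      refine Finset.sum_congr rfl fun i hi => ?_
      rw [he i (Finset.mem_range.mp hi)]
    rw [step1]
    have step2 : ∑ j ∈ Finset.Icc 1 p, (if j ≤ k then C (T k (k - j)) * g (k - j) else 0)
        = ∑ j ∈ Finset.Icc 1 d, C (T k (k - j)) * g (k - j) := by
      have hsub : Finset.Icc 1 d ⊆ Finset.Icc 1 p := by
        intro x hx; simp only [Finset.mem_Icc] at *; omega
      rw [← Finset.sum_subset hsub (fun x hx hnx => ?_)]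
      · refine Finset.sum_congr rfl fun j hj => ?_
        simp only [Finset.mem_Icc] at hj
        rw [if_pos (by omega)]
      · simp only [Finset.mem_Icc] at hx hnx
        rw [if_neg (by omega)]
    rw [step2, show Finset.Icc 1 d = Finset.Ico 1 (d + 1) by rw [Finset.Ico_add_one_right_eq_Icc],
      Finset.sum_Ico_eq_sum_range]
    have hlen2 : d + 1 - 1 = d := by omega
    rw [hlen2]
    refine Finset.sum_congr rfl fun i _ => ?_
    rw [show 1 + i = i + 1 by omega]
  rcases lt_or_ge (k + 1) N with hN | hN
  · have h1 : ∀ m, m < N → k + 1 < m → C (T k m) * g m = 0 := fun m _ hm => by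
      rw [hTsup k m (by omega), map_zero, zero_mul]
    rw [sum_window _ (by omega : k + 1 < N) h0 h1, Finset.sum_Ico_succ_top (by omega), core,
      if_pos hN]
    have hT : T k (k + 1) = 1 := hT1 k
    rw [hT, map_one, one_mul]
    ring
  · have hNk : N = k + 1 := by omega
    subst hNk
    have h1 : ∀ m, m < k + 1 → k < m → C (T k m) * g m = 0 := fun m hm hm' => by omega
    rw [sum_window _ (by omega : k < k + 1) h0 h1, core, if_neg (by omega)]
    ring

lemma detV (p : ℕ) (T : ℕ → ℕ → ℝ) (hT1 : ∀ n, T n (n + 1) = 1)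
    (hTsup : ∀ n m, n + 1 < m → T n m = 0) (hTsub : ∀ n m, m + p < n → T n m = 0)
    (B : ℕ → Polynomial ℝ) (hB0 : B 0 = 1)
    (hBrec : ∀ n, B (n + 1) = (X - C (T n n)) * B n
      - ∑ j ∈ Finset.Icc 1 p, (if j ≤ n then C (T n (n - j)) * B (n - j) else 0))
    (n : ℕ) :
    (Matrix.of fun i j : Fin n =>
      (if (i : ℕ) = (j : ℕ) then (X : Polynomial ℝ) else 0) - C (T i j)).det = B n := by
  cases n with
  | zero => rw [Matrix.det_isEmpty, hB0]
  | succ k0 =>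
    set n := k0 + 1 with hn
    set V : Matrix (Fin n) (Fin n) (Polynomial ℝ) := Matrix.of fun i j : Fin n =>
      (if (i : ℕ) = (j : ℕ) then (X : Polynomial ℝ) else 0) - C (T i j) with hV
    set b : Fin n → Polynomial ℝ := fun j => B j with hb
    have hmv : V.mulVec b = B n • (Pi.single (Fin.last k0) 1 : Fin n → Polynomial ℝ) := by
      funext i
      have hsum : V.mulVec b i = ∑ m ∈ Finset.range n,
          ((if (i : ℕ) = m then (X : Polynomial ℝ) else 0) - C (T i m)) * B m := by
        rw [Matrix.mulVec, dotProduct]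
        rw [← Fin.sum_univ_eq_sum_range
          (fun m => ((if (i : ℕ) = m then (X : Polynomial ℝ) else 0) - C (T i m)) * B m) n]
        rfl
      rw [hsum]
      have hsplit : ∑ m ∈ Finset.range n,
          ((if (i : ℕ) = m then (X : Polynomial ℝ) else 0) - C (T i m)) * B m
          = (∑ m ∈ Finset.range n, (if (i : ℕ) = m then X * B m else 0))
            - ∑ m ∈ Finset.range n, C (T i m) * B m := by
        rw [← Finset.sum_sub_distrib]
        refine Finset.sum_congr rfl fun m _ => ?_
        by_cases hm : (i : ℕ) = m <;> simp [hm] <;> ring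
      rw [hsplit, Finset.sum_ite_eq (Finset.range n) (i : ℕ) (fun m => X * B m)]
      rw [if_pos (Finset.mem_range.mpr i.isLt)]
      rw [winB p T hT1 hTsup hTsub B i.isLt]
      have hbr := hBrec (i : ℕ)
      have hfin : (if (i : ℕ) + 1 < n then B ((i : ℕ) + 1) else 0)
          = if i = Fin.last k0 then 0 else B ((i : ℕ) + 1) := by
        by_cases hi : i = Fin.last k0
        · rw [if_neg (by simp [hi, hn]), if_pos hi]
        · have : (i : ℕ) < k0 := by
            have := i.isLt
            have : (i : ℕ) ≠ k0 := fun hc => hi (Fin.ext (by simp [hc]))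
            omega
          rw [if_pos (by omega), if_neg hi]
      rw [hfin]
      by_cases hi : i = Fin.last k0
      · simp only [Pi.smul_apply, Pi.single_apply, smul_eq_mul, if_pos hi, mul_one]
        have hik : (i : ℕ) = k0 := by rw [hi]; simp
        rw [hik] at hbr ⊢
        rw [hbr]; ring
      · simp only [Pi.smul_apply, Pi.single_apply, smul_eq_mul, if_neg hi, mul_zero]
        rw [hbr]; ring
    have hc : Matrix.cramer V (V.mulVec b) = V.det • b := by
      rw [Matrix.cramer_eq_adjugate_mulVec, Matrix.mulVec_mulVec, Matrix.adjugate_mul,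
        Matrix.smul_mulVec, Matrix.one_mulVec]
    have h0' := congrFun hc 0
    rw [hmv] at h0'
    rw [LinearMap.map_smul] at h0'
    have hcr : Matrix.cramer V (Pi.single (Fin.last k0) 1 : Fin n → Polynomial ℝ) 0
        = (V.updateCol 0 (Pi.single (Fin.last k0) 1 : Fin n → Polynomial ℝ)).det := Matrix.cramer_apply _ _ _
    -- compute det of W
    have hdetW : (V.updateCol 0 (Pi.single (Fin.last k0) 1 : Fin n → Polynomial ℝ)).det = 1 := by
      set W := V.updateCol 0 (Pi.single (Fin.last k0) 1 : Fin n → Polynomial ℝ) with hW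
      rw [Matrix.det_succ_column_zero]
      rw [Finset.sum_eq_single (Fin.last k0)]
      · have hW0 : W (Fin.last k0) 0 = 1 := by
          rw [hW, Matrix.updateCol_self, Pi.single_apply, if_pos rfl]
        rw [hW0, mul_one]
        have hsub : (W.submatrix (Fin.last k0).succAbove Fin.succ).det
            = (-1 : Polynomial ℝ) ^ k0 := by
          have hentry : ∀ i j : Fin k0, (W.submatrix (Fin.last k0).succAbove Fin.succ) i j
              = (if (i : ℕ) = (j : ℕ) + 1 then (X : Polynomial ℝ) else 0)
                - C (T (i : ℕ) ((j : ℕ) + 1)) := by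
            intro i j
            rw [Matrix.submatrix_apply, Fin.succAbove_last, hW,
              Matrix.updateCol_ne (Fin.succ_ne_zero j), hV]
            simp [Fin.val_succ]
          have htri : (W.submatrix (Fin.last k0).succAbove Fin.succ).BlockTriangular
              OrderDual.toDual := by
            intro i j hij
            have hij' : (i : ℕ) < (j : ℕ) := hij
            rw [hentry i j, if_neg (by omega), hTsup (i : ℕ) ((j : ℕ) + 1) (by omega)]
            simp
          rw [Matrix.det_of_lowerTriangular _ htri]
          have : ∀ i : Fin k0, (W.submatrix (Fin.last k0).succAbove Fin.succ) i i
              = -1 := by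
            intro i
            rw [hentry i i, if_neg (by omega), hT1 (i : ℕ)]
            simp
          rw [Finset.prod_congr rfl (fun i _ => this i), Finset.prod_const]
          simp
        rw [hsub, Fin.val_last, ← pow_add]
        have : Even (k0 + k0) := ⟨k0, by ring⟩
        exact this.neg_one_pow
      · intro i _ hi
        have hWi : W i 0 = 0 := by
          rw [hW, Matrix.updateCol_self, Pi.single_apply, if_neg hi]
        rw [hWi]; ring
      · intro hmem; exact absurd (Finset.mem_univ _) hmem
    have hb0 : b 0 = 1 := by
      rw [hb]; simp [hB0]
    rw [Pi.smul_apply, hcr, hdetW, Pi.smul_apply, hb0] at h0'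
    simpa using h0'.symm

theorem stmt_0
    (p : ℕ) (hp : 1 ≤ p)
    (T : ℕ → ℕ → ℝ)
    (hT1 : ∀ n, T n (n + 1) = 1)
    (hTsup : ∀ n m, n + 1 < m → T n m = 0)
    (hTsub : ∀ n m, m + p < n → T n m = 0)
    (hTlow : ∀ n, p ≤ n → T n (n - p) ≠ 0)
    (B : ℕ → Polynomial ℝ)
    (hB0 : B 0 = 1)
    (hBrec : ∀ n, B (n + 1) = (X - C (T n n)) * B n
      - ∑ j ∈ Finset.Icc 1 p, (if j ≤ n then C (T n (n - j)) * B (n - j) else 0))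
    (A : Fin p → ℕ → Polynomial ℝ)
    (hAconst : ∀ a : Fin p, ∀ j < p, ∃ c : ℝ, A a j = C c)
    (hAzero : ∀ a : Fin p, ∀ j : ℕ, j < (a : ℕ) → A a j = 0)
    (hAone : ∀ a : Fin p, A a (a : ℕ) = 1)
    (hArec : ∀ a : Fin p, ∀ n : ℕ,
      (if n = 0 then 0 else A a (n - 1))
        + ∑ i ∈ Finset.range (p + 1), C (T (n + i) n) * A a (n + i) = X * A a n)
    (h : ℕ → ℝ)
    (hh : ∀ n, h n = (-1 : ℝ) ^ ((p - 1) * n) * ∏ i ∈ Finset.range n, T (i + p) i) :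
    ∀ n : ℕ, B n = C (h n) *
      Matrix.det (Matrix.of fun i a : Fin p => A a (n + (i : ℕ))) := by
  obtain ⟨q, rfl⟩ : ∃ q, p = q + 1 := ⟨p - 1, by omega⟩
  intro n
  -- extend A to all of ℕ in the first argument
  set A' : ℕ → ℕ → Polynomial ℝ :=
    fun a m => if ha : a < q + 1 then A ⟨a, ha⟩ m else 0 with hA'
  have hA'eq : ∀ (a : Fin (q + 1)) (m : ℕ), A' (a : ℕ) m = A a m := by
    intro a m
    simp [hA', a.isLt]
    intro h; exact absurd a.isLt (by omega)
  -- the finite truncation of x·1 - T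
  set V : Matrix (Fin n) (Fin n) (Polynomial ℝ) := Matrix.of fun i j : Fin n =>
    (if (i : ℕ) = (j : ℕ) then (X : Polynomial ℝ) else 0) - C (T i j) with hV
  have hdetV : V.det = B n := detV (q + 1) T hT1 hTsup hTsub B hB0 hBrec n
  -- the big matrices
  set Zm : Matrix (Fin (n + (q + 1))) (Fin (n + (q + 1))) (Polynomial ℝ) :=
    Matrix.of fun r c =>
      if (c : ℕ) < n then (if (r : ℕ) = (c : ℕ) then X else 0) - C (T r c)
      else (if (r : ℕ) = (c : ℕ) then 1 else 0) with hZm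
  set Pm : Matrix (Fin (n + (q + 1))) (Fin (n + (q + 1))) (Polynomial ℝ) :=
    Matrix.of fun r c =>
      if (r : ℕ) < n then (if (c : ℕ) = (q + 1) + (r : ℕ) then 1 else 0)
      else A' ((r : ℕ) - n) (c : ℕ) with hPm
  set Ptri : Matrix (Fin (n + (q + 1))) (Fin (n + (q + 1))) (Polynomial ℝ) :=
    Matrix.of fun r c =>
      if (r : ℕ) < q + 1 then A' (r : ℕ) (c : ℕ)
      else (if (c : ℕ) = (r : ℕ) then 1 else 0) with hPtri
  -- determinant of Zm
  have hZblock : Zm.submatrix finSumFinEquiv finSumFinEquiv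
      = Matrix.fromBlocks V 0
          (Matrix.of fun (r : Fin (q + 1)) (c : Fin n) => - C (T (n + r) c)) 1 := by
    ext i j
    rcases i with i | i <;> rcases j with j | j
    · simp only [Matrix.submatrix_apply, finSumFinEquiv_apply_left, Matrix.fromBlocks_apply₁₁,
        hZm, hV, Matrix.of_apply, Fin.coe_castAdd]
      rw [if_pos j.isLt]
    · simp only [Matrix.submatrix_apply, finSumFinEquiv_apply_left, finSumFinEquiv_apply_right,
        Matrix.fromBlocks_apply₁₂, hZm, Matrix.of_apply, Fin.coe_castAdd, Fin.coe_natAdd]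
      rw [if_neg (by omega), if_neg (by have := i.isLt; omega)]
      rfl
    · simp only [Matrix.submatrix_apply, finSumFinEquiv_apply_left, finSumFinEquiv_apply_right,
        Matrix.fromBlocks_apply₂₁, hZm, Matrix.of_apply, Fin.coe_castAdd, Fin.coe_natAdd]
      rw [if_pos j.isLt, if_neg (by have := j.isLt; omega)]
      rw [zero_sub]
    · simp only [Matrix.submatrix_apply, finSumFinEquiv_apply_right,
        Matrix.fromBlocks_apply₂₂, hZm, Matrix.of_apply, Fin.coe_natAdd]
      rw [if_neg (by omega)]
      rw [Matrix.one_apply]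
      by_cases hij : i = j
      · rw [if_pos (by rw [hij]), if_pos hij]
      · rw [if_neg (by
          intro hc
          exact hij (Fin.ext (by omega))), if_neg hij]
  have hdetZ : Zm.det = B n := by
    rw [← Matrix.det_submatrix_equiv_self finSumFinEquiv Zm, hZblock,
      Matrix.det_fromBlocks_zero₁₂, hdetV, Matrix.det_one, mul_one]
  -- determinant of Ptri
  have hdetPtri : Ptri.det = 1 := by
    have htri : Ptri.BlockTriangular id := by
      intro i j hij
      have hij' : (j : ℕ) < (i : ℕ) := hij
      rw [hPtri, Matrix.of_apply]
      by_cases hi : (i : ℕ) < q + 1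
      · rw [if_pos hi]
        simp only [hA', dif_pos hi]
        exact hAzero ⟨i, hi⟩ j hij'
      · rw [if_neg hi, if_neg (by omega)]
    rw [Matrix.det_of_upperTriangular htri]
    apply Finset.prod_eq_one
    intro r _
    rw [hPtri, Matrix.of_apply]
    by_cases hr : (r : ℕ) < q + 1
    · rw [if_pos hr]
      simp only [hA', dif_pos hr]
      exact hAone ⟨r, hr⟩
    · rw [if_neg hr, if_pos rfl]
  -- the rotation permutation
  set ρ : Equiv.Perm (Fin (n + (q + 1))) := (finRotate (n + q + 1)) ^ (q + 1) with hρ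
  have hpow : ∀ (k : ℕ) (i : Fin (n + q + 1)),
      ((finRotate (n + q + 1)) ^ k) i = i + (k : Fin (n + q + 1)) := by
    intro k
    induction k with
    | zero => intro i; simp
    | succ k ih =>
      intro i
      have h1 : ((finRotate (n + q + 1)) ^ (k + 1)) i
          = ((finRotate (n + q + 1)) ^ k) ((finRotate (n + q + 1)) i) := by
        rw [pow_succ, Equiv.Perm.mul_apply]
      rw [h1, ih, finRotate_succ_apply]
      push_cast
      abel
  have hρval : ∀ r : Fin (n + (q + 1)),
      ((ρ r) : ℕ) = ((r : ℕ) + (q + 1)) % (n + (q + 1)) := by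
    have key : ∀ r : Fin (n + q + 1),
        (((finRotate (n + q + 1)) ^ (q + 1)) r : ℕ) = ((r : ℕ) + (q + 1)) % (n + q + 1) := by
      intro r
      rw [hpow (q + 1) r, Fin.val_add, Fin.val_natCast, Nat.add_mod_mod]
    exact fun r => key r
  have hRot : Pm = Ptri.submatrix ρ id := by
    ext r c
    rw [Matrix.submatrix_apply, id_eq]
    by_cases hr : (r : ℕ) < n
    · have hv : ((ρ r) : ℕ) = (q + 1) + (r : ℕ) := by
        rw [hρval r, Nat.mod_eq_of_lt (by omega), add_comm]
      rw [hPm, hPtri, Matrix.of_apply, Matrix.of_apply, if_pos hr, hv,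
        if_neg (show ¬((q + 1) + (r : ℕ) < q + 1) by omega)]
    · have hv : ((ρ r) : ℕ) = (r : ℕ) - n := by
        have h2 := r.isLt
        rw [hρval r, show (r : ℕ) + (q + 1) = ((r : ℕ) - n) + (n + (q + 1)) by omega,
          Nat.add_mod_right, Nat.mod_eq_of_lt (by omega)]
      rw [hPm, hPtri, Matrix.of_apply, Matrix.of_apply, if_neg hr, hv,
        if_pos (show (r : ℕ) - n < q + 1 by have h2 := r.isLt; omega)]
  have hsign : Equiv.Perm.sign ρ = ((-1 : ℤˣ) ^ (n + q)) ^ (q + 1) := by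
    have key : Equiv.Perm.sign ((finRotate (n + q + 1)) ^ (q + 1))
        = ((-1 : ℤˣ) ^ (n + q)) ^ (q + 1) := by
      rw [map_pow, sign_finRotate, Nat.add_sub_cancel]
    exact key
  have hdetPm : Pm.det = (-1 : Polynomial ℝ) ^ ((n + q) * (q + 1)) := by
    rw [hRot, Matrix.det_permute, hdetPtri, mul_one, hsign]
    push_cast
    rw [← pow_mul]
  -- blocks of the product
  set GC : Matrix (Fin n) (Fin n) (Polynomial ℝ) := Matrix.of fun r c =>
    (if ((q + 1) + (r : ℕ)) = (c : ℕ) then (X : Polynomial ℝ) else 0)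
      - C (T ((q + 1) + r) c) with hGC
  set GF : Matrix (Fin n) (Fin (q + 1)) (Polynomial ℝ) := Matrix.of fun r c =>
    if ((q + 1) + (r : ℕ)) = n + (c : ℕ) then 1 else 0 with hGF
  set M' : Matrix (Fin (q + 1)) (Fin (q + 1)) (Polynomial ℝ) :=
    Matrix.of fun a i => A a (n + (i : ℕ)) with hM'
  have hProw : ∀ (a : Fin (q + 1)) (m : Fin (n + (q + 1))),
      Pm (Fin.natAdd n a) m = A a (m : ℕ) := by
    intro a m
    rw [hPm, Matrix.of_apply, Fin.coe_natAdd, if_neg (by omega),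
      show n + (a : ℕ) - n = (a : ℕ) by omega, hA'eq]
  have hPZ : (Pm * Zm).submatrix finSumFinEquiv finSumFinEquiv
      = Matrix.fromBlocks GC GF 0 M' := by
    ext i j
    rcases i with r | a <;> rcases j with c | i
    · simp only [Matrix.submatrix_apply, finSumFinEquiv_apply_left,
        Matrix.fromBlocks_apply₁₁, Matrix.mul_apply]
      rw [Finset.sum_eq_single (⟨(q + 1) + (r : ℕ), by have := r.isLt; omega⟩ :
          Fin (n + (q + 1)))]
      · rw [hPm, hZm, Matrix.of_apply, Matrix.of_apply, Fin.coe_castAdd, if_pos r.isLt]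
        rw [if_pos rfl, one_mul, if_pos (by simpa using c.isLt), hGC, Matrix.of_apply]
        rfl
      · intro m _ hm
        rw [hPm, Matrix.of_apply, Fin.coe_castAdd, if_pos r.isLt, if_neg, zero_mul]
        intro hc
        exact hm (Fin.ext hc)
      · intro hc; exact absurd (Finset.mem_univ _) hc
    · simp only [Matrix.submatrix_apply, finSumFinEquiv_apply_left, finSumFinEquiv_apply_right,
        Matrix.fromBlocks_apply₁₂, Matrix.mul_apply]
      rw [Finset.sum_eq_single (⟨(q + 1) + (r : ℕ), by have := r.isLt; omega⟩ :
          Fin (n + (q + 1)))]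
      · rw [hPm, hZm, Matrix.of_apply, Matrix.of_apply, Fin.coe_castAdd, Fin.coe_natAdd,
          if_pos r.isLt]
        rw [if_pos rfl, one_mul, if_neg (by omega), hGF, Matrix.of_apply]
      · intro m _ hm
        rw [hPm, Matrix.of_apply, Fin.coe_castAdd, if_pos r.isLt, if_neg, zero_mul]
        intro hc
        exact hm (Fin.ext hc)
      · intro hc; exact absurd (Finset.mem_univ _) hc
    · -- orthogonality block
      simp only [Matrix.submatrix_apply, finSumFinEquiv_apply_left, finSumFinEquiv_apply_right,
        Matrix.fromBlocks_apply₂₁, Matrix.mul_apply, Matrix.zero_apply]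
      have hterm : ∀ m : Fin (n + (q + 1)),
          Pm (Fin.natAdd n a) m * Zm m (Fin.castAdd (q + 1) c)
          = (if (m : ℕ) = (c : ℕ) then A a (m : ℕ) * X else 0)
            - C (T (m : ℕ) (c : ℕ)) * A a (m : ℕ) := by
        intro m
        rw [hProw, hZm, Matrix.of_apply, Fin.coe_castAdd, if_pos c.isLt]
        by_cases hm : (m : ℕ) = (c : ℕ)
        · rw [if_pos hm, if_pos hm]; ring
        · rw [if_neg hm, if_neg hm]; ring
      rw [Finset.sum_congr rfl (fun m _ => hterm m), Finset.sum_sub_distrib]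
      rw [Fin.sum_univ_eq_sum_range
        (fun m => (if m = (c : ℕ) then A a m * X else 0)) (n + (q + 1))]
      rw [Fin.sum_univ_eq_sum_range
        (fun m => C (T m (c : ℕ)) * A a m) (n + (q + 1))]
      rw [Finset.sum_ite_eq' (Finset.range (n + (q + 1))) (c : ℕ) (fun m => A a m * X)]
      rw [if_pos (Finset.mem_range.mpr (by have := c.isLt; omega))]
      rw [winA (q + 1) T hT1 hTsup hTsub (fun m => A a m)
        (by have := c.isLt; omega : (c : ℕ) + (q + 1) < n + (q + 1))]
      rw [hArec a (c : ℕ)]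
      ring
    · simp only [Matrix.submatrix_apply, finSumFinEquiv_apply_right,
        Matrix.fromBlocks_apply₂₂, Matrix.mul_apply]
      rw [Finset.sum_eq_single (⟨n + (i : ℕ), by have := i.isLt; omega⟩ :
          Fin (n + (q + 1)))]
      · rw [hProw, hZm, Matrix.of_apply, Fin.coe_natAdd, if_neg (by omega), if_pos rfl,
          mul_one, hM', Matrix.of_apply]
      · intro m _ hm
        rw [hZm, Matrix.of_apply, Fin.coe_natAdd, if_neg (by omega), if_neg, mul_zero]
        intro hc
        exact hm (Fin.ext hc)
      · intro hc; exact absurd (Finset.mem_univ _) hc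
  have hdet1 : (Pm * Zm).det = GC.det * M'.det := by
    rw [← Matrix.det_submatrix_equiv_self finSumFinEquiv (Pm * Zm), hPZ,
      Matrix.det_fromBlocks_zero₂₁]
  -- determinant of GC
  have hdetGC : GC.det
      = (-1 : Polynomial ℝ) ^ n * C (∏ i ∈ Finset.range n, T (i + (q + 1)) i) := by
    have htri : GC.BlockTriangular id := by
      intro i j hij
      have hij' : (j : ℕ) < (i : ℕ) := hij
      rw [hGC, Matrix.of_apply, if_neg (by omega), hTsub _ _ (by omega)]
      simp
    rw [Matrix.det_of_upperTriangular htri]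
    have hdiag : ∀ r : Fin n, GC r r = (-1) * C (T ((r : ℕ) + (q + 1)) (r : ℕ)) := by
      intro r
      rw [hGC, Matrix.of_apply, if_neg (by omega), zero_sub, add_comm (q + 1) (r : ℕ)]
      ring
    rw [Finset.prod_congr rfl (fun r _ => hdiag r), Finset.prod_mul_distrib,
      Finset.prod_const, Finset.card_univ, Fintype.card_fin, ← map_prod,
      Fin.prod_univ_eq_prod_range (fun i => T (i + (q + 1)) i) n]
  -- assemble
  have hmul := Matrix.det_mul Pm Zm
  rw [hdet1, hdetPm, hdetZ, hdetGC] at hmul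
  -- hmul : (-1)^n * C(∏T) * M'.det = (-1)^((n+q)*(q+1)) * B n
  have hparity : ∀ a b : ℕ, a % 2 = b % 2 →
      ((-1 : Polynomial ℝ) ^ a = (-1) ^ b) := by
    intro a b hab
    rw [← Nat.div_add_mod a 2, ← Nat.div_add_mod b 2, hab, pow_add, pow_add,
      pow_mul, pow_mul, neg_one_sq, one_pow, one_pow]
  have hkey : B n = (-1 : Polynomial ℝ) ^ ((n + q) * (q + 1) + n)
      * C (∏ i ∈ Finset.range n, T (i + (q + 1)) i) * M'.det := by
    have hs2 : ((-1 : Polynomial ℝ) ^ ((n + q) * (q + 1)))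
        * ((-1 : Polynomial ℝ) ^ ((n + q) * (q + 1))) = 1 := by
      rw [← pow_add]
      exact Even.neg_one_pow ⟨(n + q) * (q + 1), rfl⟩
    calc B n = ((-1 : Polynomial ℝ) ^ ((n + q) * (q + 1))
          * (-1 : Polynomial ℝ) ^ ((n + q) * (q + 1))) * B n := by rw [hs2, one_mul]
      _ = (-1 : Polynomial ℝ) ^ ((n + q) * (q + 1))
          * ((-1 : Polynomial ℝ) ^ ((n + q) * (q + 1)) * B n) := by ring
      _ = (-1 : Polynomial ℝ) ^ ((n + q) * (q + 1))
          * ((-1) ^ n * C (∏ i ∈ Finset.range n, T (i + (q + 1)) i) * M'.det) := by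
            rw [← hmul]
      _ = (-1 : Polynomial ℝ) ^ ((n + q) * (q + 1) + n)
          * C (∏ i ∈ Finset.range n, T (i + (q + 1)) i) * M'.det := by
            rw [pow_add]; ring
  have hexp : ((n + q) * (q + 1) + n) % 2 = (q * n) % 2 := by
    obtain ⟨t, ht⟩ := Nat.even_mul_succ_self q
    have hr : (n + q) * (q + 1) + n = q * n + q * (q + 1) + 2 * n := by ring
    rw [hr, ht]
    omega
  rw [hparity _ _ hexp] at hkey
  have hMT : (Matrix.of fun i a : Fin (q + 1) => A a (n + (i : ℕ))) = M'.transpose := by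
    ext i a
    rw [Matrix.transpose_apply, hM', Matrix.of_apply, Matrix.of_apply]
  rw [hMT, Matrix.det_transpose, hh n, Nat.add_sub_cancel, map_mul, map_pow, map_neg,
    map_one, hkey]
end

section
/- If λ is a zero of B_{N+1}, then the row vector (Q_{0,N}(λ), Q_{1,N}(λ), …, Q_{N,N}(λ)) is a left eigenvector of T^{[N]} with eigenvalue λ: (Q_{0,N}(λ),…,Q_{N,N}(λ))·T^{[N]} = λ·(Q_{0,N}(λ),…,Q_{N,N}(λ)). -/
open Polynomial

lemma colsum_aux (p : ℕ) (g : ℕ → ℝ) (j K : ℕ)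
    (h1 : ∀ m, m + 1 < j → g m = 0)
    (h2 : ∀ m, j + p < m → g m = 0)
    (hK : j + p < K) :
    ∑ m ∈ Finset.range K, g m
      = (if j = 0 then 0 else g (j - 1)) + ∑ i ∈ Finset.range (p + 1), g (j + i) := by
  have hsub : Finset.Ico (j - 1) (j + p + 1) ⊆ Finset.range K := by
    intro m hm
    simp only [Finset.mem_Ico] at hm
    exact Finset.mem_range.mpr (by omega)
  rw [← Finset.sum_subset hsub (by
    intro m hm hm2
    simp only [Finset.mem_Ico, not_and, not_lt] at hm2
    rcases lt_or_ge m (j-1) with h | h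
    · exact h1 m (by omega)
    · exact h2 m (by omega))]
  rcases Nat.eq_zero_or_pos j with hj | hj
  · subst hj
    rw [if_pos rfl, zero_add]
    rw [show Finset.Ico ((0:ℕ) - 1) (p + 1) = Finset.range (p+1) by rw [Finset.range_eq_Ico]]
    simp
  · rw [← Finset.sum_Ico_consecutive g (show j - 1 ≤ j by omega) (show j ≤ j + p + 1 by omega)]
    rw [if_neg (by omega)]
    congr 1
    · have : Finset.Ico (j-1) j = {j-1} := by
        ext m; simp only [Finset.mem_Ico, Finset.mem_singleton]; omega
      rw [this, Finset.sum_singleton]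
    · rw [Finset.sum_Ico_eq_sum_range]
      apply Finset.sum_congr (by congr 1; omega) (fun i _ => rfl)

lemma rowsum_aux (p : ℕ) (g : ℕ → ℝ) (n : ℕ)
    (h2 : ∀ m, m + p < n → g m = 0) :
    ∑ m ∈ Finset.range n, g m
      = ∑ j ∈ Finset.Icc 1 p, (if j ≤ n then g (n - j) else 0) := by
  rw [← Finset.sum_filter]
  rw [← Finset.sum_filter_of_ne (s := Finset.range n) (p := fun m => n ≤ m + p)
    (fun m hm hne => by by_contra h; exact hne (h2 m (by omega)))]
  apply Finset.sum_nbij' (fun m => n - m) (fun j => n - j)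
  · intro m hm
    simp only [Finset.mem_filter, Finset.mem_range, Finset.mem_Icc] at *
    omega
  · intro j hj
    simp only [Finset.mem_filter, Finset.mem_range, Finset.mem_Icc] at *
    omega
  · intro m hm
    simp only [Finset.mem_filter, Finset.mem_range] at hm
    omega
  · intro j hj
    simp only [Finset.mem_filter, Finset.mem_Icc] at hj
    omega
  · intro m hm
    simp only [Finset.mem_filter, Finset.mem_range] at hm
    congr 1
    omega

lemma det_updateRow_finset_sum {p : ℕ} (M : Matrix (Fin p) (Fin p) ℝ) (r : Fin p)
    (s : Finset ℕ) (f : ℕ → Fin p → ℝ) :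
    (M.updateRow r (∑ m ∈ s, f m)).det = ∑ m ∈ s, (M.updateRow r (f m)).det := by
  classical
  induction s using Finset.induction with
  | empty =>
    simp only [Finset.sum_empty]
    exact Matrix.det_eq_zero_of_row_eq_zero r (by simp)
  | insert _ _ h ih =>
    rw [Finset.sum_insert h, Finset.sum_insert h, Matrix.det_updateRow_add, ih]

lemma det_updateRow_sub' {p : ℕ} (M : Matrix (Fin p) (Fin p) ℝ) (r : Fin p)
    (u w : Fin p → ℝ) :
    (M.updateRow r (u - w)).det = (M.updateRow r u).det - (M.updateRow r w).det := by
  rw [sub_eq_add_neg, Matrix.det_updateRow_add,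
    show -w = (-1 : ℝ) • w by funext a; simp, Matrix.det_updateRow_smul]
  ring

noncomputable def Qp (p : ℕ) (A : Fin p → ℕ → Polynomial ℝ) (n N : ℕ) : Polynomial ℝ :=
  Matrix.det (Matrix.of fun i a : Fin p =>
    if (i : ℕ) = 0 then A a n else A a (N + (i : ℕ)))

noncomputable def truncM (T : ℕ → ℕ → ℝ) (N : ℕ) : Matrix (Fin (N + 1)) (Fin (N + 1)) ℝ :=
  Matrix.of fun i j : Fin (N + 1) => T (i : ℕ) (j : ℕ)

theorem stmt_4
    (p : ℕ) (hp : 1 ≤ p)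
    (T : ℕ → ℕ → ℝ)
    (hT1 : ∀ n, T n (n + 1) = 1)
    (hTsup : ∀ n m, n + 1 < m → T n m = 0)
    (hTsub : ∀ n m, m + p < n → T n m = 0)
    (hTlow : ∀ n, p ≤ n → T n (n - p) ≠ 0)
    (B : ℕ → Polynomial ℝ)
    (hB0 : B 0 = 1)
    (hBrec : ∀ n, B (n + 1) = (X - C (T n n)) * B n
      - ∑ j ∈ Finset.Icc 1 p, (if j ≤ n then C (T n (n - j)) * B (n - j) else 0))
    (A : Fin p → ℕ → Polynomial ℝ)
    (hAconst : ∀ a : Fin p, ∀ j < p, ∃ c : ℝ, A a j = C c)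
    (hAzero : ∀ a : Fin p, ∀ j : ℕ, j < (a : ℕ) → A a j = 0)
    (hAone : ∀ a : Fin p, A a (a : ℕ) = 1)
    (hArec : ∀ a : Fin p, ∀ n : ℕ,
      (if n = 0 then 0 else A a (n - 1))
        + ∑ i ∈ Finset.range (p + 1), C (T (n + i) n) * A a (n + i) = X * A a n) :
    ∀ (N : ℕ) (lam : ℝ), eval lam (B (N + 1)) = 0 →
      Matrix.vecMul (fun i : Fin (N + 1) => eval lam (Qp p A (i : ℕ) N)) (truncM T N)
        = lam • (fun i : Fin (N + 1) => eval lam (Qp p A (i : ℕ) N)) := by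
  intro N lam hBN
  classical
  -- evaluated recurrences
  have hBrec' : ∀ n, eval lam (B (n+1)) + T n n * eval lam (B n)
      + ∑ j ∈ Finset.Icc 1 p, (if j ≤ n then T n (n - j) * eval lam (B (n - j)) else 0)
      = lam * eval lam (B n) := by
    intro n
    have h := congrArg (eval lam) (hBrec n)
    simp only [eval_sub, eval_mul, eval_add, eval_X, eval_C, eval_finset_sum,
      apply_ite (eval lam), eval_zero] at h
    rw [h]
    ring
  have hArec' : ∀ (a : Fin p) (n : ℕ),
      (if n = 0 then 0 else eval lam (A a (n-1)))
        + ∑ i ∈ Finset.range (p+1), T (n+i) n * eval lam (A a (n+i))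
      = lam * eval lam (A a n) := by
    intro a n
    have h := congrArg (eval lam) (hArec a n)
    simp only [eval_add, eval_mul, eval_X, eval_C, eval_finset_sum,
      apply_ite (eval lam), eval_zero] at h
    exact h
  -- right eigenvector (B_0,...,B_N)
  have hrow : ∀ n : ℕ, n ≤ N →
      ∑ m ∈ Finset.range (N+1), T n m * eval lam (B m) = lam * eval lam (B n) := by
    intro n hn
    have hfull : ∑ m ∈ Finset.range (n+2), T n m * eval lam (B m) = lam * eval lam (B n) := by
      have hr := rowsum_aux p (fun m => T n m * eval lam (B m)) n
        (fun m hm => by show T n m * eval lam (B m) = 0; rw [hTsub n m hm, zero_mul])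
      rw [Finset.sum_range_succ, Finset.sum_range_succ, hr, hT1 n, one_mul]
      linarith [hBrec' n]
    rcases eq_or_lt_of_le hn with rfl | hlt
    · rw [Finset.sum_range_succ, hT1, one_mul, hBN, add_zero] at hfull
      exact hfull
    · rw [← Finset.sum_subset (Finset.range_subset_range.mpr (by omega : n+2 ≤ N+1)) (by
        intro m hm1 hm2
        simp only [Finset.mem_range] at hm1 hm2
        show T n m * eval lam (B m) = 0
        rw [hTsup n m (by omega), zero_mul])]
      exact hfull
  -- determinant of lam•1 - T^{[N]} is zero
  have hfinrow : ∀ n : Fin (N+1),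
      (∑ i : Fin (N+1), T (n:ℕ) (i:ℕ) * eval lam (B (i:ℕ))) = lam * eval lam (B (n:ℕ)) := by
    intro n
    rw [Fin.sum_univ_eq_sum_range (fun m => T (n:ℕ) m * eval lam (B m)) (N+1)]
    exact hrow n (by omega)
  have hdetM : (lam • (1 : Matrix (Fin (N+1)) (Fin (N+1)) ℝ) - truncM T N).det = 0 := by
    rw [← Matrix.exists_mulVec_eq_zero_iff]
    refine ⟨fun i => eval lam (B (i:ℕ)), ?_, ?_⟩
    · intro h
      have h0 := congrFun h (⟨0, by omega⟩ : Fin (N+1))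
      simp [hB0] at h0
    · funext n
      have hs := hfinrow n
      simp only [Matrix.mulVec, dotProduct, Matrix.sub_apply, Matrix.smul_apply,
        Matrix.one_apply, truncM, Matrix.of_apply, smul_eq_mul, mul_ite, mul_one, mul_zero,
        sub_mul, ite_mul, zero_mul, Pi.zero_apply, Finset.sum_sub_distrib,
        Finset.sum_ite_eq, Finset.mem_univ, if_true]
      rw [hs]
      ring
  obtain ⟨w, hw0, hwe⟩ : ∃ w ≠ 0,
      (Matrix.transpose (lam • (1 : Matrix (Fin (N+1)) (Fin (N+1)) ℝ) - truncM T N)).mulVec w = 0 := by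
    rw [Matrix.exists_mulVec_eq_zero_iff, Matrix.det_transpose]
    exact hdetM
  have hwcol : ∀ j : Fin (N+1),
      ∑ i : Fin (N+1), T (i:ℕ) (j:ℕ) * w i = lam * w j := by
    intro j
    have h := congrFun hwe j
    simp only [Matrix.mulVec, dotProduct, Matrix.transpose_apply, Matrix.sub_apply,
      Matrix.smul_apply, Matrix.one_apply, truncM, Matrix.of_apply, smul_eq_mul, mul_ite,
      mul_one, mul_zero, sub_mul, ite_mul, zero_mul, Pi.zero_apply, Finset.sum_sub_distrib,
      Finset.sum_ite_eq, Finset.sum_ite_eq', Finset.mem_univ, if_true] at h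
    linarith
  -- extension of w by zero
  set u : ℕ → ℝ := fun n => if h : n < N + 1 then w ⟨n, h⟩ else 0 with hu
  have hu_rec : ∀ j : ℕ, j ≤ N →
      (if j = 0 then 0 else u (j-1)) + ∑ i ∈ Finset.range (p+1), T (j+i) j * u (j+i)
        = lam * u j := by
    intro j hj
    have e1 : ∑ m ∈ Finset.range (N+1), T m j * u m = lam * u j := by
      calc ∑ m ∈ Finset.range (N+1), T m j * u m
          = ∑ i : Fin (N+1), T (i:ℕ) j * u (i:ℕ) :=
            (Fin.sum_univ_eq_sum_range (fun m => T m j * u m) (N+1)).symm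
        _ = ∑ i : Fin (N+1), T (i:ℕ) ((⟨j, by omega⟩ : Fin (N+1)):ℕ) * w i := by
            apply Finset.sum_congr rfl
            intro i _
            rw [hu]
            simp [i.isLt]
        _ = lam * w ⟨j, by omega⟩ := hwcol ⟨j, by omega⟩
        _ = lam * u j := by
            have hx : u j = w ⟨j, by omega⟩ := by simp only [hu]; exact dif_pos (by omega)
            rw [hx]
    have e2 : ∑ m ∈ Finset.range (N+1+p), T m j * u m
        = ∑ m ∈ Finset.range (N+1), T m j * u m := by
      symm
      apply Finset.sum_subset (Finset.range_subset_range.mpr (by omega))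
      intro m hm1 hm2
      simp only [Finset.mem_range] at hm1 hm2
      have hu0 : u m = 0 := by rw [hu]; exact dif_neg (by omega)
      rw [hu0, mul_zero]
    have e3 := colsum_aux p (fun m => T m j * u m) j (N+1+p)
      (fun m hm => by show T m j * u m = 0; rw [hTsup m j hm, zero_mul])
      (fun m hm => by show T m j * u m = 0; rw [hTsub m j hm, zero_mul])
      (by omega)
    rw [e2, e1] at e3
    rw [e3]
    congr 1
    split_ifs with h0
    · rfl
    · have hTj : T (j-1) j = 1 := by
        have hj1 : j - 1 + 1 = j := by omega
        rw [← hj1]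
        exact hT1 (j-1)
      rw [hTj, one_mul]
  -- the initial-value matrix S and coefficients c
  set S : Matrix (Fin p) (Fin p) ℝ := Matrix.of (fun j a => eval lam (A a (j:ℕ))) with hS
  have hSdet : S.det = 1 := by
    rw [Matrix.det_of_lowerTriangular S (by
      intro i j hij
      have hij' : (i:ℕ) < (j:ℕ) := by
        simpa using hij
      simp only [hS, Matrix.of_apply]
      rw [hAzero j (i:ℕ) hij', eval_zero])]
    apply Finset.prod_eq_one
    intro a _
    simp only [hS, Matrix.of_apply]
    rw [hAone a, eval_one]
  have hSunit : IsUnit S.det := by rw [hSdet]; exact isUnit_one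
  set c : Fin p → ℝ := S⁻¹.mulVec (fun j : Fin p => u (j:ℕ)) with hc
  have hSc : ∀ j : Fin p, ∑ a, eval lam (A a (j:ℕ)) * c a = u (j:ℕ) := by
    have hone : S.mulVec c = fun j : Fin p => u (j:ℕ) := by
      rw [hc, Matrix.mulVec_mulVec, Matrix.mul_nonsing_inv _ hSunit, Matrix.one_mulVec]
    intro j
    have h := congrFun hone j
    simpa [Matrix.mulVec, dotProduct, hS] using h
  -- the combination v
  set v : ℕ → ℝ := fun n => ∑ a, eval lam (A a n) * c a with hv
  have hv_rec : ∀ n : ℕ,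
      (if n = 0 then 0 else v (n-1)) + ∑ i ∈ Finset.range (p+1), T (n+i) n * v (n+i)
        = lam * v n := by
    intro n
    have key : ∑ a, ((if n = 0 then 0 else eval lam (A a (n-1)))
        + ∑ i ∈ Finset.range (p+1), T (n+i) n * eval lam (A a (n+i))) * c a
        = lam * v n := by
      rw [Finset.sum_congr rfl (fun a _ => by rw [hArec' a n])]
      simp only [hv, Finset.mul_sum, mul_assoc]
    rw [← key]
    simp only [add_mul, Finset.sum_add_distrib]
    congr 1
    · split_ifs with h0
      · simp
      · simp only [hv, ite_mul, zero_mul]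
    · simp only [Finset.sum_mul, mul_assoc]
      rw [Finset.sum_comm]
      apply Finset.sum_congr rfl
      intro i _
      rw [← Finset.mul_sum]
  -- u = v up to N + p
  have huv : ∀ n : ℕ, n ≤ N + p → u n = v n := by
    intro n
    induction n using Nat.strong_induction_on with
    | _ n ih =>
      intro hn
      rcases lt_or_ge n p with hnp | hnp
      · have h := hSc ⟨n, hnp⟩
        simp only [hv]
        exact h.symm
      · obtain ⟨m, rfl⟩ : ∃ m, n = m + p := ⟨n - p, by omega⟩
        have h1 := hu_rec m (by omega)
        have h2 := hv_rec m
        rw [Finset.sum_range_succ] at h1 h2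
        have hsum : ∑ i ∈ Finset.range p, T (m+i) m * u (m+i)
            = ∑ i ∈ Finset.range p, T (m+i) m * v (m+i) := by
          apply Finset.sum_congr rfl
          intro i hi
          simp only [Finset.mem_range] at hi
          rw [ih (m+i) (by omega) (by omega)]
        have hite : (if m = 0 then (0:ℝ) else u (m-1)) = (if m = 0 then 0 else v (m-1)) := by
          split_ifs with h0
          · rfl
          · exact ih (m-1) (by omega) (by omega)
        rw [hsum, hite, ih m (by omega) (by omega)] at h1
        have hne : T (m+p) m ≠ 0 := by
          have := hTlow (m+p) (by omega)
          rwa [Nat.add_sub_cancel] at this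
        have heq : T (m+p) m * u (m+p) = T (m+p) m * v (m+p) := by linarith
        exact mul_left_cancel₀ hne heq
  -- c is nonzero
  have hcne : c ≠ 0 := by
    intro h0
    apply hw0
    funext i
    have h1 : u (i:ℕ) = 0 := by
      rw [huv (i:ℕ) (by have := i.isLt; omega)]
      simp [hv, h0]
    have h2 : u (i:ℕ) = w i := by
      simp only [hu]
      rw [dif_pos i.isLt]
    rw [← h2, h1]
    rfl
  -- v vanishes at N+1, ..., N+p
  have hvz : ∀ k, 1 ≤ k → k ≤ p → v (N+k) = 0 := by
    intro k h1 h2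
    rw [← huv (N+k) (by omega)]
    simp only [hu]
    exact dif_neg (by omega)
  -- boundary determinants
  set r0 : Fin p := ⟨0, hp⟩ with hr0
  set Rb : Matrix (Fin p) (Fin p) ℝ :=
    Matrix.of (fun i a => if (i:ℕ) = 0 then 0 else eval lam (A a (N + (i:ℕ)))) with hRb
  have hQ : ∀ n : ℕ, eval lam (Qp p A n N)
      = (Rb.updateRow r0 (fun a => eval lam (A a n))).det := by
    intro n
    rw [Qp, ← Polynomial.coe_evalRingHom, RingHom.map_det]
    congr 1
    funext i a
    simp only [RingHom.mapMatrix_apply, Matrix.map_apply, Matrix.of_apply, coe_evalRingHom]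
    by_cases hi : i = r0
    · subst hi
      rw [Matrix.updateRow_self]
      rw [if_pos rfl]
    · rw [Matrix.updateRow_ne hi]
      have hiv : (i:ℕ) ≠ 0 := fun h => hi (Fin.ext (by rw [h, hr0]))
      rw [if_neg hiv]
      simp only [hRb, Matrix.of_apply, if_neg hiv]
  have hdet0 : ∀ k, 1 ≤ k → k ≤ p →
      (Rb.updateRow r0 (fun a => eval lam (A a (N+k)))).det = 0 := by
    intro k hk1 hk2
    rw [← Matrix.exists_mulVec_eq_zero_iff]
    refine ⟨c, hcne, ?_⟩
    funext i
    simp only [Matrix.mulVec, dotProduct, Pi.zero_apply]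
    by_cases hi : i = r0
    · subst hi
      simp only [Matrix.updateRow_self]
      have h := hvz k hk1 hk2
      simp only [hv] at h
      exact h
    · simp only [Matrix.updateRow_ne hi]
      have hiv : (i:ℕ) ≠ 0 := fun h => hi (Fin.ext (by rw [h, hr0]))
      simp only [hRb, Matrix.of_apply, if_neg hiv]
      have h := hvz (i:ℕ) (by omega) (by have := i.isLt; omega)
      simp only [hv] at h
      exact h
  -- the column identity for the Q vector
  have hcol : ∀ j : ℕ, j ≤ N →
      ∑ m ∈ Finset.range (N+1), T m j * eval lam (Qp p A m N)
        = lam * eval lam (Qp p A j N) := by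
    intro j hj
    have e2 : ∀ a : Fin p, ∑ m ∈ Finset.range (N+1), T m j * eval lam (A a m)
        = lam * eval lam (A a j)
          - ∑ k ∈ Finset.range p, T (N+1+k) j * eval lam (A a (N+1+k)) := by
      intro a
      have full := colsum_aux p (fun m => T m j * eval lam (A a m)) j (N+1+p)
        (fun m hm => by show T m j * eval lam (A a m) = 0; rw [hTsup m j hm, zero_mul])
        (fun m hm => by show T m j * eval lam (A a m) = 0; rw [hTsub m j hm, zero_mul])
        (by omega)
      have full2 : ∑ m ∈ Finset.range (N+1+p), T m j * eval lam (A a m)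
          = lam * eval lam (A a j) := by
        rw [full, ← hArec' a j]
        congr 1
        split_ifs with h0
        · rfl
        · have hTj : T (j-1) j = 1 := by
            have hj1 : j - 1 + 1 = j := by omega
            rw [← hj1]
            exact hT1 (j-1)
          rw [hTj, one_mul]
      have hsplit : ∑ m ∈ Finset.range (N+1+p), T m j * eval lam (A a m)
          = ∑ m ∈ Finset.range (N+1), T m j * eval lam (A a m)
            + ∑ k ∈ Finset.range p, T (N+1+k) j * eval lam (A a (N+1+k)) := by
        have hr : ∑ m ∈ Finset.Ico (N+1) (N+1+p), T m j * eval lam (A a m)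
            = ∑ k ∈ Finset.range p, T (N+1+k) j * eval lam (A a (N+1+k)) := by
          rw [Finset.sum_Ico_eq_sum_range]
          apply Finset.sum_congr (by congr 1; omega) (fun k _ => rfl)
        calc ∑ m ∈ Finset.range (N+1+p), T m j * eval lam (A a m)
            = ∑ m ∈ Finset.Ico 0 (N+1), T m j * eval lam (A a m)
              + ∑ m ∈ Finset.Ico (N+1) (N+1+p), T m j * eval lam (A a m) := by
              rw [Finset.sum_Ico_consecutive _ (Nat.zero_le (N+1)) (by omega : N+1 ≤ N+1+p),
                Finset.range_eq_Ico]
          _ = _ := by rw [← Finset.range_eq_Ico, hr]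
      linarith [full2, hsplit]
    have e1 : ∑ m ∈ Finset.range (N+1), T m j * eval lam (Qp p A m N)
        = (Rb.updateRow r0
            (fun a => ∑ m ∈ Finset.range (N+1), T m j * eval lam (A a m))).det := by
      have hfn : (fun a => ∑ m ∈ Finset.range (N+1), T m j * eval lam (A a m))
          = ∑ m ∈ Finset.range (N+1), (T m j • fun a => eval lam (A a m)) := by
        funext a
        rw [Finset.sum_apply]
        apply Finset.sum_congr rfl
        intro m _
        simp
      rw [hfn, det_updateRow_finset_sum]
      apply Finset.sum_congr rfl
      intro m _
      rw [Matrix.det_updateRow_smul, hQ m]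
    rw [e1]
    have hfn2 : (fun a => ∑ m ∈ Finset.range (N+1), T m j * eval lam (A a m))
        = (fun a => lam * eval lam (A a j))
          - (fun a => ∑ k ∈ Finset.range p, T (N+1+k) j * eval lam (A a (N+1+k))) := by
      funext a
      simp only [Pi.sub_apply]
      rw [e2 a]
    rw [hfn2, det_updateRow_sub']
    have hz : (Rb.updateRow r0
        (fun a => ∑ k ∈ Finset.range p, T (N+1+k) j * eval lam (A a (N+1+k)))).det = 0 := by
      have hfn3 : (fun a => ∑ k ∈ Finset.range p, T (N+1+k) j * eval lam (A a (N+1+k)))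
          = ∑ k ∈ Finset.range p, (T (N+1+k) j • fun a => eval lam (A a (N+1+k))) := by
        funext a
        rw [Finset.sum_apply]
        apply Finset.sum_congr rfl
        intro k _
        simp
      rw [hfn3, det_updateRow_finset_sum]
      apply Finset.sum_eq_zero
      intro k hk
      simp only [Finset.mem_range] at hk
      rw [Matrix.det_updateRow_smul,
        show N+1+k = N+(k+1) by ring, hdet0 (k+1) (by omega) (by omega), mul_zero]
    rw [hz, sub_zero]
    have hsm : (fun a => lam * eval lam (A a j)) = lam • (fun a => eval lam (A a j)) := by
      funext a
      simp
    rw [hsm, Matrix.det_updateRow_smul, ← hQ j]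
  -- conclusion
  funext j
  calc Matrix.vecMul (fun i : Fin (N + 1) => eval lam (Qp p A (i : ℕ) N)) (truncM T N) j
      = ∑ i : Fin (N+1), eval lam (Qp p A (i:ℕ) N) * T (i:ℕ) (j:ℕ) := by
        simp [Matrix.vecMul, dotProduct, truncM]
    _ = ∑ m ∈ Finset.range (N+1), T m (j:ℕ) * eval lam (Qp p A m N) := by
        rw [← Fin.sum_univ_eq_sum_range (fun m => T m (j:ℕ) * eval lam (Qp p A m N)) (N+1)]
        apply Finset.sum_congr rfl
        intro i _
        ring
    _ = lam * eval lam (Qp p A (j:ℕ) N) := hcol (j:ℕ) (by have := j.isLt; omega)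
    _ = (lam • fun i : Fin (N + 1) => eval lam (Qp p A (i : ℕ) N)) j := by simp
end

section
/- (Christoffel–Darboux formulas) For every N ≥ 0 the following hold: (i) the two-variable polynomial identity (x − y)·Σ_{n=0}^{N} Q_{n,N}(x)·B_n(y) = h_N^{−1}·(B_{N+1}(x)·B_N(y) − B_N(x)·B_{N+1}(y)); (ii) the confluent identity Σ_{n=0}^{N} Q_{n,N}·B_n = h_N^{−1}·(B'_{N+1}·B_N − B'_N·B_{N+1}), where ' denotes the derivative of a polynomial. -/
open Polynomial

lemma det_updateRow_finsum {R : Type*} [CommRing R] {p : ℕ} (M : Matrix (Fin p) (Fin p) R)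
    (z : Fin p) {ι : Type*} (s : Finset ι) (f : ι → (Fin p → R)) :
    (M.updateRow z (∑ i ∈ s, f i)).det = ∑ i ∈ s, (M.updateRow z (f i)).det := by
  classical
  induction s using Finset.induction with
  | empty =>
      simp only [Finset.sum_empty]
      exact Matrix.det_eq_zero_of_row_eq_zero z (by simp [Matrix.updateRow_self])
  | insert _ _ hni ih =>
      rw [Finset.sum_insert hni, Matrix.det_updateRow_add, ih, Finset.sum_insert hni]

theorem stmt_5
    (p : ℕ) (hp : 1 ≤ p)
    (T : ℕ → ℕ → ℝ)
    (hT1 : ∀ n, T n (n + 1) = 1)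
    (hTsup : ∀ n m, n + 1 < m → T n m = 0)
    (hTsub : ∀ n m, m + p < n → T n m = 0)
    (hTlow : ∀ n, p ≤ n → T n (n - p) ≠ 0)
    (B : ℕ → Polynomial ℝ)
    (hB0 : B 0 = 1)
    (hBrec : ∀ n, B (n + 1) = (X - C (T n n)) * B n
      - ∑ j ∈ Finset.Icc 1 p, (if j ≤ n then C (T n (n - j)) * B (n - j) else 0))
    (A : Fin p → ℕ → Polynomial ℝ)
    (hAconst : ∀ a : Fin p, ∀ j < p, ∃ c : ℝ, A a j = C c)
    (hAzero : ∀ a : Fin p, ∀ j : ℕ, j < (a : ℕ) → A a j = 0)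
    (hAone : ∀ a : Fin p, A a (a : ℕ) = 1)
    (hArec : ∀ a : Fin p, ∀ n : ℕ,
      (if n = 0 then 0 else A a (n - 1))
        + ∑ i ∈ Finset.range (p + 1), C (T (n + i) n) * A a (n + i) = X * A a n)
    (h : ℕ → ℝ)
    (hh : ∀ n, h n = (-1 : ℝ) ^ ((p - 1) * n) * ∏ i ∈ Finset.range n, T (i + p) i) :
    ∀ N : ℕ,
      (∀ x y : ℝ,
        (x - y) * ∑ n ∈ Finset.range (N + 1), eval x (Qp p A n N) * eval y (B n)
          = (h N)⁻¹ * (eval x (B (N + 1)) * eval y (B N)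
              - eval x (B N) * eval y (B (N + 1)))) ∧
      (∑ n ∈ Finset.range (N + 1), Qp p A n N * B n
        = C (h N)⁻¹ * (derivative (B (N + 1)) * B N - derivative (B N) * B (N + 1))) := by
  obtain ⟨p', rfl⟩ : ∃ p', p = p' + 1 := ⟨p - 1, by omega⟩
  -- B is monic of degree n
  have hBmon : ∀ n, (B n).Monic ∧ (B n).natDegree = n := by
    intro n
    induction n using Nat.strong_induction_on with
    | _ n ih =>
      match n with
      | 0 =>
        rw [hB0]; exact ⟨monic_one, natDegree_one⟩
      | Nat.succ m =>
        obtain ⟨hm, hd⟩ := ih m (lt_add_one m)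
        have hmain : ((X - C (T m m)) * B m).Monic := (monic_X_sub_C _).mul hm
        have hdeg : ((X - C (T m m)) * B m).degree = ((m + 1 : ℕ) : WithBot ℕ) := by
          rw [degree_eq_natDegree hmain.ne_zero,
            natDegree_mul (monic_X_sub_C _).ne_zero hm.ne_zero, natDegree_X_sub_C, hd]
          norm_cast
          omega
        have hsum : (∑ j ∈ Finset.Icc 1 (p'+1),
            if j ≤ m then C (T m (m-j)) * B (m-j) else 0).degree
            < ((X - C (T m m)) * B m).degree := by
          refine lt_of_le_of_lt (degree_sum_le _ _) ?_
          rw [hdeg, Finset.sup_lt_iff (by exact_mod_cast WithBot.bot_lt_coe _)]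
          intro j hj
          rw [Finset.mem_Icc] at hj
          split_ifs with hjm
          · obtain ⟨hm', hd'⟩ := ih (m - j) (by omega)
            calc (C (T m (m-j)) * B (m-j)).degree
                ≤ (C (T m (m-j))).degree + (B (m-j)).degree := degree_mul_le _ _
              _ ≤ 0 + (B (m-j)).degree := add_le_add degree_C_le le_rfl
              _ = (B (m-j)).degree := zero_add _
              _ < ((m + 1 : ℕ) : WithBot ℕ) := by
                  rw [degree_eq_natDegree hm'.ne_zero, hd']
                  exact_mod_cast Nat.lt_succ_of_le (by omega)
          · rw [degree_zero]
            exact_mod_cast WithBot.bot_lt_coe _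
        constructor
        · rw [hBrec m]
          exact hmain.sub_of_left hsum
        · rw [hBrec m]
          have hds := degree_sub_eq_left_of_degree_lt hsum
          rw [hdeg] at hds
          exact natDegree_eq_of_degree_eq_some hds
  -- key recursion for Qp (column relation)
  have hq_rec : ∀ n N, X * Qp (p'+1) A n N = (if n = 0 then 0 else Qp (p'+1) A (n-1) N)
      + ∑ i ∈ Finset.range (p'+1 + 1), C (T (n + i) n) * Qp (p'+1) A (n + i) N := by
    intro n N
    set M : Matrix (Fin (p'+1)) (Fin (p'+1)) ℝ[X] :=
      Matrix.of (fun i a : Fin (p'+1) =>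
        if (i : ℕ) = 0 then A a n else A a (N + (i : ℕ))) with hM
    set z : Fin (p'+1) := ⟨0, by omega⟩ with hz
    have hrow : ∀ m : ℕ, (M.updateRow z fun a => A a m).det = Qp (p'+1) A m N := by
      intro m
      congr 1
      ext i a
      by_cases hi : i = z
      · subst hi; simp [Matrix.updateRow_self, hz]
      · have : (i : ℕ) ≠ 0 := fun hc => hi (Fin.ext hc)
        simp [Matrix.updateRow_ne hi, hM, this, show i ≠ 0 from fun hc => this (by simp [hc])]
    have hMz : M z = fun a => A a n := by funext a; simp [hM, hz]
    have step1 : X * Qp (p'+1) A n N = (M.updateRow z ((X : ℝ[X]) • M z)).det := by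
      rw [Matrix.det_updateRow_smul, Matrix.updateRow_eq_self]
      rfl
    rw [step1]
    have hsplit : (X : ℝ[X]) • M z = (fun a => if n = 0 then (0:ℝ[X]) else A a (n-1))
        + ∑ i ∈ Finset.range (p'+1+1), (fun a => C (T (n + i) n) * A a (n + i)) := by
      funext a
      simp only [Pi.add_apply, Pi.smul_apply, hMz, smul_eq_mul, Finset.sum_apply]
      rw [← hArec a n]
    rw [hsplit, Matrix.det_updateRow_add, det_updateRow_finsum]
    congr 1
    · split_ifs with hn
      · exact Matrix.det_eq_zero_of_row_eq_zero z (by simp [Matrix.updateRow_self])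
      · exact hrow _
    · refine Finset.sum_congr rfl fun i _ => ?_
      have he : (fun a => C (T (n + i) n) * A a (n + i))
          = (C (T (n+i) n)) • (fun a => A a (n+i)) := by
        funext a; simp [smul_eq_mul]
      rw [he, Matrix.det_updateRow_smul, hrow]
  -- vanishing of Qp for repeated rows
  have hqzero : ∀ N m, N < m → m < N + (p'+1) → Qp (p'+1) A m N = 0 := by
    intro N m h1 h2
    have hlt : m - N < p' + 1 := by omega
    refine Matrix.det_zero_of_row_eq (i := ⟨0, by omega⟩) (j := ⟨m - N, hlt⟩) ?_ ?_
    · intro hc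
      have := congrArg (Fin.val) hc
      simp only [Fin.val_mk] at this; omega
    · funext a
      have h3 : ((⟨m - N, hlt⟩ : Fin (p'+1)) : ℕ) ≠ 0 := by
        simp only [Fin.val_mk]; omega
      simp only [Matrix.of_apply, h3, if_false, if_pos rfl, if_true]
      congr 1
      first
      | omega
      | (simp only [Fin.val_mk]; omega)
  -- rotation
  have hqrot : ∀ N, Qp (p'+1) A (N+(p'+1)) N = C ((-1:ℝ)^p') * Qp (p'+1) A (N+1) (N+1) := by
    intro N
    set M : Matrix (Fin (p'+1)) (Fin (p'+1)) ℝ[X] :=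
      Matrix.of (fun i a : Fin (p'+1) =>
        if (i : ℕ) = 0 then A a (N+1) else A a (N + 1 + (i : ℕ))) with hM
    have hM' : ∀ i a, M i a = A a (N + 1 + (i : ℕ)) := by
      intro i a
      by_cases hi : (i:ℕ) = 0 <;> simp only [hM, Matrix.of_apply, hi, if_true, if_false, add_zero]
    have key : (Matrix.of fun i a : Fin (p'+1) =>
        if (i : ℕ) = 0 then A a (N+(p'+1)) else A a (N + (i : ℕ)))
        = M.submatrix (fun i => (finRotate (p'+1))⁻¹ i) id := by
      refine Matrix.ext fun i a => ?_
      simp only [Matrix.submatrix_apply, id, hM', Matrix.of_apply]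
      rcases Fin.eq_zero_or_eq_succ i with h0 | ⟨j, hj⟩
      · subst h0
        have h4 : (finRotate (p'+1))⁻¹ 0 = Fin.last p' := by
          rw [Equiv.Perm.inv_def, Equiv.symm_apply_eq]
          exact finRotate_last.symm
        rw [h4]
        simp only [Fin.val_zero, if_pos rfl, if_true]
        congr 1
        first
        | omega
        | (simp only [Fin.val_last]; omega)
      · subst hj
        have h4 : (finRotate (p'+1))⁻¹ j.succ = j.castSucc := by
          rw [Equiv.Perm.inv_def, Equiv.symm_apply_eq, finRotate_succ_apply,
            Fin.coeSucc_eq_succ]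
        rw [h4]
        have h5 : ((j.succ : Fin (p'+1)) : ℕ) ≠ 0 := by simp
        simp only [h5, if_false]
        congr 1
        first
        | omega
        | (simp only [Fin.coe_castSucc, Fin.val_succ]; omega)
    have hQ : Qp (p'+1) A (N+1) (N+1) = M.det := rfl
    show Matrix.det _ = _
    rw [key, Matrix.det_permute, hQ]
    have h6 : Equiv.Perm.sign (finRotate (p'+1))⁻¹ = (-1)^p' := by
      rw [Equiv.Perm.sign_inv, sign_finRotate, Nat.add_sub_cancel]
    rw [h6]
    push_cast
    rw [map_pow, map_neg, map_one]
  -- telescoping identity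
  have htel : ∀ N x y, (x - y) * ∑ n ∈ Finset.range (N + 1),
        eval x (Qp (p'+1) A n N) * eval y (B n)
      = T (N+(p'+1)) N * eval x (Qp (p'+1) A (N+(p'+1)) N) * eval y (B N)
        - eval x (Qp (p'+1) A N N) * eval y (B (N + 1)) := by
    intro N x y
    set Qv : ℕ → ℝ := fun n => eval x (Qp (p'+1) A n N) with hQv
    set Bv : ℕ → ℝ := fun n => eval y (B n) with hBv
    -- E1 : column relation, evaluated
    have hE1 : ∀ n, n ≤ N → x * Qv n
        = ∑ m ∈ Finset.range ((N+1)+(p'+1)), T m n * Qv m := by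
      intro n hn
      have h1 := congrArg (eval x) (hq_rec n N)
      simp only [eval_mul, eval_add, eval_X, eval_finset_sum, eval_C, apply_ite (eval x),
        eval_zero] at h1
      have h2 : ∑ m ∈ Finset.range ((N+1)+(p'+1)), T m n * Qv m
          = ∑ m ∈ Finset.range (n + (p'+1+1)), T m n * Qv m := by
        refine (Finset.sum_subset (Finset.range_subset_range.mpr (by omega)) ?_).symm
        intro m hm hnm
        rw [Finset.mem_range] at hm
        have hm2 : ¬ m < n + (p'+1+1) := fun hc => hnm (Finset.mem_range.mpr hc)
        show T m n * Qv m = 0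
        rw [hTsub m n (by omega), zero_mul]
      have h3 : ∑ m ∈ Finset.range (n + (p'+1+1)), T m n * Qv m
          = (if n = 0 then 0 else Qv (n-1))
            + ∑ i ∈ Finset.range (p'+1+1), T (n+i) n * Qv (n+i) := by
        rw [Finset.sum_range_add]
        congr 1
        rcases Nat.eq_zero_or_pos n with h0 | h0
        · subst h0; simp
        · rw [if_neg (by omega), Finset.sum_eq_single (n-1)]
          · have ht : T (n-1) n = 1 := by
              have := hT1 (n-1); rwa [Nat.sub_add_cancel h0] at this
            rw [ht, one_mul]
          · intro m hm hne
            rw [Finset.mem_range] at hm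
            show T m n * Qv m = 0
            rw [hTsup m n (by omega), zero_mul]
          · intro hmem
            exact absurd (Finset.mem_range.mpr (by omega)) hmem
      rw [h2, h3, hQv]
      exact h1
    -- E2 : row relation, evaluated
    have hE2 : ∀ n, n ≤ N → y * Bv n
        = ∑ m ∈ Finset.range ((N+1)+(p'+1)), T n m * Bv m := by
      intro n hn
      have h1 := congrArg (eval y) (hBrec n)
      simp only [eval_mul, eval_add, eval_sub, eval_X, eval_finset_sum, eval_C,
        apply_ite (eval y), eval_zero] at h1
      have h2 : ∑ m ∈ Finset.range ((N+1)+(p'+1)), T n m * Bv m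
          = ∑ m ∈ Finset.range (n+1+1), T n m * Bv m := by
        refine (Finset.sum_subset (Finset.range_subset_range.mpr (by omega)) ?_).symm
        intro m hm hnm
        have hm2 : ¬ m < n + 1 + 1 := fun hc => hnm (Finset.mem_range.mpr hc)
        show T n m * Bv m = 0
        rw [hTsup n m (by omega), zero_mul]
      have h3 : ∑ m ∈ Finset.range n, T n m * Bv m
          = ∑ j ∈ Finset.Icc 1 (p'+1), (if j ≤ n then T n (n-j) * Bv (n-j) else 0) := by
        rw [← Finset.sum_filter]
        rw [← Finset.sum_filter_of_ne (s := Finset.range n)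
          (p := fun m => n ≤ m + (p'+1)) (f := fun m => T n m * Bv m) ?_]
        · refine Finset.sum_nbij' (fun m => n - m) (fun j => n - j) ?_ ?_ ?_ ?_ ?_
          · intro a ha
            simp only [Finset.mem_filter, Finset.mem_range] at ha
            simp only [Finset.mem_filter, Finset.mem_Icc]
            omega
          · intro a ha
            simp only [Finset.mem_filter, Finset.mem_Icc] at ha
            simp only [Finset.mem_filter, Finset.mem_range]
            omega
          · intro a ha
            simp only [Finset.mem_filter, Finset.mem_range] at ha
            omega
          · intro a ha
            simp only [Finset.mem_filter, Finset.mem_Icc] at ha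
            omega
          · intro a ha
            simp only [Finset.mem_filter, Finset.mem_range] at ha
            have he : n - (n - a) = a := by omega
            rw [he]
        · intro m hm hne
          rw [Finset.mem_range] at hm
          by_contra hc
          push_neg at hc
          refine hne ?_
          show T n m * Bv m = 0
          rw [hTsub n m (by omega), zero_mul]
      rw [h2, Finset.sum_range_succ, Finset.sum_range_succ, h3]
      have ht : T n (n+1) = 1 := hT1 n
      rw [ht, one_mul]
      simp only [hBv]
      rw [h1]
      ring
    -- the double-sum telescoping
    have hsplit1 : (x - y) * ∑ n ∈ Finset.range (N + 1), Qv n * Bv n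
        = ∑ n ∈ Finset.range (N+1), (x * Qv n) * Bv n
          - ∑ n ∈ Finset.range (N+1), Qv n * (y * Bv n) := by
      rw [sub_mul, Finset.mul_sum, Finset.mul_sum]
      congr 1 <;> exact Finset.sum_congr rfl fun n _ => by ring
    rw [show ∑ n ∈ Finset.range (N + 1), eval x (Qp (p'+1) A n N) * eval y (B n)
      = ∑ n ∈ Finset.range (N + 1), Qv n * Bv n from rfl, hsplit1]
    have hD1 : ∑ n ∈ Finset.range (N+1), (x * Qv n) * Bv n
        = ∑ n ∈ Finset.range (N+1), ∑ m ∈ Finset.range ((N+1)+(p'+1)),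
            T m n * Qv m * Bv n := by
      refine Finset.sum_congr rfl fun n hn => ?_
      rw [hE1 n (by rw [Finset.mem_range] at hn; omega), Finset.sum_mul]
    have hD2 : ∑ n ∈ Finset.range (N+1), Qv n * (y * Bv n)
        = ∑ m ∈ Finset.range ((N+1)+(p'+1)), ∑ n ∈ Finset.range (N+1),
            T n m * Qv n * Bv m := by
      rw [← Finset.sum_comm]
      refine Finset.sum_congr rfl fun n hn => ?_
      rw [hE2 n (by rw [Finset.mem_range] at hn; omega), Finset.mul_sum]
      exact Finset.sum_congr rfl fun m _ => by ring
    rw [hD1, hD2]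
    have hsplitR1 : ∀ n, ∑ m ∈ Finset.range ((N+1)+(p'+1)), T m n * Qv m * Bv n
        = (∑ m ∈ Finset.range (N+1), T m n * Qv m * Bv n)
          + ∑ i ∈ Finset.range (p'+1), T (N+1+i) n * Qv (N+1+i) * Bv n := by
      intro n
      rw [Finset.sum_range_add]
    have hsplitR2 : ∑ m ∈ Finset.range ((N+1)+(p'+1)), ∑ n ∈ Finset.range (N+1),
            T n m * Qv n * Bv m
        = (∑ m ∈ Finset.range (N+1), ∑ n ∈ Finset.range (N+1), T n m * Qv n * Bv m)
          + ∑ i ∈ Finset.range (p'+1), ∑ n ∈ Finset.range (N+1),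
              T n (N+1+i) * Qv n * Bv (N+1+i) := by
      rw [Finset.sum_range_add]
    simp only [hsplitR1]
    rw [hsplitR2, Finset.sum_add_distrib]
    have hcancel : ∑ n ∈ Finset.range (N+1), ∑ m ∈ Finset.range (N+1), T m n * Qv m * Bv n
        = ∑ m ∈ Finset.range (N+1), ∑ n ∈ Finset.range (N+1), T n m * Qv n * Bv m := by
      rw [Finset.sum_comm]
    rw [hcancel]
    have hD12 : ∑ n ∈ Finset.range (N+1), ∑ i ∈ Finset.range (p'+1),
          T (N+1+i) n * Qv (N+1+i) * Bv n
        = T (N+(p'+1)) N * Qv (N+(p'+1)) * Bv N := by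
      have hinner : ∀ n, n ≤ N → ∑ i ∈ Finset.range (p'+1), T (N+1+i) n * Qv (N+1+i) * Bv n
          = T (N+1+p') n * Qv (N+1+p') * Bv n := by
        intro n hn
        rw [Finset.sum_eq_single p']
        · intro i hi hne
          rw [Finset.mem_range] at hi
          have hz : Qp (p'+1) A (N+1+i) N = 0 := hqzero N (N+1+i) (by omega) (by omega)
          have : Qv (N+1+i) = 0 := by rw [hQv]; simp only []; rw [hz, eval_zero]
          rw [this]
          ring
        · intro hmem
          exact absurd (Finset.mem_range.mpr (by omega)) hmem
      rw [Finset.sum_congr rfl fun n hn =>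
        hinner n (by rw [Finset.mem_range] at hn; omega)]
      rw [Finset.sum_eq_single N]
      · have : N + 1 + p' = N + (p'+1) := by omega
        rw [this]
      · intro n hn hne
        rw [Finset.mem_range] at hn
        rw [hTsub (N+1+p') n (by omega)]
        ring
      · intro hmem
        exact absurd (Finset.mem_range.mpr (by omega)) hmem
    have hD22 : ∑ i ∈ Finset.range (p'+1), ∑ n ∈ Finset.range (N+1),
          T n (N+1+i) * Qv n * Bv (N+1+i)
        = Qv N * Bv (N+1) := by
      rw [Finset.sum_eq_single 0]
      · rw [Finset.sum_eq_single N]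
        · have : T N (N+1+0) = 1 := by
            have := hT1 N
            simpa using this
          rw [this]
          simp only [Nat.add_zero]
          ring
        · intro n hn hne
          rw [Finset.mem_range] at hn
          rw [hTsup n (N+1+0) (by omega)]
          ring
        · intro hmem
          exact absurd (Finset.mem_range.mpr (by omega)) hmem
      · intro i hi hne
        refine Finset.sum_eq_zero fun n hn => ?_
        rw [Finset.mem_range] at hn
        rw [hTsup n (N+1+i) (by omega)]
        ring
      · intro hmem
        exact absurd (Finset.mem_range.mpr (by omega)) hmem
    rw [hD12, hD22]
    ring
  -- nonvanishing facts
  have hTne : ∀ N, T (N+(p'+1)) N ≠ 0 := by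
    intro N
    have := hTlow (N+(p'+1)) (by omega)
    rwa [Nat.add_sub_cancel] at this
  have hhne : ∀ N, h N ≠ 0 := by
    intro N
    rw [hh]
    refine mul_ne_zero (pow_ne_zero _ (by norm_num)) (Finset.prod_ne_zero_iff.mpr ?_)
    intro i _
    exact hTne i
  have hhsucc : ∀ N, h (N+1) = (-1:ℝ)^p' * T (N+(p'+1)) N * h N := by
    intro N
    rw [hh, hh, Finset.prod_range_succ]
    have h1 : (p' + 1 - 1) * (N+1) = (p'+1-1) * N + p' := by
      simp [Nat.mul_succ]
    rw [h1, pow_add]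
    have h2 : p' + 1 - 1 = p' := rfl
    rw [h2]
    ring
  -- the diagonal determinant equals the normalized B
  have hW : ∀ N, Qp (p'+1) A N N = C (h N)⁻¹ * B N := by
    intro N
    induction N with
    | zero =>
      have hm : (Matrix.of fun i a : Fin (p'+1) =>
          if (i:ℕ) = 0 then A a 0 else A a (0+(i:ℕ)))
          = Matrix.of fun i a : Fin (p'+1) => A a (i:ℕ) := by
        refine Matrix.ext fun i a => ?_
        simp only [Matrix.of_apply]
        by_cases hi : (i:ℕ) = 0
        · rw [if_pos hi, hi]
        · rw [if_neg hi]
          congr 1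
          omega
      show Matrix.det _ = _
      rw [hm, Matrix.det_of_lowerTriangular _ ?_]
      · have : ∀ i : Fin (p'+1), (Matrix.of fun i a : Fin (p'+1) => A a (i:ℕ)) i i = 1 :=
          fun i => hAone i
        rw [Finset.prod_congr rfl (fun i _ => this i), Finset.prod_const_one]
        have hh0 : h 0 = 1 := by rw [hh]; simp
        rw [hh0, hB0, inv_one, map_one, one_mul]
      · intro i j hij
        exact hAzero j i hij
    | succ N ih =>
      have h2 : C (T (N+(p'+1)) N) * Qp (p'+1) A (N+(p'+1)) N * B N
          = Qp (p'+1) A N N * B (N+1) := by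
        apply Polynomial.funext
        intro r
        have h0 := htel N r r
        simp only [sub_self, zero_mul] at h0
        simp only [eval_mul, eval_C]
        linarith
      rw [hqrot N, ih] at h2
      have hBne : B N ≠ 0 := (hBmon N).1.ne_zero
      have h3 : (C (T (N+(p'+1)) N * (-1:ℝ)^p') * Qp (p'+1) A (N+1) (N+1)) * B N
          = (C (h N)⁻¹ * B (N+1)) * B N := by
        rw [C_mul]
        linear_combination h2
      have h4 := mul_right_cancel₀ hBne h3
      have hs : T (N+(p'+1)) N * (-1:ℝ)^p' ≠ 0 :=
        mul_ne_zero (hTne N) (pow_ne_zero _ (by norm_num))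
      have h5 : Qp (p'+1) A (N+1) (N+1)
          = C ((T (N+(p'+1)) N * (-1:ℝ)^p')⁻¹ * (h N)⁻¹) * B (N+1) := by
        calc Qp (p'+1) A (N+1) (N+1)
            = C ((T (N+(p'+1)) N * (-1:ℝ)^p')⁻¹)
              * (C (T (N+(p'+1)) N * (-1:ℝ)^p') * Qp (p'+1) A (N+1) (N+1)) := by
              rw [← mul_assoc, ← C_mul, inv_mul_cancel₀ hs, C_1, one_mul]
          _ = C ((T (N+(p'+1)) N * (-1:ℝ)^p')⁻¹) * (C (h N)⁻¹ * B (N+1)) := by rw [h4]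
          _ = C ((T (N+(p'+1)) N * (-1:ℝ)^p')⁻¹ * (h N)⁻¹) * B (N+1) := by
              rw [← mul_assoc, ← C_mul]
      rw [h5]
      congr 2
      have hmul : h (N+1) = (T (N+(p'+1)) N * (-1:ℝ)^p') * h N := by
        rw [hhsucc N]; ring
      rw [hmul]; simp [mul_inv]; ring
  -- main coefficient identity
  have hcoef : ∀ N, T (N+(p'+1)) N * ((-1:ℝ)^p' * (h (N+1))⁻¹) = (h N)⁻¹ := by
    intro N
    have hne1 : ((-1:ℝ)^p') ≠ 0 := pow_ne_zero _ (by norm_num)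
    rw [hhsucc N, mul_inv, mul_inv]
    calc T (N+(p'+1)) N * ((-1:ℝ)^p' * (((-1:ℝ)^p')⁻¹ * (T (N+(p'+1)) N)⁻¹ * (h N)⁻¹))
        = ((-1:ℝ)^p' * ((-1:ℝ)^p')⁻¹) * (T (N+(p'+1)) N * (T (N+(p'+1)) N)⁻¹) * (h N)⁻¹ := by
          ring
      _ = (h N)⁻¹ := by
          rw [mul_inv_cancel₀ hne1, mul_inv_cancel₀ (hTne N)]; ring
  intro N
  have part1 : ∀ x y : ℝ,
      (x - y) * ∑ n ∈ Finset.range (N + 1), eval x (Qp (p'+1) A n N) * eval y (B n)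
        = (h N)⁻¹ * (eval x (B (N + 1)) * eval y (B N)
            - eval x (B N) * eval y (B (N + 1))) := by
    intro x y
    rw [htel N x y, hqrot N, hW (N+1), hW N]
    simp only [eval_mul, eval_C]
    rw [← hcoef N]
    ring
  refine ⟨part1, ?_⟩
  have key : ∀ y : ℝ, (X - C y) * (∑ n ∈ Finset.range (N+1),
        Qp (p'+1) A n N * C (eval y (B n)))
      = C (h N)⁻¹ * (B (N+1) * C (eval y (B N)) - B N * C (eval y (B (N+1)))) := by
    intro y
    apply Polynomial.funext
    intro r
    have hpt := part1 r y
    simp only [eval_mul, eval_sub, eval_X, eval_C, eval_finset_sum]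
    exact hpt
  have keyD : ∀ y : ℝ, (∑ n ∈ Finset.range (N+1),
        eval y (Qp (p'+1) A n N) * eval y (B n))
      = (h N)⁻¹ * (eval y (derivative (B (N+1))) * eval y (B N)
          - eval y (derivative (B N)) * eval y (B (N+1))) := by
    intro y
    have hD := congrArg derivative (key y)
    simp only [derivative_mul, derivative_sub, derivative_X, derivative_C, one_mul,
      zero_mul, mul_zero, add_zero, zero_add, sub_zero] at hD
    have hev := congrArg (eval y) hD
    simp only [eval_add, eval_mul, eval_sub, eval_X, eval_C, eval_finset_sum, sub_self,
      zero_mul, add_zero, zero_add, mul_zero] at hev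
    exact hev
  apply Polynomial.funext
  intro y
  simp only [eval_finset_sum, eval_mul, eval_sub, eval_C]
  exact keyD y
end

section
/- Assume B_{N+1} has N+1 simple real zeros λ_1 > ⋯ > λ_{N+1}. Let 𝒰 be the (N+1)×(N+1) matrix with entries 𝒰_{n,k} = B_{n−1}(λ_k) and let 𝒲 be the (N+1)×(N+1) matrix with entries 𝒲_{k,n} = w_{k,n} (rows indexed by k, columns by n, both from 1 to N+1). Then 𝒰·𝒲 = 𝒲·𝒰 = I_{N+1}, and for every n ≥ 0, 𝒰·Dⁿ·𝒲 = (T^{[N]})ⁿ, where D = diag(λ_1, …, λ_{N+1}). -/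
open Polynomial

noncomputable def wfun (p : ℕ) (A : Fin p → ℕ → Polynomial ℝ) (B : ℕ → Polynomial ℝ)
    (N : ℕ) (lam : Fin (N + 1) → ℝ) (k : Fin (N + 1)) (n : ℕ) : ℝ :=
  Polynomial.eval (lam k) (Qp p A n N) /
    ∑ l ∈ Finset.range (N + 1),
      Polynomial.eval (lam k) (Qp p A l N) * Polynomial.eval (lam k) (B l)

noncomputable def calU (B : ℕ → Polynomial ℝ) (N : ℕ) (lam : Fin (N + 1) → ℝ) :
    Matrix (Fin (N + 1)) (Fin (N + 1)) ℝ :=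
  Matrix.of fun n k : Fin (N + 1) => Polynomial.eval (lam k) (B (n : ℕ))

noncomputable def calW (p : ℕ) (A : Fin p → ℕ → Polynomial ℝ) (B : ℕ → Polynomial ℝ)
    (N : ℕ) (lam : Fin (N + 1) → ℝ) : Matrix (Fin (N + 1)) (Fin (N + 1)) ℝ :=
  Matrix.of fun k n : Fin (N + 1) => wfun p A B N lam k (n : ℕ)

section helperLemmas

lemma splitRange {M : Type*} [AddCommMonoid M] (p : ℕ) (f : ℕ → M) :
    ∑ i ∈ Finset.range (p + 1), f i = f 0 + ∑ i ∈ Finset.Icc 1 p, f i := by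
  rw [Finset.sum_range_succ' f p]
  have : ∑ i ∈ Finset.Icc 1 p, f i = ∑ i ∈ Finset.range (p + 1 - 1), f (1 + i) := by
    rw [← Finset.Ico_add_one_right_eq_Icc, Finset.sum_Ico_eq_sum_range]
  simp only [Nat.add_sub_cancel] at this
  rw [this, add_comm]
  congr 1
  exact Finset.sum_congr rfl (by intro i _; rw [add_comm])

lemma tele {R : Type*} [CommRing R] (a b : ℕ → R) :
    ∀ M : ℕ, ∑ n ∈ Finset.range (M + 1),
      ((if n = 0 then 0 else a (n - 1)) * b n - a n * b (n + 1)) = -(a M * b (M + 1))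
  | 0 => by simp
  | (M + 1) => by
    rw [Finset.sum_range_succ, tele a b M]
    simp
    ring

lemma Dsub (p : ℕ) (hp : 1 ≤ p) (T : ℕ → ℕ → ℝ) (N : ℕ) (a B : ℕ → Polynomial ℝ)
    (Hvan : ∀ m, N + 1 ≤ m → m < N + p → a m = 0) :
    (∑ n ∈ Finset.range (N + 1), ∑ i ∈ Finset.Icc 1 p, C (T (n + i) n) * a (n + i) * B n)
      - ∑ n ∈ Finset.range (N + 1), (a n *
          ∑ j ∈ Finset.Icc 1 p, (if j ≤ n then C (T n (n - j)) * B (n - j) else 0))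
      = C (T (N + p) N) * a (N + p) * B N := by
  set s : Finset (ℕ × ℕ) := Finset.range (N + 1) ×ˢ Finset.Icc 1 p with hs
  set g : ℕ × ℕ → Polynomial ℝ := fun z => C (T (z.1 + z.2) z.1) * a (z.1 + z.2) * B z.1 with hg
  have h1 : (∑ n ∈ Finset.range (N + 1), ∑ i ∈ Finset.Icc 1 p,
      C (T (n + i) n) * a (n + i) * B n) = ∑ z ∈ s, g z := by
    rw [hs, Finset.sum_product]
  have h2 : (∑ n ∈ Finset.range (N + 1), (a n *
        ∑ j ∈ Finset.Icc 1 p, (if j ≤ n then C (T n (n - j)) * B (n - j) else 0)))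
      = ∑ z ∈ s.filter (fun z => z.1 + z.2 ≤ N), g z := by
    have e1 : ∀ n, a n * (∑ j ∈ Finset.Icc 1 p, (if j ≤ n then C (T n (n - j)) * B (n - j) else 0))
        = ∑ j ∈ Finset.Icc 1 p, (if j ≤ n then a n * (C (T n (n - j)) * B (n - j)) else 0) := by
      intro n
      rw [Finset.mul_sum]
      exact Finset.sum_congr rfl (by intro j _; split <;> simp)
    simp_rw [e1]
    rw [← Finset.sum_product' (s := Finset.range (N+1)) (t := Finset.Icc 1 p)
      (f := fun n j => if j ≤ n then a n * (C (T n (n - j)) * B (n - j)) else 0)]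
    rw [← Finset.sum_filter]
    refine Finset.sum_nbij' (fun z => (z.1 - z.2, z.2)) (fun z => (z.1 + z.2, z.2)) ?_ ?_ ?_ ?_ ?_
    · rintro ⟨n, j⟩ hz
      simp only [Finset.mem_filter, hs, Finset.mem_product, Finset.mem_range, Finset.mem_Icc] at hz ⊢
      omega
    · rintro ⟨m, i⟩ hz
      simp only [Finset.mem_filter, hs, Finset.mem_product, Finset.mem_range, Finset.mem_Icc] at hz ⊢
      omega
    · rintro ⟨n, j⟩ hz
      simp only [Finset.mem_filter, hs, Finset.mem_product, Finset.mem_range, Finset.mem_Icc] at hz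
      simp only [Prod.mk.injEq]
      exact ⟨by omega, trivial⟩
    · rintro ⟨m, i⟩ hz
      simp only [Finset.mem_filter, hs, Finset.mem_product, Finset.mem_range, Finset.mem_Icc] at hz
      simp only [Prod.mk.injEq]
      exact ⟨by omega, trivial⟩
    · rintro ⟨n, j⟩ hz
      simp only [Finset.mem_filter, hs, Finset.mem_product, Finset.mem_range, Finset.mem_Icc] at hz
      have hjn : j ≤ n := hz.2
      simp only [hg]
      have h1 : n - j + j = n := by omega
      rw [h1]
      ring
  rw [h1, h2, ← Finset.sum_filter_add_sum_filter_not s (fun z => z.1 + z.2 ≤ N) g]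
  rw [add_sub_cancel_left]
  refine Finset.sum_eq_single_of_mem (N, p) ?_ ?_
  · simp only [Finset.mem_filter, hs, Finset.mem_product, Finset.mem_range, Finset.mem_Icc]
    omega
  · rintro ⟨n, i⟩ hz hne
    simp only [Finset.mem_filter, hs, Finset.mem_product, Finset.mem_range, Finset.mem_Icc] at hz
    have : a (n + i) = 0 := by
      rcases hz with ⟨⟨hn, hi⟩, hni⟩
      refine Hvan _ (by omega) ?_
      rcases Nat.lt_or_ge (n + i) (N + p) with h | h
      · exact h
      · exfalso; apply hne; have hnp : n = N ∧ i = p := by omega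
        simp [hnp.1, hnp.2]
    simp [hg, this]

lemma CDlem (p : ℕ) (hp : 1 ≤ p) (T : ℕ → ℕ → ℝ) (B : ℕ → Polynomial ℝ)
    (hBrec : ∀ n, B (n + 1) = (X - C (T n n)) * B n
      - ∑ j ∈ Finset.Icc 1 p, (if j ≤ n then C (T n (n - j)) * B (n - j) else 0))
    (N : ℕ) (s : Polynomial ℝ) (a : ℕ → Polynomial ℝ)
    (Ha : ∀ n, s * a n = (if n = 0 then 0 else a (n - 1))
      + ∑ i ∈ Finset.range (p + 1), C (T (n + i) n) * a (n + i))
    (Hvan : ∀ m, N + 1 ≤ m → m < N + p → a m = 0) :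
    (s - X) * ∑ n ∈ Finset.range (N + 1), a n * B n
      = C (T (N + p) N) * a (N + p) * B N - a N * B (N + 1) := by
  have XB : ∀ n, X * B n = B (n + 1) + C (T n n) * B n
      + ∑ j ∈ Finset.Icc 1 p, (if j ≤ n then C (T n (n - j)) * B (n - j) else 0) := by
    intro n
    rw [hBrec n]; ring
  have Ha' : ∀ n, s * a n = (if n = 0 then 0 else a (n - 1)) + C (T n n) * a n
      + ∑ i ∈ Finset.Icc 1 p, C (T (n + i) n) * a (n + i) := by
    intro n
    rw [Ha n, splitRange p (fun i => C (T (n + i) n) * a (n + i))]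
    simp [add_assoc]
  calc (s - X) * ∑ n ∈ Finset.range (N + 1), a n * B n
      = ∑ n ∈ Finset.range (N + 1), ((s * a n) * B n - a n * (X * B n)) := by
        rw [Finset.mul_sum]
        exact Finset.sum_congr rfl (by intro n _; ring)
    _ = ∑ n ∈ Finset.range (N + 1),
          (((if n = 0 then 0 else a (n - 1)) * B n - a n * B (n + 1))
            + ((∑ i ∈ Finset.Icc 1 p, C (T (n + i) n) * a (n + i)) * B n
              - a n * ∑ j ∈ Finset.Icc 1 p, (if j ≤ n then C (T n (n - j)) * B (n - j) else 0))) := by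
        refine Finset.sum_congr rfl ?_
        intro n _
        rw [Ha' n, XB n]
        ring
    _ = (∑ n ∈ Finset.range (N + 1), ((if n = 0 then 0 else a (n - 1)) * B n - a n * B (n + 1)))
        + ((∑ n ∈ Finset.range (N + 1), ∑ i ∈ Finset.Icc 1 p, C (T (n + i) n) * a (n + i) * B n)
          - ∑ n ∈ Finset.range (N + 1), (a n *
            ∑ j ∈ Finset.Icc 1 p, (if j ≤ n then C (T n (n - j)) * B (n - j) else 0))) := by
        rw [Finset.sum_add_distrib, Finset.sum_sub_distrib]
        simp_rw [Finset.sum_mul]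
        rw [Finset.sum_sub_distrib]
    _ = -(a N * B (N + 1)) + C (T (N + p) N) * a (N + p) * B N := by
        rw [tele a B N, Dsub p hp T N a B Hvan]
    _ = C (T (N + p) N) * a (N + p) * B N - a N * B (N + 1) := by ring

lemma Qp_eq (p : ℕ) (hp : 1 ≤ p) (A : Fin p → ℕ → Polynomial ℝ) (n N : ℕ) :
    Qp p A n N = ((Matrix.of fun i a : Fin p => A a (N + (i : ℕ))).updateRow
      ⟨0, hp⟩ (fun a => A a n)).det := by
  unfold Qp
  congr 1
  funext i a
  rw [Matrix.updateRow_apply]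
  by_cases h : i = ⟨0, hp⟩
  · simp [h]
  · have : (i : ℕ) ≠ 0 := by
      intro h0; exact h (Fin.ext h0)
    simp [h, this, Matrix.of_apply]

lemma Qp_van (p : ℕ) (hp : 1 ≤ p) (A : Fin p → ℕ → Polynomial ℝ) (N : ℕ)
    (i : ℕ) (h1 : 1 ≤ i) (h2 : i < p) : Qp p A (N + i) N = 0 := by
  apply Matrix.det_zero_of_row_eq (i := (⟨0, hp⟩ : Fin p)) (j := ⟨i, h2⟩)
  · intro h; exact absurd (congrArg Fin.val h) (by simp; omega)
  · funext a
    simp only [Matrix.of_apply]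
    have : ((⟨i, h2⟩ : Fin p) : ℕ) ≠ 0 := by simp; omega
    simp [this]

lemma Qp_rec (p : ℕ) (hp : 1 ≤ p) (T : ℕ → ℕ → ℝ) (A : Fin p → ℕ → Polynomial ℝ)
    (hArec : ∀ a : Fin p, ∀ n : ℕ,
      (if n = 0 then 0 else A a (n - 1))
        + ∑ i ∈ Finset.range (p + 1), C (T (n + i) n) * A a (n + i) = X * A a n)
    (N : ℕ) (n : ℕ) :
    X * Qp p A n N = (if n = 0 then 0 else Qp p A (n - 1) N)
      + ∑ i ∈ Finset.range (p + 1), C (T (n + i) n) * Qp p A (n + i) N := by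
  classical
  set M₀ : Matrix (Fin p) (Fin p) (Polynomial ℝ) :=
    Matrix.of fun i a : Fin p => A a (N + (i : ℕ)) with hM₀
  set φ : (Fin p → Polynomial ℝ) →ₗ[Polynomial ℝ] Polynomial ℝ :=
    { toFun := fun v => (M₀.updateRow ⟨0, hp⟩ v).det
      map_add' := fun u v => Matrix.det_updateRow_add M₀ ⟨0, hp⟩ u v
      map_smul' := fun c v => Matrix.det_updateRow_smul M₀ ⟨0, hp⟩ c v } with hφ
  have hQ : ∀ m, Qp p A m N = φ (fun a => A a m) := fun m => Qp_eq p hp A m N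
  have key : (fun a => X * A a n) = (if n = 0 then (0 : Fin p → Polynomial ℝ)
      else fun a => A a (n - 1)) + ∑ i ∈ Finset.range (p + 1),
        C (T (n + i) n) • (fun a => A a (n + i)) := by
    funext a
    rw [← hArec a n]
    simp only [Pi.add_apply, Finset.sum_apply, Pi.smul_apply, smul_eq_mul]
    congr 1
    split <;> simp
  have : φ (fun a => X * A a n) = X * Qp p A n N := by
    have : (fun a => X * A a n) = (X : Polynomial ℝ) • (fun a => A a n) := by
      funext a; simp [smul_eq_mul]
    rw [this, map_smul, smul_eq_mul, ← hQ]
  rw [← this, key, map_add, map_sum]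
  congr 1
  · split
    · simp
    · rw [hQ]
  · refine Finset.sum_congr rfl ?_
    intro i _
    rw [map_smul, smul_eq_mul, ← hQ]

lemma sumB (p : ℕ) (hp : 1 ≤ p) (T : ℕ → ℕ → ℝ)
    (hT1 : ∀ n, T n (n + 1) = 1)
    (hTsup : ∀ n m, n + 1 < m → T n m = 0)
    (hTsub : ∀ n m, m + p < n → T n m = 0)
    (N : ℕ) (x : ℝ) (c : ℕ → ℝ)
    (hrec : ∀ n, x * c n = c (n + 1) + T n n * c n
      + ∑ j ∈ Finset.Icc 1 p, (if j ≤ n then T n (n - j) * c (n - j) else 0))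
    (hcN1 : c (N + 1) = 0) (n : ℕ) (hn : n ≤ N) :
    ∑ m ∈ Finset.range (N + 1), T n m * c m = x * c n := by
  have extra : T n (N + 1) * c (N + 1) = 0 := by
    rcases eq_or_lt_of_le hn with h | h
    · rw [hcN1]; ring
    · rw [hTsup n (N + 1) (by omega)]; ring
  have step1 : ∑ m ∈ Finset.range (N + 1), T n m * c m
      = ∑ m ∈ Finset.range (N + 2), T n m * c m := by
    rw [Finset.sum_range_succ _ (N + 1), extra, add_zero]
  have step2 : ∑ m ∈ Finset.range (N + 2), T n m * c m
      = ∑ m ∈ Finset.range (n + 2), T n m * c m := by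
    symm
    apply Finset.sum_subset (Finset.range_subset_range.2 (by omega))
    intro m _ hm
    rw [Finset.mem_range, not_lt] at hm
    rw [hTsup n m (by omega), zero_mul]
  have step3 : ∑ m ∈ Finset.range (n + 2), T n m * c m
      = c (n + 1) + ∑ m ∈ Finset.range (n + 1), T n m * c m := by
    rw [Finset.sum_range_succ _ (n + 1), hT1 n]
    ring
  have step4 : ∑ m ∈ Finset.range (n + 1), T n m * c m
      = T n n * c n + ∑ j ∈ Finset.range n, T n (n - (j + 1)) * c (n - (j + 1)) := by
    rw [← Finset.sum_range_reflect (fun m => T n m * c m) (n + 1),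
      Finset.sum_range_succ' (fun j => T n (n + 1 - 1 - j) * c (n + 1 - 1 - j)) n]
    simp only [Nat.add_sub_cancel, Nat.sub_zero]
    rw [add_comm]
  have lhs_eq : ∑ j ∈ Finset.range n, T n (n - (j + 1)) * c (n - (j + 1))
      = ∑ j ∈ Finset.Icc 1 n, T n (n - j) * c (n - j) := by
    rw [← Finset.Ico_add_one_right_eq_Icc, Finset.sum_Ico_eq_sum_range]
    have h1 : n + 1 - 1 = n := rfl
    rw [h1]
    exact Finset.sum_congr rfl (fun j _ => by congr 2 <;> omega)
  have e1 : ∑ j ∈ Finset.Icc 1 n, T n (n - j) * c (n - j)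
      = ∑ j ∈ Finset.Icc 1 (max n p), (if j ≤ n then T n (n - j) * c (n - j) else 0) := by
    rw [show (∑ j ∈ Finset.Icc 1 n, T n (n - j) * c (n - j))
        = ∑ j ∈ Finset.Icc 1 n, (if j ≤ n then T n (n - j) * c (n - j) else 0) from
      Finset.sum_congr rfl (fun j hj => by
        rw [Finset.mem_Icc] at hj; rw [if_pos hj.2])]
    apply Finset.sum_subset (Finset.Icc_subset_Icc_right (le_max_left n p))
    intro j hjq hj
    rw [Finset.mem_Icc] at hjq hj
    rw [if_neg (by omega)]
  have e2 : ∑ j ∈ Finset.Icc 1 p, (if j ≤ n then T n (n - j) * c (n - j) else 0)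
      = ∑ j ∈ Finset.Icc 1 (max n p), (if j ≤ n then T n (n - j) * c (n - j) else 0) := by
    apply Finset.sum_subset (Finset.Icc_subset_Icc_right (le_max_right n p))
    intro j hjq hj
    rw [Finset.mem_Icc] at hjq hj
    by_cases hjn : j ≤ n
    · rw [if_pos hjn, hTsub n (n - j) (by omega), zero_mul]
    · rw [if_neg hjn]
  rw [step1, step2, step3, step4, lhs_eq, e1, ← e2, hrec n]
  ring

lemma sumA (p : ℕ) (hp : 1 ≤ p) (T : ℕ → ℕ → ℝ)
    (hT1 : ∀ n, T n (n + 1) = 1)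
    (hTsup : ∀ n m, n + 1 < m → T n m = 0)
    (hTsub : ∀ n m, m + p < n → T n m = 0)
    (N : ℕ) (x : ℝ) (a : ℕ → ℝ)
    (hrec : ∀ n, x * a n = (if n = 0 then 0 else a (n - 1))
      + ∑ i ∈ Finset.range (p + 1), T (n + i) n * a (n + i))
    (hvan : ∀ m, N + 1 ≤ m → m ≤ N + p → a m = 0) (n : ℕ) (hn : n ≤ N) :
    ∑ m ∈ Finset.range (N + 1), a m * T m n = x * a n := by
  have step1 : ∑ m ∈ Finset.range (N + 1), a m * T m n
      = ∑ m ∈ Finset.range (N + p + 1), a m * T m n := by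
    apply Finset.sum_subset (Finset.range_subset_range.2 (by omega))
    intro m hm hm'
    rw [Finset.mem_range, not_lt] at hm'
    rw [Finset.mem_range] at hm
    rw [hvan m (by omega) (by omega), zero_mul]
  rcases Nat.eq_zero_or_pos n with h0 | h0
  · subst h0
    have step2 : ∑ m ∈ Finset.range (N + p + 1), a m * T m 0
        = ∑ m ∈ Finset.range (p + 1), a m * T m 0 := by
      symm
      apply Finset.sum_subset (Finset.range_subset_range.2 (by omega))
      intro m _ hm'
      rw [Finset.mem_range, not_lt] at hm'
      rw [hTsub m 0 (by omega), mul_zero]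
    rw [step1, step2, hrec 0]
    simp only [↓reduceIte, zero_add, Nat.zero_add]
    exact Finset.sum_congr rfl (fun i _ => by ring)
  · have himg : ∑ m ∈ Finset.range (N + p + 1), a m * T m n
        = ∑ i ∈ Finset.range (p + 2), a (n - 1 + i) * T (n - 1 + i) n := by
      have hinj : ∀ u ∈ Finset.range (p + 2), ∀ v ∈ Finset.range (p + 2),
          n - 1 + u = n - 1 + v → u = v := by intro u _ v _ h; omega
      have h1 : ∑ m ∈ (Finset.range (p + 2)).image (fun i => n - 1 + i), a m * T m n
          = ∑ i ∈ Finset.range (p + 2), a (n - 1 + i) * T (n - 1 + i) n :=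
        Finset.sum_image hinj
      rw [← h1]
      symm
      apply Finset.sum_subset
      · intro m hm
        simp only [Finset.mem_image, Finset.mem_range] at hm ⊢
        obtain ⟨i, hi, rfl⟩ := hm
        omega
      · intro m hm hm'
        simp only [Finset.mem_image, Finset.mem_range] at hm hm'
        push_neg at hm'
        have hout : m + 1 < n ∨ n + p < m := by
          by_contra hcon
          push_neg at hcon
          exact absurd (by omega : n - 1 + (m - (n - 1)) = m) (hm' _ (by omega))
        have : T m n = 0 := by
          rcases hout with h | h
          · exact hTsup m n h
          · exact hTsub m n (by omega)
        rw [this, mul_zero]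
    have hsplit : ∑ i ∈ Finset.range (p + 2), a (n - 1 + i) * T (n - 1 + i) n
        = a (n - 1) * T (n - 1) n + ∑ i ∈ Finset.range (p + 1), a (n + i) * T (n + i) n := by
      rw [Finset.sum_range_succ' (fun i => a (n - 1 + i) * T (n - 1 + i) n) (p + 1)]
      simp only [Nat.add_zero]
      rw [add_comm]
      congr 1
      exact Finset.sum_congr rfl (fun i _ => by congr 2 <;> omega)
    have hT1' : T (n - 1) n = 1 := by
      have h2 := hT1 (n - 1)
      rwa [show n - 1 + 1 = n from by omega] at h2
    rw [step1, himg, hsplit, hT1', mul_one, hrec n, if_neg (by omega)]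
    congr 1
    exact Finset.sum_congr rfl (fun i _ => by ring)

end helperLemmas

theorem stmt_6
    (p : ℕ) (hp : 1 ≤ p)
    (T : ℕ → ℕ → ℝ)
    (hT1 : ∀ n, T n (n + 1) = 1)
    (hTsup : ∀ n m, n + 1 < m → T n m = 0)
    (hTsub : ∀ n m, m + p < n → T n m = 0)
    (hTlow : ∀ n, p ≤ n → T n (n - p) ≠ 0)
    (B : ℕ → Polynomial ℝ)
    (hB0 : B 0 = 1)
    (hBrec : ∀ n, B (n + 1) = (X - C (T n n)) * B n
      - ∑ j ∈ Finset.Icc 1 p, (if j ≤ n then C (T n (n - j)) * B (n - j) else 0))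
    (A : Fin p → ℕ → Polynomial ℝ)
    (hAconst : ∀ a : Fin p, ∀ j < p, ∃ c : ℝ, A a j = C c)
    (hAzero : ∀ a : Fin p, ∀ j : ℕ, j < (a : ℕ) → A a j = 0)
    (hAone : ∀ a : Fin p, A a (a : ℕ) = 1)
    (hArec : ∀ a : Fin p, ∀ n : ℕ,
      (if n = 0 then 0 else A a (n - 1))
        + ∑ i ∈ Finset.range (p + 1), C (T (n + i) n) * A a (n + i) = X * A a n)
    (N : ℕ) (lam : Fin (N + 1) → ℝ)
    (hroots : ∀ k, eval (lam k) (B (N + 1)) = 0)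
    (hanti : StrictAnti lam)
    (hsimple : ∀ k, eval (lam k) (derivative (B (N + 1))) ≠ 0)
    (hden : ∀ k : Fin (N + 1), ∑ l ∈ Finset.range (N + 1),
      eval (lam k) (Qp p A l N) * eval (lam k) (B l) ≠ 0) :
    calU B N lam * calW p A B N lam = 1 ∧
    calW p A B N lam * calU B N lam = 1 ∧
    ∀ n : ℕ, calU B N lam * (Matrix.diagonal lam) ^ n * calW p A B N lam
      = (truncM T N) ^ n := by
  classical
  have hqrec := Qp_rec p hp T A hArec N
  have hqvanN : ∀ m, N + 1 ≤ m → m < N + p → Qp p A m N = 0 := by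
    intro m h1 h2
    rw [show m = N + (m - N) from by omega]
    exact Qp_van p hp A N (m - N) (by omega) (by omega)
  -- constant c = T (N+p) N is nonzero
  have hc : T (N + p) N ≠ 0 := by
    have h := hTlow (N + p) (by omega)
    rwa [Nat.add_sub_cancel] at h
  -- identity I1
  have hI1 : Qp p A N N * B (N + 1)
      = C (T (N + p) N) * Qp p A (N + p) N * B N := by
    have h := CDlem p hp T B hBrec N X (fun n => Qp p A n N) hqrec hqvanN
    rw [sub_self, zero_mul] at h
    linear_combination h
  -- evaluated recursion for q
  have haRrec : ∀ (k : Fin (N + 1)) (n : ℕ),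
      lam k * eval (lam k) (Qp p A n N)
        = (if n = 0 then 0 else eval (lam k) (Qp p A (n - 1) N))
          + ∑ i ∈ Finset.range (p + 1), T (n + i) n * eval (lam k) (Qp p A (n + i) N) := by
    intro k n
    have h := congrArg (eval (lam k)) (hqrec n)
    simpa [apply_ite (eval (lam k)), eval_finset_sum] using h
  -- identity I2 (one variable evaluated, other polynomial)
  have hI2 : ∀ k : Fin (N + 1),
      (C (lam k) - X) * (∑ n ∈ Finset.range (N + 1), C (eval (lam k) (Qp p A n N)) * B n)
        = C (T (N + p) N) * C (eval (lam k) (Qp p A (N + p) N)) * B N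
          - C (eval (lam k) (Qp p A N N)) * B (N + 1) := by
    intro k
    refine CDlem p hp T B hBrec N (C (lam k)) (fun m => C (eval (lam k) (Qp p A m N))) ?_ ?_
    · intro n
      rw [← C_mul, haRrec k n, map_add]
      congr 1
      · rw [apply_ite C, map_zero]
      · rw [map_sum]
        exact Finset.sum_congr rfl (fun i _ => by rw [C_mul])
    · intro m h1 h2
      simp only [hqvanN m h1 h2, eval_zero, map_zero]
  -- Claim: q_{N+p}(lam k) = 0
  have hClaim : ∀ k : Fin (N + 1), eval (lam k) (Qp p A (N + p) N) = 0 := by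
    intro k
    by_contra hq0
    have h0 := congrArg (eval (lam k)) (hI2 k)
    simp only [eval_mul, eval_sub, eval_add, eval_C, eval_X, sub_self, zero_mul,
      hroots k, mul_zero, sub_zero] at h0
    -- h0 : 0 = T (N+p) N * eval (Qp (N+p)) * eval (B N)
    have hBN : eval (lam k) (B N) = 0 := by
      rcases mul_eq_zero.mp h0.symm with h | h
      · rcases mul_eq_zero.mp h with h' | h'
        · exact absurd h' hc
        · exact absurd h' hq0
      · exact h
    obtain ⟨R, hR⟩ : (X - C (lam k)) ∣ B (N + 1) := dvd_iff_isRoot.mpr (hroots k)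
    obtain ⟨G, hG⟩ : (X - C (lam k)) ∣ B N := dvd_iff_isRoot.mpr hBN
    have hXne : (X - C (lam k)) ≠ (0 : Polynomial ℝ) := X_sub_C_ne_zero _
    have hI1c : Qp p A N N * R = C (T (N + p) N) * Qp p A (N + p) N * G := by
      apply mul_left_cancel₀ hXne
      calc (X - C (lam k)) * (Qp p A N N * R) = Qp p A N N * B (N + 1) := by rw [hR]; ring
        _ = C (T (N + p) N) * Qp p A (N + p) N * B N := hI1
        _ = (X - C (lam k)) * (C (T (N + p) N) * Qp p A (N + p) N * G) := by rw [hG]; ring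
    have hI2c : (∑ n ∈ Finset.range (N + 1), C (eval (lam k) (Qp p A n N)) * B n)
        = C (eval (lam k) (Qp p A N N)) * R
          - C (T (N + p) N) * C (eval (lam k) (Qp p A (N + p) N)) * G := by
      apply mul_left_cancel₀ hXne
      calc (X - C (lam k)) * (∑ n ∈ Finset.range (N + 1), C (eval (lam k) (Qp p A n N)) * B n)
          = -((C (lam k) - X) * (∑ n ∈ Finset.range (N + 1), C (eval (lam k) (Qp p A n N)) * B n)) := by
            ring
        _ = -(C (T (N + p) N) * C (eval (lam k) (Qp p A (N + p) N)) * B N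
            - C (eval (lam k) (Qp p A N N)) * B (N + 1)) := by rw [hI2 k]
        _ = (X - C (lam k)) * (C (eval (lam k) (Qp p A N N)) * R
            - C (T (N + p) N) * C (eval (lam k) (Qp p A (N + p) N)) * G) := by
            rw [hR, hG]; ring
    have hEI1 : eval (lam k) (Qp p A N N) * eval (lam k) R
        = T (N + p) N * eval (lam k) (Qp p A (N + p) N) * eval (lam k) G := by
      have h := congrArg (eval (lam k)) hI1c
      simpa using h
    have hS : (∑ l ∈ Finset.range (N + 1),
        eval (lam k) (Qp p A l N) * eval (lam k) (B l)) = 0 := by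
      have h := congrArg (eval (lam k)) hI2c
      simp only [eval_finset_sum, eval_mul, eval_sub, eval_C] at h
      rw [h, hEI1]
      ring
    exact hden k hS
  -- evaluated recursion for B
  have hBev : ∀ (k : Fin (N + 1)) (n : ℕ),
      lam k * eval (lam k) (B n) = eval (lam k) (B (n + 1)) + T n n * eval (lam k) (B n)
        + ∑ j ∈ Finset.Icc 1 p, (if j ≤ n then T n (n - j) * eval (lam k) (B (n - j)) else 0) := by
    intro k n
    have h := congrArg (eval (lam k)) (hBrec n)
    simp only [eval_sub, eval_mul, eval_add, eval_X, eval_C, eval_finset_sum,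
      apply_ite (eval (lam k)), eval_zero] at h
    linear_combination -h
  -- F1 : T U = U D
  have hTU : truncM T N * calU B N lam = calU B N lam * Matrix.diagonal lam := by
    ext n k
    rw [Matrix.mul_apply, Matrix.mul_diagonal]
    simp only [truncM, calU, Matrix.of_apply]
    rw [Fin.sum_univ_eq_sum_range (fun m => T (n : ℕ) m * eval (lam k) (B m)) (N + 1)]
    rw [sumB p hp T hT1 hTsup hTsub N (lam k) (fun m => eval (lam k) (B m))
      (hBev k) (hroots k) (n : ℕ) (Fin.is_le n)]
    ring
  -- vanishing of evaluated q above N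
  have hvanA : ∀ (k : Fin (N + 1)) (m : ℕ), N + 1 ≤ m → m ≤ N + p →
      eval (lam k) (Qp p A m N) = 0 := by
    intro k m h1 h2
    rcases eq_or_lt_of_le h2 with h | h
    · rw [h]; exact hClaim k
    · rw [hqvanN m h1 h, eval_zero]
  -- F2 : V T = D V
  set V : Matrix (Fin (N + 1)) (Fin (N + 1)) ℝ :=
    Matrix.of (fun k n : Fin (N + 1) => eval (lam k) (Qp p A (n : ℕ) N)) with hV
  have hVT : V * truncM T N = Matrix.diagonal lam * V := by
    ext k n
    rw [Matrix.mul_apply, Matrix.diagonal_mul]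
    simp only [hV, truncM, Matrix.of_apply]
    rw [Fin.sum_univ_eq_sum_range (fun m => eval (lam k) (Qp p A m N) * T m (n : ℕ)) (N + 1)]
    exact sumA p hp T hT1 hTsup hTsub N (lam k) (fun m => eval (lam k) (Qp p A m N))
      (haRrec k) (hvanA k) (n : ℕ) (Fin.is_le n)
  set Sf : Fin (N + 1) → ℝ :=
    fun k => ∑ l ∈ Finset.range (N + 1),
      eval (lam k) (Qp p A l N) * eval (lam k) (B l) with hSf
  have hVU : V * calU B N lam = Matrix.diagonal Sf := by
    have hcomm : Matrix.diagonal lam * (V * calU B N lam)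
        = (V * calU B N lam) * Matrix.diagonal lam := by
      calc Matrix.diagonal lam * (V * calU B N lam)
          = (Matrix.diagonal lam * V) * calU B N lam := (Matrix.mul_assoc _ _ _).symm
        _ = (V * truncM T N) * calU B N lam := by rw [hVT]
        _ = V * (truncM T N * calU B N lam) := Matrix.mul_assoc _ _ _
        _ = V * (calU B N lam * Matrix.diagonal lam) := by rw [hTU]
        _ = (V * calU B N lam) * Matrix.diagonal lam := (Matrix.mul_assoc _ _ _).symm
    ext k k'
    by_cases hkk : k = k'
    · subst hkk
      rw [Matrix.diagonal_apply_eq, Matrix.mul_apply]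
      simp only [hV, calU, Matrix.of_apply, hSf]
      exact Fin.sum_univ_eq_sum_range
        (fun l => eval (lam k) (Qp p A l N) * eval (lam k) (B l)) (N + 1)
    · rw [Matrix.diagonal_apply_ne _ hkk]
      have h : (Matrix.diagonal lam * (V * calU B N lam)) k k'
          = ((V * calU B N lam) * Matrix.diagonal lam) k k' := by rw [hcomm]
      rw [Matrix.diagonal_mul, Matrix.mul_diagonal] at h
      have hne : lam k ≠ lam k' := fun he => hkk (hanti.injective he)
      have hz : (lam k - lam k') * ((V * calU B N lam) k k') = 0 := by
        linear_combination h
      exact (mul_eq_zero.mp hz).resolve_left (sub_ne_zero.mpr hne)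
  have hW : calW p A B N lam = Matrix.diagonal (fun k => (Sf k)⁻¹) * V := by
    ext k n
    rw [Matrix.diagonal_mul]
    simp only [calW, wfun, Matrix.of_apply, hV, hSf]
    rw [div_eq_inv_mul]
  have hWU : calW p A B N lam * calU B N lam = 1 := by
    rw [hW, Matrix.mul_assoc, hVU, Matrix.diagonal_mul_diagonal]
    have h1 : (fun k => (Sf k)⁻¹ * Sf k) = fun _ => (1 : ℝ) := by
      funext k
      exact inv_mul_cancel₀ (by simp only [hSf]; exact hden k)
    rw [h1, Matrix.diagonal_one]
  have hUW : calU B N lam * calW p A B N lam = 1 := mul_eq_one_comm.mp hWU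
  have hUDW : calU B N lam * Matrix.diagonal lam * calW p A B N lam = truncM T N := by
    rw [← hTU, Matrix.mul_assoc, hUW, mul_one]
  refine ⟨hUW, hWU, ?_⟩
  intro n
  induction n with
  | zero => simpa [pow_zero, mul_one] using hUW
  | succ n ih =>
      have key : calU B N lam * (Matrix.diagonal lam) ^ (n + 1) * calW p A B N lam
          = (calU B N lam * (Matrix.diagonal lam) ^ n * calW p A B N lam)
            * (calU B N lam * Matrix.diagonal lam * calW p A B N lam) := by
        rw [pow_succ]
        simp only [Matrix.mul_assoc]
        congr 1
        congr 1
        rw [← Matrix.mul_assoc, hWU, Matrix.one_mul]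
      rw [key, ih, hUDW, pow_succ]
end

section
/- (Multiple discrete biorthogonality) Assume B_{N+1} has N+1 simple real zeros λ_1 > ⋯ > λ_{N+1}. Then for all k, l ∈ {0, …, N}: Σ_{j=1}^{N+1} (Σ_{a=1}^{p} A^{(a)}_k(λ_j)·μ_{j,a})·B_l(λ_j) = δ_{k,l}. -/
open Polynomial

noncomputable def nuMat (p : ℕ) (A : Fin p → ℕ → Polynomial ℝ) : Matrix (Fin p) (Fin p) ℝ :=
  Matrix.of fun j a : Fin p => (A a (j : ℕ)).coeff 0

noncomputable def mu (p : ℕ) (A : Fin p → ℕ → Polynomial ℝ) (B : ℕ → Polynomial ℝ)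
    (N : ℕ) (lam : Fin (N + 1) → ℝ) (k : Fin (N + 1)) (a : Fin p) : ℝ :=
  ∑ b : Fin p, (nuMat p A)⁻¹ a b * wfun p A B N lam k (b : ℕ)

theorem stmt_7
    (p : ℕ) (hp : 1 ≤ p)
    (T : ℕ → ℕ → ℝ)
    (hT1 : ∀ n, T n (n + 1) = 1)
    (hTsup : ∀ n m, n + 1 < m → T n m = 0)
    (hTsub : ∀ n m, m + p < n → T n m = 0)
    (hTlow : ∀ n, p ≤ n → T n (n - p) ≠ 0)
    (B : ℕ → Polynomial ℝ)
    (hB0 : B 0 = 1)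
    (hBrec : ∀ n, B (n + 1) = (X - C (T n n)) * B n
      - ∑ j ∈ Finset.Icc 1 p, (if j ≤ n then C (T n (n - j)) * B (n - j) else 0))
    (A : Fin p → ℕ → Polynomial ℝ)
    (hAconst : ∀ a : Fin p, ∀ j < p, ∃ c : ℝ, A a j = C c)
    (hAzero : ∀ a : Fin p, ∀ j : ℕ, j < (a : ℕ) → A a j = 0)
    (hAone : ∀ a : Fin p, A a (a : ℕ) = 1)
    (hArec : ∀ a : Fin p, ∀ n : ℕ,
      (if n = 0 then 0 else A a (n - 1))
        + ∑ i ∈ Finset.range (p + 1), C (T (n + i) n) * A a (n + i) = X * A a n)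
    (N : ℕ) (lam : Fin (N + 1) → ℝ)
    (hroots : ∀ k, eval (lam k) (B (N + 1)) = 0)
    (hanti : StrictAnti lam)
    (hsimple : ∀ k, eval (lam k) (derivative (B (N + 1))) ≠ 0)
    (hden : ∀ k : Fin (N + 1), ∑ l ∈ Finset.range (N + 1),
      eval (lam k) (Qp p A l N) * eval (lam k) (B l) ≠ 0) :
    ∀ k l : ℕ, k ≤ N → l ≤ N →
      ∑ j : Fin (N + 1),
          (∑ a : Fin p, eval (lam j) (A a k) * mu p A B N lam j a) * eval (lam j) (B l)
        = if k = l then (1 : ℝ) else 0 := by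
  classical
  -- notation
  set Bv : ℝ → ℕ → ℝ := fun x n => eval x (B n) with hBv
  set Qv : ℝ → ℕ → ℝ := fun y n => eval y (Qp p A n N) with hQv
  have hBvdef : ∀ (x : ℝ) (n : ℕ), eval x (B n) = Bv x n := fun _ _ => rfl
  have hQvdef : ∀ (y : ℝ) (n : ℕ), eval y (Qp p A n N) = Qv y n := fun _ _ => rfl
  have hp0 : 0 < p := hp
  set z : Fin p := ⟨0, hp0⟩ with hz
  set Mm : ℕ → Matrix (Fin p) (Fin p) (Polynomial ℝ) :=
    fun n => Matrix.of fun i a : Fin p => if (i : ℕ) = 0 then A a n else A a (N + (i : ℕ)) with hMm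
  have hQdef : ∀ n, Qp p A n N = (Mm n).det := fun n => rfl
  set cpoly : Fin p → Polynomial ℝ := fun b => (Mm 0).adjugate b z with hcpoly
  -- Q is a fixed linear combination of the A's
  have hQexp : ∀ n, Qp p A n N = ∑ b : Fin p, A b n * cpoly b := by
    intro n
    have hadj : ∀ b, (Mm n).adjugate b z = cpoly b := by
      intro b
      show (Mm n).adjugate b z = (Mm 0).adjugate b z
      rw [Matrix.adjugate_apply, Matrix.adjugate_apply]
      congr 1
      funext i a
      by_cases hi : i = z
      · subst hi
        rw [Matrix.updateRow_self, Matrix.updateRow_self]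
      · rw [Matrix.updateRow_ne hi, Matrix.updateRow_ne hi]
        have hi0 : (i : ℕ) ≠ 0 := fun h => hi (Fin.ext h)
        simp only [hMm, Matrix.of_apply, if_neg hi0]
    have h1 := Matrix.det_eq_sum_mul_adjugate_row (Mm n) z
    rw [hQdef n, h1]
    refine Finset.sum_congr rfl fun b _ => ?_
    rw [hadj b]
    have : (Mm n) z b = A b n := by simp [hMm, hz]
    rw [this]
  -- zero determinants from repeated rows
  have hQzero : ∀ i, 0 < i → i < p → Qp p A (N + i) N = 0 := by
    intro i hi1 hi2
    rw [hQdef]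
    refine Matrix.det_zero_of_row_eq (i := z) (j := (⟨i, hi2⟩ : Fin p)) ?_ ?_
    · intro h
      have := congrArg Fin.val h
      simp [hz] at this
      omega
    · funext a
      have hi0 : i ≠ 0 := by omega
      simp [hMm, hz, hi0]
  have hQrecP : ∀ n : ℕ, (if n = 0 then 0 else Qp p A (n - 1) N)
      + ∑ i ∈ Finset.range (p + 1), C (T (n + i) n) * Qp p A (n + i) N = X * Qp p A n N := by
    intro n
    have e1 : (if n = 0 then (0 : Polynomial ℝ) else Qp p A (n - 1) N)
        = ∑ b : Fin p, (if n = 0 then 0 else A b (n - 1)) * cpoly b := by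
      split
      · simp
      · exact hQexp _
    have e2 : ∀ i : ℕ, C (T (n + i) n) * Qp p A (n + i) N
        = ∑ b : Fin p, (C (T (n + i) n) * A b (n + i)) * cpoly b := by
      intro i
      rw [hQexp, Finset.mul_sum]
      exact Finset.sum_congr rfl fun b _ => by ring
    rw [e1, hQexp n]
    simp only [e2]
    rw [Finset.sum_comm, ← Finset.sum_add_distrib, Finset.mul_sum]
    refine Finset.sum_congr rfl fun b _ => ?_
    rw [← Finset.sum_mul, ← add_mul, hArec b n]
    ring
  have hQrec : ∀ (y : ℝ) (n : ℕ),
      (if n = 0 then 0 else Qv y (n - 1)) + ∑ i ∈ Finset.range (p + 1), T (n + i) n * Qv y (n + i)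
        = y * Qv y n := by
    intro y n
    have h := congrArg (eval y) (hQrecP n)
    simp only [eval_add, eval_mul, eval_finset_sum, eval_C, eval_X, apply_ite (eval y), eval_zero] at h
    exact h
  -- recurrence for B, evaluated
  have hBrecv : ∀ (x : ℝ) (n : ℕ),
      x * Bv x n = Bv x (n + 1) + T n n * Bv x n
        + ∑ j ∈ Finset.Icc 1 p, (if j ≤ n then T n (n - j) * Bv x (n - j) else 0) := by
    intro x n
    have h := congrArg (eval x) (hBrec n)
    simp only [eval_sub, eval_mul, eval_finset_sum, eval_C, eval_X, apply_ite (eval x), eval_zero,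
      hBvdef] at h
    rw [h]
    ring
  -- row sums
  have hrow : ∀ (x : ℝ) (n M : ℕ), n + 2 ≤ M →
      ∑ m ∈ Finset.range M, T n m * Bv x m = x * Bv x n := by
    intro x n M hM
    have hsub : Finset.range (n + 2) ⊆ Finset.range M := Finset.range_subset_range.mpr hM
    have hzero : ∀ m ∈ Finset.range M, m ∉ Finset.range (n + 2) → T n m * Bv x m = 0 := by
      intro m _ hm
      rw [Finset.mem_range, not_lt] at hm
      rw [hTsup n m (by omega), zero_mul]
    rw [← Finset.sum_subset hsub hzero, Finset.sum_range_succ, Finset.sum_range_succ,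
      hT1 n, one_mul, hBrecv x n]
    have hre : ∑ j ∈ Finset.Icc 1 p, (if j ≤ n then T n (n - j) * Bv x (n - j) else 0)
        = ∑ m ∈ Finset.range n, T n m * Bv x m := by
      rw [← Finset.sum_filter]
      have h2 : ∑ m ∈ (Finset.range n).filter (fun m => n ≤ m + p), T n m * Bv x m
          = ∑ m ∈ Finset.range n, T n m * Bv x m := by
        refine Finset.sum_filter_of_ne fun m hm hf => ?_
        by_contra hc
        exact hf (by rw [hTsub n m (by omega), zero_mul])
      rw [← h2]
      refine Finset.sum_nbij' (i := fun j => n - j) (j := fun m => n - m) ?_ ?_ ?_ ?_ ?_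
      · intro a ha
        simp only [Finset.mem_filter, Finset.mem_Icc, Finset.mem_range] at ha ⊢
        omega
      · intro a ha
        simp only [Finset.mem_filter, Finset.mem_Icc, Finset.mem_range] at ha ⊢
        omega
      · intro a ha
        simp only [Finset.mem_filter, Finset.mem_Icc, Finset.mem_range] at ha ⊢
        omega
      · intro a ha
        simp only [Finset.mem_filter, Finset.mem_Icc, Finset.mem_range] at ha ⊢
        omega
      · intro a ha
        rfl
    rw [hre]
    ring
  -- column sums
  have hcol : ∀ (y : ℝ) (m M : ℕ), m + p + 1 ≤ M →
      ∑ n ∈ Finset.range M, Qv y n * T n m = y * Qv y m := by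
    intro y m M hM
    rw [← hQrec y m]
    rw [Finset.range_eq_Ico, ← Finset.sum_Ico_consecutive _ (Nat.zero_le m) (by omega : m ≤ M)]
    congr 1
    · rw [← Finset.range_eq_Ico]
      rcases Nat.eq_zero_or_pos m with hm | hm
      · subst hm; simp
      · rw [if_neg (by omega)]
        rw [Finset.sum_eq_single (m - 1)]
        · have ht : T (m - 1) m = 1 := by
            have := hT1 (m - 1)
            rwa [Nat.sub_add_cancel hm] at this
          rw [ht, mul_one]
        · intro n hn hne
          rw [Finset.mem_range] at hn
          rw [hTsup n m (by omega), mul_zero]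
        · intro h
          exact absurd (Finset.mem_range.mpr (by omega)) h
    · have hsub : Finset.Ico m (m + p + 1) ⊆ Finset.Ico m M :=
        Finset.Ico_subset_Ico le_rfl (by omega)
      have hext : ∀ n ∈ Finset.Ico m M, n ∉ Finset.Ico m (m + p + 1) → Qv y n * T n m = 0 := by
        intro n hn hn2
        rw [Finset.mem_Ico] at hn hn2
        push_neg at hn2
        rw [hTsub n m (by omega), mul_zero]
      rw [← Finset.sum_subset hsub hext, Finset.sum_Ico_eq_sum_range]
      have hred : m + p + 1 - m = p + 1 := by omega
      rw [hred]
      exact Finset.sum_congr rfl fun i _ => mul_comm _ _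
  -- Christoffel-Darboux type identity
  have hCD : ∀ x y : ℝ,
      (x - y) * ∑ n ∈ Finset.range (N + 1), Qv y n * Bv x n
        = Qv y N * Bv x (N + 1) - T (N + p) N * Qv y (N + p) * Bv x N := by
    intro x y
    have hD1 : ∑ n ∈ Finset.range (N + 1), ∑ m ∈ Finset.range (N + 1), Qv y n * (T n m * Bv x m)
        = x * (∑ n ∈ Finset.range (N + 1), Qv y n * Bv x n) - Qv y N * Bv x (N + 1) := by
      have hinner : ∀ n ∈ Finset.range (N + 1),
          ∑ m ∈ Finset.range (N + 1), Qv y n * (T n m * Bv x m)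
          = Qv y n * (x * Bv x n) - Qv y n * (T n (N + 1) * Bv x (N + 1)) := by
        intro n hn
        rw [Finset.mem_range] at hn
        rw [← Finset.mul_sum]
        have h1 : ∑ m ∈ Finset.range (N + 2), T n m * Bv x m = x * Bv x n :=
          hrow x n (N + 2) (by omega)
        rw [Finset.sum_range_succ] at h1
        have h2 : ∑ m ∈ Finset.range (N + 1), T n m * Bv x m
            = x * Bv x n - T n (N + 1) * Bv x (N + 1) := by linarith
        rw [h2]
        ring
      rw [Finset.sum_congr rfl hinner, Finset.sum_sub_distrib]
      congr 1
      · rw [Finset.mul_sum]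
        exact Finset.sum_congr rfl fun n _ => by ring
      · rw [Finset.sum_eq_single N]
        · rw [hT1 N]
          ring
        · intro n hn hne
          rw [Finset.mem_range] at hn
          rw [hTsup n (N + 1) (by omega)]
          ring
        · intro h
          exact absurd (Finset.mem_range.mpr (by omega)) h
    have hD2 : ∑ n ∈ Finset.range (N + 1), ∑ m ∈ Finset.range (N + 1), Qv y n * (T n m * Bv x m)
        = y * (∑ n ∈ Finset.range (N + 1), Qv y n * Bv x n)
          - T (N + p) N * Qv y (N + p) * Bv x N := by
      rw [Finset.sum_comm]
      have hinner : ∀ m ∈ Finset.range (N + 1),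
          ∑ n ∈ Finset.range (N + 1), Qv y n * (T n m * Bv x m)
          = (y * Qv y m) * Bv x m
            - (∑ n ∈ Finset.Ico (N + 1) (N + p + 1), Qv y n * T n m) * Bv x m := by
        intro m hm
        rw [Finset.mem_range] at hm
        have hbig : ∑ n ∈ Finset.range (N + p + 1), Qv y n * T n m = y * Qv y m :=
          hcol y m (N + p + 1) (by omega)
        have hsplit : (∑ n ∈ Finset.Ico 0 (N + 1), Qv y n * T n m)
            + ∑ n ∈ Finset.Ico (N + 1) (N + p + 1), Qv y n * T n m
            = ∑ n ∈ Finset.Ico 0 (N + p + 1), Qv y n * T n m :=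
          Finset.sum_Ico_consecutive _ (by omega) (by omega)
        rw [← Finset.range_eq_Ico, ← Finset.range_eq_Ico] at hsplit
        have hsum1 : ∑ n ∈ Finset.range (N + 1), Qv y n * T n m
            = y * Qv y m - ∑ n ∈ Finset.Ico (N + 1) (N + p + 1), Qv y n * T n m := by
          linarith
        calc ∑ n ∈ Finset.range (N + 1), Qv y n * (T n m * Bv x m)
            = (∑ n ∈ Finset.range (N + 1), Qv y n * T n m) * Bv x m := by
              rw [Finset.sum_mul]
              exact Finset.sum_congr rfl fun n _ => by ring
          _ = _ := by rw [hsum1]; ring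
      rw [Finset.sum_congr rfl hinner, Finset.sum_sub_distrib]
      congr 1
      · rw [Finset.mul_sum]
        exact Finset.sum_congr rfl fun n _ => by ring
      · calc ∑ m ∈ Finset.range (N + 1),
              (∑ n ∈ Finset.Ico (N + 1) (N + p + 1), Qv y n * T n m) * Bv x m
            = ∑ m ∈ Finset.range (N + 1), ∑ n ∈ Finset.Ico (N + 1) (N + p + 1),
                Qv y n * T n m * Bv x m :=
              Finset.sum_congr rfl fun m _ => Finset.sum_mul _ _ _
          _ = ∑ n ∈ Finset.Ico (N + 1) (N + p + 1), ∑ m ∈ Finset.range (N + 1),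
                Qv y n * T n m * Bv x m := Finset.sum_comm
          _ = ∑ m ∈ Finset.range (N + 1), Qv y (N + p) * T (N + p) m * Bv x m := by
              rw [Finset.sum_eq_single (N + p)]
              · intro n hn hne
                rw [Finset.mem_Ico] at hn
                have hq0 : Qv y n = 0 := by
                  have hz0 := hQzero (n - N) (by omega) (by omega)
                  have hnn : N + (n - N) = n := by omega
                  rw [hnn] at hz0
                  rw [← hQvdef, hz0, eval_zero]
                simp [hq0]
              · intro h
                exact absurd (Finset.mem_Ico.mpr ⟨by omega, by omega⟩) h
          _ = T (N + p) N * Qv y (N + p) * Bv x N := by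
              rw [Finset.sum_eq_single N]
              · ring
              · intro m hm hne
                rw [Finset.mem_range] at hm
                rw [hTsub (N + p) m (by omega)]
                ring
              · intro h
                exact absurd (Finset.mem_range.mpr (by omega)) h
    have hcomb := hD1.symm.trans hD2
    linarith [hcomb]
  set den : Fin (N + 1) → ℝ := fun j => ∑ l ∈ Finset.range (N + 1),
      eval (lam j) (Qp p A l N) * eval (lam j) (B l) with hdend
  have hden' : ∀ j, den j ≠ 0 := hden
  have hdenS : ∀ j, den j = ∑ n ∈ Finset.range (N + 1), Qv (lam j) n * Bv (lam j) n := fun j => rfl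
  have hc : T (N + p) N ≠ 0 := by
    have := hTlow (N + p) (by omega)
    simpa using this
  -- vanishing of Q_{N+p} at the nodes
  have hQNp : ∀ j : Fin (N + 1), Qv (lam j) (N + p) = 0 := by
    intro j
    have hroot : Bv (lam j) (N + 1) = 0 := hroots j
    by_cases hBN : Bv (lam j) N = 0
    · exfalso
      have hev : ∀ y : ℝ, eval y (∑ n ∈ Finset.range (N + 1), Qp p A n N * C (Bv (lam j) n))
          = ∑ n ∈ Finset.range (N + 1), Qv y n * Bv (lam j) n := by
        intro y
        rw [eval_finset_sum]
        exact Finset.sum_congr rfl fun n _ => by rw [eval_mul, eval_C, hQvdef]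
      have hzero : ∀ y : ℝ, y ≠ lam j →
          eval y (∑ n ∈ Finset.range (N + 1), Qp p A n N * C (Bv (lam j) n)) = 0 := by
        intro y hy
        have h := hCD (lam j) y
        rw [hroot, hBN] at h
        simp only [mul_zero, sub_zero] at h
        rw [hev y]
        have hne : lam j - y ≠ 0 := sub_ne_zero.mpr (Ne.symm hy)
        exact (mul_eq_zero.mp h).resolve_left hne
      have hSp0 : (∑ n ∈ Finset.range (N + 1), Qp p A n N * C (Bv (lam j) n)) = 0 := by
        apply Polynomial.eq_zero_of_infinite_isRoot
        have hinf : ({lam j}ᶜ : Set ℝ).Infinite :=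
          Set.Finite.infinite_compl (Set.finite_singleton _)
        exact hinf.mono fun y hy => hzero y hy
      have h3 := hev (lam j)
      rw [hSp0, eval_zero] at h3
      refine hden j ?_
      rw [show (∑ l ∈ Finset.range (N + 1), eval (lam j) (Qp p A l N) * eval (lam j) (B l))
          = ∑ n ∈ Finset.range (N + 1), Qv (lam j) n * Bv (lam j) n from
        Finset.sum_congr rfl fun n _ => by rw [hQvdef, hBvdef], ← h3]
    · have h := hCD (lam j) (lam j)
      rw [hroot] at h
      simp only [sub_self, zero_mul, mul_zero, zero_sub] at h
      have h4 : T (N + p) N * Qv (lam j) (N + p) * Bv (lam j) N = 0 := by linarith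
      rcases mul_eq_zero.mp h4 with h1 | h2
      · rcases mul_eq_zero.mp h1 with h5 | h6
        · exact absurd h5 hc
        · exact h6
      · exact absurd h2 hBN
  -- discrete orthogonality
  have horth : ∀ i j : Fin (N + 1), i ≠ j →
      ∑ n ∈ Finset.range (N + 1), Qv (lam j) n * Bv (lam i) n = 0 := by
    intro i j hij
    have h := hCD (lam i) (lam j)
    have hr : Bv (lam i) (N + 1) = 0 := hroots i
    rw [hr, hQNp j] at h
    simp only [mul_zero, zero_mul, sub_zero, zero_sub, neg_zero] at h
    have hne : lam i - lam j ≠ 0 := sub_ne_zero.mpr fun hh => hij (hanti.injective hh)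
    rcases mul_eq_zero.mp h with h1 | h2
    · exact absurd h1 hne
    · exact h2
  -- matrices
  set Pm : Matrix (Fin (N + 1)) (Fin (N + 1)) ℝ :=
    Matrix.of (fun j i : Fin (N + 1) => Qv (lam j) (i : ℕ) / den j) with hPm
  set Vm : Matrix (Fin (N + 1)) (Fin (N + 1)) ℝ :=
    Matrix.of (fun i j : Fin (N + 1) => Bv (lam j) (i : ℕ)) with hVm
  have hPV : Pm * Vm = 1 := by
    ext j i
    rw [Matrix.mul_apply, Matrix.one_apply]
    have hterm : ∀ n : Fin (N + 1), Pm j n * Vm n i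
        = Qv (lam j) (n : ℕ) * Bv (lam i) (n : ℕ) / den j := by
      intro n
      simp only [hPm, hVm, Matrix.of_apply]
      ring
    rw [Finset.sum_congr rfl fun n _ => hterm n, ← Finset.sum_div,
      Fin.sum_univ_eq_sum_range (fun n => Qv (lam j) n * Bv (lam i) n) (N + 1)]
    by_cases hij : j = i
    · subst hij
      rw [if_pos rfl, ← hdenS j]
      exact div_self (hden' j)
    · rw [if_neg hij, horth i j fun h => hij h.symm, zero_div]
  have hVP : Vm * Pm = 1 := mul_eq_one_comm.mp hPV
  have hnuinv : (nuMat p A)⁻¹ * nuMat p A = 1 := by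
    apply Matrix.nonsing_inv_mul
    have hdet : (nuMat p A).det = 1 := by
      rw [Matrix.det_of_lowerTriangular]
      · refine Finset.prod_eq_one fun i _ => ?_
        show (A i (i : ℕ)).coeff 0 = 1
        rw [hAone i, Polynomial.coeff_one]
        simp
      · intro i j hlt
        have hij : i < j := hlt
        show (A j (i : ℕ)).coeff 0 = 0
        rw [hAzero j i hij, Polynomial.coeff_zero]
    rw [hdet]
    exact isUnit_one
  have hinner : ∀ (j : Fin (N + 1)) (k : ℕ),
      ∑ a : Fin p, eval (lam j) (A a k) * mu p A B N lam j a = Qv (lam j) k / den j := by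
    intro j k
    set y := lam j with hy
    have hw : ∀ b : Fin p, wfun p A B N lam j (b : ℕ) = Qv y (b : ℕ) / den j := fun b => rfl
    have hAv : ∀ (c b : Fin p), eval y (A c (b : ℕ)) = nuMat p A b c := by
      intro c b
      obtain ⟨r, hr⟩ := hAconst c (b : ℕ) b.isLt
      show eval y (A c (b : ℕ)) = (A c (b : ℕ)).coeff 0
      rw [hr, eval_C, Polynomial.coeff_C_zero]
    have hQe : ∀ n : ℕ, Qv y n = ∑ c : Fin p, eval y (A c n) * eval y (cpoly c) := by
      intro n
      rw [← hQvdef, hQexp n, eval_finset_sum]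
      exact Finset.sum_congr rfl fun c _ => eval_mul
    have hU : ∑ a : Fin p, eval y (A a k) * ∑ b : Fin p, (nuMat p A)⁻¹ a b * Qv y (b : ℕ)
        = Qv y k := by
      have h1 : ∀ a : Fin p, ∑ b : Fin p, (nuMat p A)⁻¹ a b * Qv y (b : ℕ)
          = ∑ c : Fin p, (if a = c then (1 : ℝ) else 0) * eval y (cpoly c) := by
        intro a
        calc ∑ b : Fin p, (nuMat p A)⁻¹ a b * Qv y (b : ℕ)
            = ∑ b : Fin p, ∑ c : Fin p,
                (nuMat p A)⁻¹ a b * (nuMat p A b c * eval y (cpoly c)) := by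
              refine Finset.sum_congr rfl fun b _ => ?_
              rw [hQe (b : ℕ), Finset.mul_sum]
              refine Finset.sum_congr rfl fun c _ => ?_
              rw [hAv c b]
          _ = ∑ c : Fin p, (∑ b : Fin p, (nuMat p A)⁻¹ a b * nuMat p A b c)
                * eval y (cpoly c) := by
              rw [Finset.sum_comm]
              refine Finset.sum_congr rfl fun c _ => ?_
              rw [Finset.sum_mul]
              exact Finset.sum_congr rfl fun b _ => by ring
          _ = ∑ c : Fin p, (if a = c then (1 : ℝ) else 0) * eval y (cpoly c) := by
              refine Finset.sum_congr rfl fun c _ => ?_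
              congr 1
              rw [← Matrix.mul_apply, hnuinv, Matrix.one_apply]
      calc ∑ a : Fin p, eval y (A a k) * ∑ b : Fin p, (nuMat p A)⁻¹ a b * Qv y (b : ℕ)
          = ∑ a : Fin p, ∑ c : Fin p,
              eval y (A a k) * ((if a = c then (1 : ℝ) else 0) * eval y (cpoly c)) := by
            refine Finset.sum_congr rfl fun a _ => ?_
            rw [h1 a, Finset.mul_sum]
        _ = ∑ a : Fin p, eval y (A a k) * eval y (cpoly a) := by
            refine Finset.sum_congr rfl fun a _ => ?_
            rw [Finset.sum_eq_single a]
            · rw [if_pos rfl, one_mul]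
            · intro c _ hca
              rw [if_neg fun h => hca h.symm, zero_mul, mul_zero]
            · intro h
              exact absurd (Finset.mem_univ a) h
        _ = Qv y k := (hQe k).symm
    calc ∑ a : Fin p, eval y (A a k) * mu p A B N lam j a
        = ∑ a : Fin p, eval y (A a k)
            * ((∑ b : Fin p, (nuMat p A)⁻¹ a b * Qv y (b : ℕ)) / den j) := by
          refine Finset.sum_congr rfl fun a _ => ?_
          congr 1
          rw [show mu p A B N lam j a
              = ∑ b : Fin p, (nuMat p A)⁻¹ a b * wfun p A B N lam j (b : ℕ) from rfl,
            Finset.sum_div]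
          refine Finset.sum_congr rfl fun b _ => ?_
          rw [hw b, mul_div_assoc]
      _ = (∑ a : Fin p, eval y (A a k) * ∑ b : Fin p, (nuMat p A)⁻¹ a b * Qv y (b : ℕ))
            / den j := by
          rw [Finset.sum_div]
          exact Finset.sum_congr rfl fun a _ => (mul_div_assoc _ _ _).symm
      _ = Qv y k / den j := by rw [hU]
  -- conclusion
  intro k l hk hl
  have hkq : ∀ j : Fin (N + 1),
      (∑ a : Fin p, eval (lam j) (A a k) * mu p A B N lam j a) * eval (lam j) (B l)
        = Vm ⟨l, by omega⟩ j * Pm j ⟨k, by omega⟩ := by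
    intro j
    rw [hinner j k]
    simp only [hPm, hVm, Matrix.of_apply]
    ring
  have step1 : ∑ j : Fin (N+1), (∑ a : Fin p, eval (lam j) (A a k) * mu p A B N lam j a) * eval (lam j) (B l)
      = ∑ j : Fin (N+1), Vm ⟨l, by omega⟩ j * Pm j ⟨k, by omega⟩ :=
        Finset.sum_congr rfl (fun j _ => hkq j)
  have step2 : ∑ j : Fin (N+1), Vm ⟨l, by omega⟩ j * Pm j ⟨k, by omega⟩
      = (Vm * Pm) ⟨l, by omega⟩ ⟨k, by omega⟩ := (Matrix.mul_apply).symm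
  have step3 : (Vm * Pm) ⟨l, by omega⟩ ⟨k, by omega⟩
      = (1 : Matrix (Fin (N+1)) (Fin (N+1)) ℝ) ⟨l, by omega⟩ ⟨k, by omega⟩ := by rw [hVP]
  have step4 : (1 : Matrix (Fin (N+1)) (Fin (N+1)) ℝ) ⟨l, by omega⟩ ⟨k, by omega⟩
      = if k = l then (1:ℝ) else 0 := by
    by_cases h : k = l
    · subst h
      rw [if_pos rfl, Matrix.one_apply_eq]
    · rw [if_neg h, Matrix.one_apply_ne (Fin.ne_of_val_ne (fun hh => h hh.symm))]
  rw [step1, step2, step3, step4]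
end

section
/- (Type II multiple discrete orthogonality) Assume B_{N+1} has N+1 simple real zeros λ_1 > ⋯ > λ_{N+1}. Then for every k ≥ 0 and j ∈ {0,…,p−1} with kp+j ≤ N: Σ_{i=1}^{N+1} μ_{i,r}·λ_i^m·B_{kp+j}(λ_i) = 0 for all m ∈ {0,…,k} and r ∈ {1,…,j}, and Σ_{i=1}^{N+1} μ_{i,r}·λ_i^m·B_{kp+j}(λ_i) = 0 for all m ∈ {0,…,k−1} and r ∈ {j+1,…,p}. -/
open Polynomial

open Finset in
lemma cd (p : ℕ) (T : ℕ → ℕ → ℝ) (hTsub : ∀ n m, m + p < n → T n m = 0)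
    (x y d : ℝ) (q b : ℕ → ℝ)
    (hq : ∀ n, x * q n = (if n = 0 then d else q (n-1))
      + ∑ i ∈ Finset.range (p+1), T (n+i) n * q (n+i))
    (hb : ∀ n, y * b n = b (n+1)
      + ∑ j ∈ Finset.range (p+1), (if j ≤ n then T n (n-j) * b (n-j) else 0))
    (N : ℕ) :
    (y - x) * ∑ l ∈ Finset.range (N+1), q l * b l
      = q N * b (N+1) - d * b 0
        - ∑ n ∈ Finset.range (N+1), ∑ i ∈ Finset.Icc 1 p, T (N+i) n * q (N+i) * b n := by
  set F : ℕ → ℕ → ℝ := fun l n => T l n * q l * b n with hF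
  -- conversions
  have conv1 : ∀ l, l ≤ N →
      ∑ j ∈ range (p+1), (if j ≤ l then T l (l-j) * q l * b (l-j) else 0)
        = ∑ n ∈ range (N+1), (if n ≤ l then F l n else 0) := by
    intro l hl
    have r1 : ∑ n ∈ range (N+1), (if n ≤ l then F l n else 0)
        = ∑ n ∈ range (l+1), F l n := by
      rw [← Finset.sum_subset (Finset.range_subset_range.2 (Nat.succ_le_succ hl))
        (fun n _ hn => by rw [if_neg]; simpa [Nat.lt_succ_iff] using hn)]
      exact Finset.sum_congr rfl fun n hn => if_pos (by simpa [Nat.lt_succ_iff] using hn)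
    have r2 : ∑ n ∈ range (l+1), F l n = ∑ j ∈ range (l+1), F l (l - j) :=
      (Finset.sum_range_reflect (fun n => F l n) (l+1)).symm
    have g := fun j => if j ≤ l then T l (l-j) * q l * b (l-j) else 0
    have r3 : ∑ j ∈ range (l+1), F l (l - j)
        = ∑ j ∈ range (max l p + 1), (if j ≤ l then T l (l-j) * q l * b (l-j) else 0) := by
      rw [← Finset.sum_subset (Finset.range_subset_range.2 (by omega : l + 1 ≤ max l p + 1))
        (fun j _ hj => by rw [if_neg]; simpa [Nat.lt_succ_iff] using hj)]
      exact Finset.sum_congr rfl fun j hj => by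
        rw [if_pos (by simpa [Nat.lt_succ_iff] using hj)]
    have r4 : ∑ j ∈ range (p+1), (if j ≤ l then T l (l-j) * q l * b (l-j) else 0)
        = ∑ j ∈ range (max l p + 1), (if j ≤ l then T l (l-j) * q l * b (l-j) else 0) := by
      apply Finset.sum_subset (Finset.range_subset_range.2 (by omega : p + 1 ≤ max l p + 1))
      intro j hj hj'
      have hjp : p < j := by simpa [Nat.lt_succ_iff] using hj'
      by_cases hjl : j ≤ l
      · rw [if_pos hjl, hTsub l (l - j) (by omega), zero_mul, zero_mul]
      · rw [if_neg hjl]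
    rw [r1, r2, r3, r4]
  have conv2 : ∀ n, n ≤ N →
      ∑ i ∈ range (p+1), T (n+i) n * q (n+i) * b n
        = ∑ l ∈ range (N+p+1), (if n ≤ l then F l n else 0) := by
    intro n hn
    have r1 : ∑ l ∈ range (N+p+1), (if n ≤ l then F l n else 0)
        = ∑ l ∈ Finset.Ico n (N+p+1), F l n := by
      rw [Finset.range_eq_Ico,
        ← Finset.sum_subset (Finset.Ico_subset_Ico (Nat.zero_le n) le_rfl)
          (fun l hl hl' => by
            simp only [Finset.mem_Ico, not_and, not_lt] at hl hl'
            have hneg : ¬ (n ≤ l) := by omega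
            rw [if_neg hneg])]
      exact Finset.sum_congr rfl fun l hl => if_pos (Finset.mem_Ico.1 hl).1
    have r2 : ∑ l ∈ Finset.Ico n (N+p+1), F l n = ∑ l ∈ Finset.Ico n (n+p+1), F l n := by
      rw [← Finset.sum_subset (Finset.Ico_subset_Ico le_rfl (by omega : n+p+1 ≤ N+p+1))
        (fun l hl hl' => by
          simp only [Finset.mem_Ico] at hl hl'
          have : T l n = 0 := hTsub l n (by omega)
          simp [hF, this])]
    have r3 : ∑ l ∈ Finset.Ico n (n+p+1), F l n = ∑ i ∈ range (p+1), F (n+i) n := by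
      rw [Finset.sum_Ico_eq_sum_range]
      have h : n+p+1-n = p+1 := by omega
      rw [h]
    rw [r1, r2, r3]
  have conv3 : ∀ n, n ≤ N →
      ∑ i ∈ Finset.Icc 1 p, T (N+i) n * q (N+i) * b n
        = ∑ l ∈ range (N+p+1), (if N+1 ≤ l then F l n else 0) := by
    intro n hn
    have r1 : ∑ l ∈ range (N+p+1), (if N+1 ≤ l then F l n else 0)
        = ∑ l ∈ Finset.Ico (N+1) (N+p+1), F l n := by
      rw [Finset.range_eq_Ico,
        ← Finset.sum_subset (Finset.Ico_subset_Ico (Nat.zero_le (N+1)) le_rfl)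
          (fun l hl hl' => by
            simp only [Finset.mem_Ico, not_and, not_lt] at hl hl'
            have hneg : ¬ (N+1 ≤ l) := by omega
            rw [if_neg hneg])]
      exact Finset.sum_congr rfl fun l hl => if_pos (Finset.mem_Ico.1 hl).1
    have r2 : ∑ l ∈ Finset.Ico (N+1) (N+p+1), F l n = ∑ i ∈ range p, F (N+1+i) n := by
      rw [Finset.sum_Ico_eq_sum_range]
      have h : N+p+1-(N+1) = p := by omega
      rw [h]
    have r3 : ∑ i ∈ Finset.Icc 1 p, T (N+i) n * q (N+i) * b n
        = ∑ i ∈ range p, F (N+1+i) n := by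
      rw [← Finset.Ico_add_one_right_eq_Icc, Finset.sum_Ico_eq_sum_range]
      have h : p+1-1 = p := by omega
      rw [h]
      refine Finset.sum_congr rfl fun i _ => ?_
      have h2 : N + (1 + i) = N + 1 + i := by omega
      simp [hF, h2]
    rw [r1, r2, r3]
  have expand : ∀ n, (y - x) * (q n * b n)
      = (q n * b (n+1) - (if n = 0 then d else q (n-1)) * b n)
        + ((∑ j ∈ range (p+1), (if j ≤ n then T n (n-j) * q n * b (n-j) else 0))
          - ∑ i ∈ range (p+1), T (n+i) n * q (n+i) * b n) := by
    intro n
    have e1 : q n * (y * b n) = q n * b (n+1)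
        + ∑ j ∈ range (p+1), (if j ≤ n then T n (n-j) * q n * b (n-j) else 0) := by
      rw [hb n, mul_add, Finset.mul_sum]
      congr 1
      refine Finset.sum_congr rfl fun j _ => ?_
      split <;> ring
    have e2 : (x * q n) * b n = (if n = 0 then d else q (n-1)) * b n
        + ∑ i ∈ range (p+1), T (n+i) n * q (n+i) * b n := by
      rw [hq n, add_mul, Finset.sum_mul]
    calc (y - x) * (q n * b n) = q n * (y * b n) - (x * q n) * b n := by ring
    _ = _ := by rw [e1, e2]; ring
  have main : (y - x) * ∑ l ∈ range (N+1), q l * b l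
      = (∑ n ∈ range (N+1), q n * b (n+1)
          - ∑ n ∈ range (N+1), (if n = 0 then d else q (n-1)) * b n)
        + ((∑ n ∈ range (N+1), ∑ j ∈ range (p+1), (if j ≤ n then T n (n-j) * q n * b (n-j) else 0))
          - ∑ n ∈ range (N+1), ∑ i ∈ range (p+1), T (n+i) n * q (n+i) * b n) := by
    rw [Finset.mul_sum, ← Finset.sum_sub_distrib, ← Finset.sum_sub_distrib,
      ← Finset.sum_add_distrib]
    exact Finset.sum_congr rfl fun n _ => expand n
  have tele : ∑ n ∈ range (N+1), q n * b (n+1)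
      - ∑ n ∈ range (N+1), (if n = 0 then d else q (n-1)) * b n
      = q N * b (N+1) - d * b 0 := by
    rw [Finset.sum_range_succ, Finset.sum_range_succ']
    norm_num
  have hS1 : ∑ n ∈ range (N+1), ∑ j ∈ range (p+1), (if j ≤ n then T n (n-j) * q n * b (n-j) else 0)
      = ∑ l ∈ range (N+1), ∑ n ∈ range (N+1), (if n ≤ l then F l n else 0) :=
    Finset.sum_congr rfl fun l hl => conv1 l (by simpa [Nat.lt_succ_iff] using hl)
  have hS2 : ∑ n ∈ range (N+1), ∑ i ∈ range (p+1), T (n+i) n * q (n+i) * b n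
      = ∑ l ∈ range (N+1), ∑ n ∈ range (N+1), (if n ≤ l then F l n else 0)
        + ∑ l ∈ Finset.Ico (N+1) (N+p+1), ∑ n ∈ range (N+1), F l n := by
    calc ∑ n ∈ range (N+1), ∑ i ∈ range (p+1), T (n+i) n * q (n+i) * b n
        = ∑ n ∈ range (N+1), ∑ l ∈ range (N+p+1), (if n ≤ l then F l n else 0) :=
          Finset.sum_congr rfl fun n hn => conv2 n (by simpa [Nat.lt_succ_iff] using hn)
      _ = ∑ l ∈ range (N+p+1), ∑ n ∈ range (N+1), (if n ≤ l then F l n else 0) :=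
          Finset.sum_comm
      _ = ∑ l ∈ Finset.Ico 0 (N+1), ∑ n ∈ range (N+1), (if n ≤ l then F l n else 0)
          + ∑ l ∈ Finset.Ico (N+1) (N+p+1), ∑ n ∈ range (N+1), (if n ≤ l then F l n else 0) := by
          rw [Finset.sum_Ico_consecutive _ (by omega : 0 ≤ N+1) (by omega : N+1 ≤ N+p+1),
            Finset.range_eq_Ico]
      _ = _ := by
          congr 1
          · rw [← Finset.range_eq_Ico]
          · refine Finset.sum_congr rfl fun l hl => Finset.sum_congr rfl fun n hn => ?_
            have h1 := (Finset.mem_Ico.1 hl).1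
            have h2 := Finset.mem_range.1 hn
            exact if_pos (by omega)
  have hcross : ∑ n ∈ range (N+1), ∑ i ∈ Finset.Icc 1 p, T (N+i) n * q (N+i) * b n
      = ∑ l ∈ Finset.Ico (N+1) (N+p+1), ∑ n ∈ range (N+1), F l n := by
    calc ∑ n ∈ range (N+1), ∑ i ∈ Finset.Icc 1 p, T (N+i) n * q (N+i) * b n
        = ∑ n ∈ range (N+1), ∑ l ∈ range (N+p+1), (if N+1 ≤ l then F l n else 0) :=
          Finset.sum_congr rfl fun n hn => conv3 n (by simpa [Nat.lt_succ_iff] using hn)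
      _ = ∑ l ∈ range (N+p+1), ∑ n ∈ range (N+1), (if N+1 ≤ l then F l n else 0) :=
          Finset.sum_comm
      _ = ∑ l ∈ Finset.Ico (N+1) (N+p+1), ∑ n ∈ range (N+1), F l n := by
          rw [Finset.range_eq_Ico,
            ← Finset.sum_subset (Finset.Ico_subset_Ico (Nat.zero_le (N+1)) le_rfl)
              (fun l hl hl' => by
                simp only [Finset.mem_Ico, not_and, not_lt] at hl hl'
                have hneg : ¬ (N+1 ≤ l) := by omega
                simp [hneg])]
          exact Finset.sum_congr rfl fun l hl =>
            Finset.sum_congr rfl fun n _ => if_pos (Finset.mem_Ico.1 hl).1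
  rw [main, hS1, hS2, hcross, tele]
  ring

lemma det_updateRow_sum' {p : ℕ} (M : Matrix (Fin p) (Fin p) (Polynomial ℝ))
    {ι : Type*} (s : Finset ι) (f : ι → (Fin p → Polynomial ℝ)) (j : Fin p) :
    (M.updateRow j (∑ b ∈ s, f b)).det = ∑ b ∈ s, (M.updateRow j (f b)).det := by
  classical
  induction s using Finset.induction with
  | empty =>
    simp only [Finset.sum_empty]
    exact Matrix.det_eq_zero_of_row_eq_zero j (fun k => by simp)
  | insert _ _ h ih =>
    rw [Finset.sum_insert h, Finset.sum_insert h, Matrix.det_updateRow_add, ih]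

lemma Qrec (p : ℕ) (hp : 0 < p) (T : ℕ → ℕ → ℝ) (A : Fin p → ℕ → Polynomial ℝ)
    (hArec : ∀ a : Fin p, ∀ n : ℕ, (if n = 0 then 0 else A a (n - 1))
        + ∑ i ∈ Finset.range (p + 1), C (T (n + i) n) * A a (n + i) = X * A a n)
    (N l : ℕ) :
    X * Qp p A l N = (if l = 0 then 0 else Qp p A (l-1) N)
      + ∑ i ∈ Finset.range (p+1), C (T (l+i) l) * Qp p A (l+i) N := by
  classical
  set i0 : Fin p := ⟨0, hp⟩ with hi0
  set M0 : Matrix (Fin p) (Fin p) (Polynomial ℝ) :=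
    Matrix.of (fun i a => A a (N + (i:ℕ))) with hM0
  have key : ∀ n, Qp p A n N = (M0.updateRow i0 (fun a => A a n)).det := by
    intro n
    unfold Qp
    congr 1
    refine Matrix.ext fun i a => ?_
    simp only [Matrix.of_apply, Matrix.updateRow_apply, hM0]
    by_cases h : i = i0
    · rw [if_pos (show (i:ℕ) = 0 by rw [h]), if_pos h]
    · rw [if_neg (show ¬((i:ℕ) = 0) from fun hc => h (Fin.ext (by simp [hi0, hc]))), if_neg h]
  have step1 : X * Qp p A l N = (M0.updateRow i0 (fun a => X * A a l)).det := by
    rw [key l, ← Matrix.det_updateRow_smul,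
      show (X • fun a => A a l) = (fun a => X * A a l) from funext fun a => by
        simp [smul_eq_mul]]
  have step2 : (fun a => X * A a l)
      = (fun a => if l = 0 then (0:Polynomial ℝ) else A a (l-1))
        + (fun a => ∑ i ∈ Finset.range (p+1), C (T (l+i) l) * A a (l+i)) := by
    funext a
    exact (hArec a l).symm
  rw [step1, step2, Matrix.det_updateRow_add]
  congr 1
  · by_cases hl : l = 0
    · rw [if_pos hl]
      exact Matrix.det_eq_zero_of_row_eq_zero i0 (fun k => by simp [hl])
    · rw [if_neg hl, key (l-1),
        show (fun a => if l = 0 then (0:Polynomial ℝ) else A a (l-1)) = (fun a => A a (l-1)) from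
          funext fun a => if_neg hl]
  · rw [show (fun a => ∑ i ∈ Finset.range (p+1), C (T (l+i) l) * A a (l+i))
        = ∑ i ∈ Finset.range (p+1), (fun a => C (T (l+i) l) * A a (l+i)) from
          funext fun a => by rw [Finset.sum_apply],
      det_updateRow_sum']
    refine Finset.sum_congr rfl fun i _ => ?_
    rw [key (l+i), ← Matrix.det_updateRow_smul,
      show (C (T (l+i) l) • fun a => A a (l+i)) = (fun a => C (T (l+i) l) * A a (l+i)) from
        funext fun a => by simp [smul_eq_mul]]

lemma Qwin (p : ℕ) (A : Fin p → ℕ → Polynomial ℝ) (N : ℕ) (j : ℕ) (hj1 : 1 ≤ j) (hjp : j < p) :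
    Qp p A (N + j) N = 0 := by
  have hne : (⟨0, by omega⟩ : Fin p) ≠ ⟨j, hjp⟩ := by
    intro h
    have := congrArg Fin.val h
    simp only [Fin.val_mk] at this
    omega
  apply Matrix.det_zero_of_row_eq hne
  funext a
  have hj0 : ¬(j = 0) := by omega
  simp [hj0]

lemma nuInvTri (p : ℕ) (A : Fin p → ℕ → Polynomial ℝ)
    (hAzero : ∀ a : Fin p, ∀ j : ℕ, j < (a : ℕ) → A a j = 0)
    (hAone : ∀ a : Fin p, A a (a : ℕ) = 1) :
    ∀ r b : Fin p, (r : ℕ) < (b : ℕ) → (nuMat p A)⁻¹ r b = 0 := by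
  classical
  have htri : (nuMat p A).BlockTriangular OrderDual.toDual := by
    intro i j hij
    have hij' : (i:ℕ) < (j:ℕ) := OrderDual.toDual_lt_toDual.mp hij
    show (A j (i : ℕ)).coeff 0 = 0
    rw [hAzero j i hij', Polynomial.coeff_zero]
  have hdet : (nuMat p A).det = 1 := by
    rw [Matrix.det_of_lowerTriangular _ htri]
    refine Finset.prod_eq_one fun i _ => ?_
    show (A i (i : ℕ)).coeff 0 = 1
    rw [hAone i, Polynomial.coeff_one_zero]
  have hinv : Invertible (nuMat p A) :=
    (nuMat p A).invertibleOfIsUnitDet (by rw [hdet]; exact isUnit_one)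
  intro r b hrb
  exact Matrix.blockTriangular_inv_of_blockTriangular htri
    (OrderDual.toDual_lt_toDual.mpr hrb)

theorem stmt_8
    (p : ℕ) (hp : 1 ≤ p)
    (T : ℕ → ℕ → ℝ)
    (hT1 : ∀ n, T n (n + 1) = 1)
    (hTsup : ∀ n m, n + 1 < m → T n m = 0)
    (hTsub : ∀ n m, m + p < n → T n m = 0)
    (hTlow : ∀ n, p ≤ n → T n (n - p) ≠ 0)
    (B : ℕ → Polynomial ℝ)
    (hB0 : B 0 = 1)
    (hBrec : ∀ n, B (n + 1) = (X - C (T n n)) * B n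
      - ∑ j ∈ Finset.Icc 1 p, (if j ≤ n then C (T n (n - j)) * B (n - j) else 0))
    (A : Fin p → ℕ → Polynomial ℝ)
    (hAconst : ∀ a : Fin p, ∀ j < p, ∃ c : ℝ, A a j = C c)
    (hAzero : ∀ a : Fin p, ∀ j : ℕ, j < (a : ℕ) → A a j = 0)
    (hAone : ∀ a : Fin p, A a (a : ℕ) = 1)
    (hArec : ∀ a : Fin p, ∀ n : ℕ,
      (if n = 0 then 0 else A a (n - 1))
        + ∑ i ∈ Finset.range (p + 1), C (T (n + i) n) * A a (n + i) = X * A a n)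
    (N : ℕ) (lam : Fin (N + 1) → ℝ)
    (hroots : ∀ k, eval (lam k) (B (N + 1)) = 0)
    (hanti : StrictAnti lam)
    (hsimple : ∀ k, eval (lam k) (derivative (B (N + 1))) ≠ 0)
    (hden : ∀ k : Fin (N + 1), ∑ l ∈ Finset.range (N + 1),
      eval (lam k) (Qp p A l N) * eval (lam k) (B l) ≠ 0) :
    ∀ k j : ℕ, j < p → k * p + j ≤ N →
      (∀ m : ℕ, m ≤ k → ∀ r : Fin p, (r : ℕ) < j →
        ∑ i : Fin (N + 1), mu p A B N lam i r * (lam i) ^ m * eval (lam i) (B (k * p + j)) = 0) ∧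
      (∀ m : ℕ, m < k → ∀ r : Fin p, j ≤ (r : ℕ) →
        ∑ i : Fin (N + 1), mu p A B N lam i r * (lam i) ^ m * eval (lam i) (B (k * p + j)) = 0) := by
  classical
  have hp0 : 0 < p := hp
  -- evaluated sequences
  obtain ⟨qq, hqq⟩ : ∃ f : Fin (N+1) → ℕ → ℝ, f = fun i l => eval (lam i) (Qp p A l N) := ⟨_, rfl⟩
  obtain ⟨bb, hbb⟩ : ∃ f : Fin (N+1) → ℕ → ℝ, f = fun i l => eval (lam i) (B l) := ⟨_, rfl⟩
  obtain ⟨D, hD⟩ : ∃ f : Fin (N+1) → ℝ,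
      f = fun i => ∑ l ∈ Finset.range (N+1), qq i l * bb i l := ⟨_, rfl⟩
  have hD0 : ∀ i, D i ≠ 0 := by
    intro i
    simp only [hD, hqq, hbb]
    exact hden i
  -- split range (p+1) sums
  have hsplit : ∀ f : ℕ → ℝ, ∑ t ∈ Finset.range (p+1), f t = f 0 + ∑ t ∈ Finset.Icc 1 p, f t := by
    intro f
    rw [Finset.range_eq_Ico, ← Finset.sum_Ico_consecutive f (Nat.zero_le 1) (by omega),
      ← Finset.Ico_add_one_right_eq_Icc]
    congr 1
    rw [Finset.sum_Ico_eq_sum_range]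
    simp
  -- B recurrence, evaluated
  have hbrec : ∀ (i : Fin (N+1)) (m : ℕ), lam i * bb i m = bb i (m+1)
      + ∑ t ∈ Finset.range (p+1), (if t ≤ m then T m (m-t) * bb i (m-t) else 0) := by
    intro i m
    have h := congrArg (eval (lam i)) (hBrec m)
    simp only [eval_sub, eval_mul, eval_add, eval_X, eval_C, eval_finset_sum,
      apply_ite (eval (lam i)), eval_zero] at h
    simp only [hbb]
    rw [hsplit (fun t => if t ≤ m then T m (m-t) * eval (lam i) (B (m-t)) else 0)]
    simp only [if_pos (Nat.zero_le m), Nat.sub_zero]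
    rw [sub_mul] at h
    rw [h]
    ring
  -- Q recurrence, evaluated
  have hqrec : ∀ (i : Fin (N+1)) (l : ℕ), lam i * qq i l
      = (if l = 0 then (0:ℝ) else qq i (l-1))
        + ∑ t ∈ Finset.range (p+1), T (l+t) l * qq i (l+t) := by
    intro i l
    have h := congrArg (eval (lam i)) (Qrec p hp0 T A hArec N l)
    simp only [eval_mul, eval_add, eval_X, eval_C, eval_finset_sum,
      apply_ite (eval (lam i)), eval_zero] at h
    simp only [hqq]
    exact h
  -- recurrence for scalar combinations of the A's
  have hGrec : ∀ (x : ℝ) (c : Fin p → ℝ) (m : ℕ),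
      x * (∑ a, c a * eval x (A a m))
        = (if m = 0 then (0:ℝ) else (∑ a, c a * eval x (A a (m-1))))
          + ∑ t ∈ Finset.range (p+1), T (m+t) m * (∑ a, c a * eval x (A a (m+t))) := by
    intro x c m
    have h : ∀ a : Fin p, x * eval x (A a m) = (if m = 0 then (0:ℝ) else eval x (A a (m-1)))
        + ∑ t ∈ Finset.range (p+1), T (m+t) m * eval x (A a (m+t)) := by
      intro a
      have h := congrArg (eval x) (hArec a m)
      simp only [eval_mul, eval_add, eval_X, eval_C, eval_finset_sum,
        apply_ite (eval x), eval_zero] at h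
      exact h.symm
    calc x * ∑ a, c a * eval x (A a m)
        = ∑ a, c a * (x * eval x (A a m)) := by
          rw [Finset.mul_sum]
          exact Finset.sum_congr rfl fun a _ => by ring
      _ = ∑ a, (c a * (if m = 0 then (0:ℝ) else eval x (A a (m-1)))
            + ∑ t ∈ Finset.range (p+1), T (m+t) m * (c a * eval x (A a (m+t)))) := by
          refine Finset.sum_congr rfl fun a _ => ?_
          rw [h a, mul_add, Finset.mul_sum]
          congr 1
          exact Finset.sum_congr rfl fun t _ => by ring
      _ = (∑ a, c a * (if m = 0 then (0:ℝ) else eval x (A a (m-1))))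
          + ∑ a : Fin p, ∑ t ∈ Finset.range (p+1), T (m+t) m * (c a * eval x (A a (m+t))) :=
          Finset.sum_add_distrib
      _ = _ := by
          have e1 : (∑ a, c a * (if m = 0 then (0:ℝ) else eval x (A a (m-1))))
              = (if m = 0 then (0:ℝ) else (∑ a, c a * eval x (A a (m-1)))) := by
            by_cases hm : m = 0
            · simp [hm]
            · simp only [if_neg hm]
          have e2 : (∑ a : Fin p, ∑ t ∈ Finset.range (p+1), T (m+t) m * (c a * eval x (A a (m+t))))
              = ∑ t ∈ Finset.range (p+1), T (m+t) m * (∑ a, c a * eval x (A a (m+t))) := by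
            rw [Finset.sum_comm]
            refine Finset.sum_congr rfl fun t _ => ?_
            rw [Finset.mul_sum]
          rw [e1, e2]
  -- vanishing of Q at the far window edge
  have hQNp : ∀ i : Fin (N+1), qq i (N+p) = 0 := by
    intro i
    by_contra hQ
    obtain ⟨Mx, hMx⟩ : ∃ M : Matrix (Fin p) (Fin p) ℝ, M = Matrix.of (fun s a : Fin p =>
        eval (lam i) (if (s:ℕ) = 0 then A a (N+p) else A a (N+(s:ℕ)))) := ⟨_, rfl⟩
    have hdet : qq i (N+p) = Mx.det := by
      rw [hqq, hMx]
      show eval (lam i) (Qp p A (N+p) N) = _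
      rw [← Polynomial.coe_evalRingHom]
      unfold Qp
      rw [RingHom.map_det]
      rfl
    have hMdet : IsUnit Mx.det := by
      rw [← hdet]
      exact Ne.isUnit hQ
    have star : ∀ s, 1 ≤ s → s ≤ p →
        ∑ m ∈ Finset.range (N+1), T (N+s) m * bb i m = 0 := by
      intro s hs1 hsp
      obtain ⟨w, hw⟩ : ∃ w : Fin p → ℝ, w = fun t : Fin p =>
          if (t:ℕ) = 0 then (if s = p then (1:ℝ) else 0)
          else (if (t:ℕ) = s then 1 else 0) := ⟨_, rfl⟩
      obtain ⟨c, hc⟩ : ∃ c, c = Mx⁻¹.mulVec w := ⟨_, rfl⟩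
      have hMc : Mx.mulVec c = w := by
        rw [hc, Matrix.mulVec_mulVec, Matrix.mul_nonsing_inv _ hMdet, Matrix.one_mulVec]
      have hGwin : ∀ t, 1 ≤ t → t ≤ p → (∑ a, c a * eval (lam i) (A a (N+t)))
          = if t = s then (1:ℝ) else 0 := by
        intro t h1 h2
        have hcm : ∀ u : Fin p → ℝ, (∑ a, c a * u a) = ∑ a, u a * c a :=
          fun u => Finset.sum_congr rfl fun a _ => mul_comm _ _
        rcases eq_or_lt_of_le h2 with he | hlt
        · have h0 := congrFun hMc ⟨0, hp0⟩
          simp only [hMx, hw, Matrix.mulVec, dotProduct, Matrix.of_apply,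
            Fin.val_mk, if_true, eq_self_iff_true] at h0
          rw [he, hcm]
          rw [h0]
          by_cases hsp' : s = p
          · simp [hsp']
          · rw [if_neg hsp', if_neg (fun h => hsp' h.symm)]
        · have h0 := congrFun hMc ⟨t, hlt⟩
          have ht0 : ¬ (t = 0) := by omega
          simp only [hMx, hw, Matrix.mulVec, dotProduct, Matrix.of_apply,
            Fin.val_mk, if_neg ht0] at h0
          rw [hcm]
          exact h0
      have hcd := cd p T hTsub (lam i) (lam i) 0
        (fun m => ∑ a, c a * eval (lam i) (A a m)) (bb i)
        (fun m => hGrec (lam i) c m) (hbrec i) N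
      have hb1 : bb i (N+1) = 0 := by
        simp only [hbb]
        exact hroots i
      rw [sub_self, zero_mul, hb1, mul_zero, zero_mul] at hcd
      -- hcd : 0 = - cross
      have hcross : ∑ n ∈ Finset.range (N+1), ∑ t ∈ Finset.Icc 1 p,
          T (N+t) n * (∑ a, c a * eval (lam i) (A a (N+t))) * bb i n = 0 := by linarith
      calc ∑ m ∈ Finset.range (N+1), T (N+s) m * bb i m
          = ∑ n ∈ Finset.range (N+1), ∑ t ∈ Finset.Icc 1 p,
              T (N+t) n * (∑ a, c a * eval (lam i) (A a (N+t))) * bb i n := by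
            refine Finset.sum_congr rfl fun n _ => ?_
            rw [Finset.sum_eq_single_of_mem s (Finset.mem_Icc.2 ⟨hs1, hsp⟩)
              (fun t ht hts => by
                have h12 := Finset.mem_Icc.1 ht
                rw [hGwin t h12.1 h12.2, if_neg hts, mul_zero, zero_mul])]
            rw [hGwin s hs1 hsp, if_pos rfl, mul_one]
        _ = 0 := hcross
    have hind : ∀ t, t ≤ N → bb i (N - t) = 0 := by
      intro t
      induction t using Nat.strong_induction_on with
      | _ t ih =>
        intro htN
        by_cases hcase : t < p
        · have hs := star (p - t) (by omega) (by omega)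
          have hz : ∀ m ∈ Finset.range (N+1), m ≠ N - t → T (N+(p-t)) m * bb i m = 0 := by
            intro m hm hmne
            have hmN := Finset.mem_range.1 hm
            rcases Nat.lt_or_ge m (N - t) with hlt | hge
            · rw [hTsub _ _ (by omega), zero_mul]
            · have hbz : bb i m = 0 := by
                rw [show m = N - (N - m) by omega]
                exact ih (N - m) (by omega) (by omega)
              rw [hbz, mul_zero]
          rw [Finset.sum_eq_single_of_mem (N - t) (Finset.mem_range.2 (by omega)) hz] at hs
          have hT := hTlow (N + (p - t)) (by omega)
          rw [show N + (p - t) - p = N - t by omega] at hT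
          exact (mul_eq_zero.1 hs).resolve_left hT
        · push_neg at hcase
          have hz : ∀ l, N - t < l → l ≤ N + 1 → bb i l = 0 := by
            intro l hl1 hl2
            rcases Nat.lt_or_ge l (N+1) with h | h
            · rw [show l = N - (N - l) by omega]
              exact ih (N - l) (by omega) (by omega)
            · rw [show l = N + 1 by omega]
              simp only [hbb]
              exact hroots i
          have hrec := hbrec i (N - t + p)
          rw [hz (N - t + p + 1) (by omega) (by omega),
            hz (N - t + p) (by omega) (by omega), mul_zero] at hrec
          rw [hsplit (fun u => if u ≤ N - t + p
            then T (N-t+p) (N-t+p-u) * bb i (N-t+p-u) else 0)] at hrec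
          have hone : ∀ u ∈ Finset.Icc 1 p, u ≠ p →
              (if u ≤ N - t + p then T (N-t+p) (N-t+p-u) * bb i (N-t+p-u) else 0) = 0 := by
            intro u hu hup
            have h12 := Finset.mem_Icc.1 hu
            rw [if_pos (by omega), hz (N-t+p-u) (by omega) (by omega), mul_zero]
          rw [Finset.sum_eq_single_of_mem p (Finset.mem_Icc.2 ⟨hp0, le_rfl⟩) hone] at hrec
          have hT := hTlow (N - t + p) (by omega)
          rw [show N - t + p - p = N - t by omega] at hT
          have hb0 : bb i (N - t + p) = 0 := hz _ (by omega) (by omega)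
          simp only [if_pos (Nat.zero_le (N - t + p)), if_pos (show p ≤ N - t + p by omega),
            Nat.sub_zero, show N - t + p - p = N - t by omega, hb0, mul_zero, zero_add] at hrec
          -- hrec : 0 = T (N-t+p) (N-t) * bb i (N-t)
          exact (mul_eq_zero.1 hrec.symm).resolve_left hT
    have hfin := hind N le_rfl
    rw [Nat.sub_self] at hfin
    simp only [hbb, hB0] at hfin
    norm_num at hfin
  -- Q vanishes at window rows N+1..N+p (evaluated)
  have hQwin : ∀ (i : Fin (N+1)) (t : ℕ), 1 ≤ t → t ≤ p → qq i (N+t) = 0 := by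
    intro i t h1 h2
    rcases eq_or_lt_of_le h2 with he | hlt
    · rw [he]
      exact hQNp i
    · rw [hqq]
      show eval (lam i) (Qp p A (N+t) N) = 0
      rw [Qwin p A N t h1 hlt, eval_zero]
  -- pairwise orthogonality
  have pairwise : ∀ i i' : Fin (N+1), i ≠ i' →
      ∑ l ∈ Finset.range (N+1), qq i l * bb i' l = 0 := by
    intro i i' hne
    have hcd := cd p T hTsub (lam i) (lam i') 0 (qq i) (bb i') (hqrec i) (hbrec i') N
    have hb1 : bb i' (N+1) = 0 := by
      simp only [hbb]
      exact hroots i'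
    have hcr : ∑ n ∈ Finset.range (N+1), ∑ t ∈ Finset.Icc 1 p,
        T (N+t) n * qq i (N+t) * bb i' n = 0 := by
      refine Finset.sum_eq_zero fun n _ => Finset.sum_eq_zero fun t ht => ?_
      have h12 := Finset.mem_Icc.1 ht
      rw [hQwin i t h12.1 h12.2, mul_zero, zero_mul]
    rw [hb1, mul_zero, zero_mul, hcr] at hcd
    have hlam : lam i' - lam i ≠ 0 :=
      sub_ne_zero.2 fun h => hne (hanti.injective h).symm
    have hz : (lam i' - lam i) * ∑ l ∈ Finset.range (N+1), qq i l * bb i' l = 0 := by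
      linarith
    exact (mul_eq_zero.1 hz).resolve_left hlam
  have hDi : ∀ i, D i = ∑ l ∈ Finset.range (N+1), qq i l * bb i l := fun i => by rw [hD]
  -- biorthogonality, dual order
  have biorth : ∀ l l' : Fin (N+1),
      ∑ i : Fin (N+1), bb i (l:ℕ) * qq i (l':ℕ) / D i = (if l = l' then (1:ℝ) else 0) := by
    obtain ⟨V, hV⟩ : ∃ V : Matrix (Fin (N+1)) (Fin (N+1)) ℝ,
        V = Matrix.of (fun i l : Fin (N+1) => qq i (l:ℕ) / D i) := ⟨_, rfl⟩
    obtain ⟨U, hU⟩ : ∃ U : Matrix (Fin (N+1)) (Fin (N+1)) ℝ,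
        U = Matrix.of (fun l i : Fin (N+1) => bb i (l:ℕ)) := ⟨_, rfl⟩
    have hVU : V * U = 1 := by
      ext i i'
      rw [Matrix.mul_apply, hV, hU]
      simp only [Matrix.of_apply]
      simp only [div_mul_eq_mul_div]
      rw [← Finset.sum_div]
      rw [show ∑ l : Fin (N+1), qq i (l:ℕ) * bb i' (l:ℕ)
          = ∑ l ∈ Finset.range (N+1), qq i l * bb i' l from Fin.sum_univ_eq_sum_range (fun l => qq i l * bb i' l) (N+1)]
      by_cases h : i = i'
      · subst h
        rw [← hDi i, div_self (hD0 i), Matrix.one_apply_eq]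
      · rw [pairwise i i' h, zero_div, Matrix.one_apply_ne h]
    have hUV : U * V = 1 := mul_eq_one_comm.1 hVU
    intro l l'
    have h := congrFun (congrFun hUV l) l'
    rw [Matrix.mul_apply, hU, hV] at h
    simp only [Matrix.of_apply] at h
    rw [Matrix.one_apply] at h
    rw [← h]
    exact Finset.sum_congr rfl fun i _ => by ring
  have htri := nuInvTri p A hAzero hAone
  -- span membership of shifted combinations
  have hspan : ∀ (m : ℕ) (r : Fin p),
      (X^m * ∑ b : Fin p, (nuMat p A)⁻¹ r b • Qp p A (b:ℕ) N)
        ∈ Submodule.span ℝ ((fun l => Qp p A l N) '' Set.Iio ((r:ℕ)+1+m*p)) := by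
    intro m r
    induction m with
    | zero =>
      rw [pow_zero, one_mul]
      refine Submodule.sum_mem _ fun b _ => ?_
      by_cases hbr : (b:ℕ) ≤ (r:ℕ)
      · refine Submodule.smul_mem _ _ (Submodule.subset_span ?_)
        exact ⟨(b:ℕ), Set.mem_Iio.2 (by omega), rfl⟩
      · rw [htri r b (by omega), zero_smul]
        exact Submodule.zero_mem _
    | succ m ih =>
      have hXf : ∀ f, f ∈ Submodule.span ℝ ((fun l => Qp p A l N) '' Set.Iio ((r:ℕ)+1+m*p)) →
          X * f ∈ Submodule.span ℝ ((fun l => Qp p A l N) '' Set.Iio ((r:ℕ)+1+(m+1)*p)) := by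
        intro f hf
        induction hf using Submodule.span_induction with
        | mem g hg =>
          obtain ⟨l, hl, rfl⟩ := hg
          rw [Set.mem_Iio] at hl
          rw [Qrec p hp0 T A hArec N l]
          refine Submodule.add_mem _ ?_ (Submodule.sum_mem _ fun t ht => ?_)
          · split
            · exact Submodule.zero_mem _
            · refine Submodule.subset_span ⟨l-1, Set.mem_Iio.2 ?_, rfl⟩
              have hmp : (m+1)*p = m*p + p := by ring
              omega
          · rw [← Polynomial.smul_eq_C_mul]
            refine Submodule.smul_mem _ _ (Submodule.subset_span ?_)
            have htp := Finset.mem_range.1 ht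
            refine ⟨l+t, Set.mem_Iio.2 ?_, rfl⟩
            have hmp : (m+1)*p = m*p + p := by ring
            omega
        | zero =>
          rw [mul_zero]
          exact Submodule.zero_mem _
        | add g h hg hh ihg ihh =>
          rw [mul_add]
          exact Submodule.add_mem _ ihg ihh
        | smul a g hg ihg =>
          rw [mul_smul_comm]
          exact Submodule.smul_mem _ _ ihg
      have heq : X^(m+1) * ∑ b : Fin p, (nuMat p A)⁻¹ r b • Qp p A (b:ℕ) N
          = X * (X^m * ∑ b : Fin p, (nuMat p A)⁻¹ r b • Qp p A (b:ℕ) N) := by ring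
      rw [heq]
      exact hXf _ ih
  -- the key vanishing statement
  have final : ∀ (n : ℕ), n ≤ N → ∀ (m : ℕ) (r : Fin p), (r:ℕ)+1+m*p ≤ n →
      ∑ i : Fin (N+1), mu p A B N lam i r * lam i ^ m * eval (lam i) (B n) = 0 := by
    intro n hn m r hmr
    have hmu : ∀ i : Fin (N+1), mu p A B N lam i r * lam i ^ m * eval (lam i) (B n)
        = eval (lam i) (X^m * ∑ b : Fin p, (nuMat p A)⁻¹ r b • Qp p A (b:ℕ) N)
            * eval (lam i) (B n) / D i := by
      intro i
      rw [eval_mul, eval_pow, eval_X, eval_finset_sum]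
      simp only [eval_smul, smul_eq_mul]
      unfold mu wfun
      have hDi2 : (∑ l ∈ Finset.range (N+1),
          eval (lam i) (Qp p A l N) * eval (lam i) (B l)) = D i := by
        rw [hDi i, hqq, hbb]
      rw [hDi2]
      have hsum : (∑ b : Fin p, (nuMat p A)⁻¹ r b * (eval (lam i) (Qp p A (b:ℕ) N) / D i))
          = (∑ b : Fin p, (nuMat p A)⁻¹ r b * eval (lam i) (Qp p A (b:ℕ) N)) / D i := by
        rw [Finset.sum_div]
        exact Finset.sum_congr rfl fun b _ => by ring
      rw [hsum]
      field_simp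
    have hval : ∀ f ∈ Submodule.span ℝ ((fun l => Qp p A l N) '' Set.Iio n),
        ∑ i : Fin (N+1), eval (lam i) f * eval (lam i) (B n) / D i = 0 := by
      intro f hf
      induction hf using Submodule.span_induction with
      | mem g hg =>
        obtain ⟨l, hl, rfl⟩ := hg
        rw [Set.mem_Iio] at hl
        have hlN : l < N + 1 := by omega
        have hbo := biorth ⟨n, by omega⟩ ⟨l, hlN⟩
        rw [if_neg (by
          intro hcon
          have := congrArg Fin.val hcon
          simp only [Fin.val_mk] at this
          omega)] at hbo
        simp only [Fin.val_mk, hqq, hbb] at hbo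
        rw [← hbo]
        exact Finset.sum_congr rfl fun i _ => by ring
      | zero => simp
      | add g h hg hh ihg ihh =>
        have hadd : ∑ i : Fin (N+1), eval (lam i) (g+h) * eval (lam i) (B n) / D i
            = (∑ i : Fin (N+1), eval (lam i) g * eval (lam i) (B n) / D i)
              + ∑ i : Fin (N+1), eval (lam i) h * eval (lam i) (B n) / D i := by
          rw [← Finset.sum_add_distrib]
          refine Finset.sum_congr rfl fun i _ => ?_
          rw [eval_add]
          ring
        rw [hadd, ihg, ihh, add_zero]
      | smul a g hg ihg =>
        rw [Finset.sum_congr rfl (fun i _ => show eval (lam i) (a • g) * eval (lam i) (B n) / D i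
            = a * (eval (lam i) g * eval (lam i) (B n) / D i) by
          rw [eval_smul, smul_eq_mul]
          ring), ← Finset.mul_sum, ihg, mul_zero]
    calc ∑ i : Fin (N+1), mu p A B N lam i r * lam i ^ m * eval (lam i) (B n)
        = ∑ i : Fin (N+1), eval (lam i) (X^m * ∑ b : Fin p, (nuMat p A)⁻¹ r b • Qp p A (b:ℕ) N)
            * eval (lam i) (B n) / D i := Finset.sum_congr rfl fun i _ => hmu i
      _ = 0 := hval _ (Submodule.span_mono (Set.image_mono (Set.Iio_subset_Iio hmr)) (hspan m r))
  intro k j hj hkj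
  constructor
  · intro m hm r hr
    refine final (k*p+j) hkj m r ?_
    have h1 : m * p ≤ k * p := Nat.mul_le_mul hm (le_refl p)
    omega
  · intro m hm r hr
    refine final (k*p+j) hkj m r ?_
    have h1 : (m+1) * p ≤ k * p := Nat.mul_le_mul hm (le_refl p)
    have h2 : (m+1) * p = m*p + p := by ring
    have h3 : (r:ℕ) < p := r.isLt
    omega
end

section
/- (Type I multiple discrete orthogonality) Assume B_{N+1} has N+1 simple real zeros λ_1 > ⋯ > λ_{N+1}. Then for every m with 1 ≤ m ≤ N and every n ∈ {0, 1, …, m−1}: Σ_{i=1}^{N+1} (Σ_{a=1}^{p} A^{(a)}_m(λ_i)·μ_{i,a})·λ_i^n = 0. -/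
open Polynomial

section AuxLemmas
open Finset

private lemma aux_sum_ite_ge (f : ℕ → ℝ) (j : ℕ) :
    ∀ n, (∑ l ∈ Finset.range n, if j ≤ l then f l else 0) = ∑ m ∈ Finset.range (n - j), f (m + j) := by
  intro n
  induction n with
  | zero => simp
  | succ n ih =>
    rw [Finset.sum_range_succ, ih]
    by_cases h : j ≤ n
    · rw [if_pos h, show n + 1 - j = (n - j) + 1 by omega, Finset.sum_range_succ,
        Nat.sub_add_cancel h]
    · rw [if_neg h, show n + 1 - j = n - j by omega, add_zero]

private lemma aux_sum_ite_le (f : ℕ → ℝ) (j M : ℕ) :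
    (∑ l ∈ Finset.range (M + 1), if l + j ≤ M then f l else 0) = ∑ l ∈ Finset.range (M + 1 - j), f l := by
  have key : ∀ n, (∑ l ∈ Finset.range n, if l + j ≤ M then f l else 0)
      = ∑ l ∈ Finset.range (min n (M + 1 - j)), f l := by
    intro n
    induction n with
    | zero => simp
    | succ n ih =>
      rw [Finset.sum_range_succ, ih]
      by_cases h : n + j ≤ M
      · rw [if_pos h, show min (n+1) (M+1-j) = min n (M+1-j) + 1 by omega,
          Finset.sum_range_succ, show min n (M+1-j) = n by omega]
      · rw [if_neg h, add_zero, show min (n+1) (M+1-j) = min n (M+1-j) by omega]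
  rw [key (M + 1), show min (M+1) (M+1-j) = M + 1 - j by omega]

private lemma aux_icc_range (p : ℕ) (g : ℕ → ℝ) :
    ∑ j ∈ Finset.Icc 1 p, g j = ∑ i ∈ Finset.range p, g (i + 1) := by
  rw [← Finset.Ico_add_one_right_eq_Icc, Finset.sum_Ico_eq_sum_range,
    show p + 1 - 1 = p from rfl]
  exact Finset.sum_congr rfl fun i _ => by rw [add_comm]

private lemma aux_CD (p : ℕ) (t : ℕ → ℕ → ℝ) (q b : ℕ → ℝ) (x y : ℝ)
    (hq : ∀ n, x * q n = (if n = 0 then 0 else q (n - 1)) + t n n * q n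
      + ∑ j ∈ Finset.Icc 1 p, t (n + j) n * q (n + j))
    (hb : ∀ l, y * b l = b (l + 1) + t l l * b l
      + ∑ j ∈ Finset.Icc 1 p, (if j ≤ l then t l (l - j) * b (l - j) else 0)) (M : ℕ) :
    ∑ l ∈ Finset.range (M + 1), (x - y) * (q l * b l)
      = -(q M * b (M + 1)) + ∑ j ∈ Finset.Icc 1 p, ∑ l ∈ Finset.range (M + 1),
          (if M < l + j then t (l + j) l * q (l + j) * b l else 0) := by
  have expand : ∀ l, (x - y) * (q l * b l)
      = (((if l = 0 then 0 else q (l - 1) * b l)) - q l * b (l + 1))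
        + ((∑ j ∈ Finset.Icc 1 p, t (l + j) l * q (l + j) * b l)
          - ∑ j ∈ Finset.Icc 1 p, (if j ≤ l then t l (l - j) * (q l * b (l - j)) else 0)) := by
    intro l
    have h1 : (x * q l) * b l = (if l = 0 then 0 else q (l - 1) * b l) + t l l * q l * b l
        + ∑ j ∈ Finset.Icc 1 p, t (l + j) l * q (l + j) * b l := by
      rw [hq l, add_mul, add_mul, ite_mul, zero_mul, Finset.sum_mul]
    have h2 : q l * (y * b l) = q l * b (l + 1) + t l l * q l * b l
        + ∑ j ∈ Finset.Icc 1 p, (if j ≤ l then t l (l - j) * (q l * b (l - j)) else 0) := by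
      rw [hb l, mul_add, mul_add, Finset.mul_sum,
        Finset.sum_congr rfl fun j _ => (by split_ifs <;> ring :
          q l * (if j ≤ l then t l (l - j) * b (l - j) else 0)
            = if j ≤ l then t l (l - j) * (q l * b (l - j)) else 0)]
      ring
    calc (x - y) * (q l * b l) = (x * q l) * b l - q l * (y * b l) := by ring
    _ = _ := by rw [h1, h2]; ring
  rw [Finset.sum_congr rfl fun l _ => expand l, Finset.sum_add_distrib]
  have hS1 : ∑ l ∈ Finset.range (M + 1),
      (((if l = 0 then 0 else q (l - 1) * b l)) - q l * b (l + 1)) = -(q M * b (M + 1)) := by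
    have : ∀ l, ((if l = 0 then 0 else q (l - 1) * b l)) - q l * b (l + 1)
        = (fun l => if l = 0 then (0:ℝ) else q (l - 1) * b l) l
          - (fun l => if l = 0 then (0:ℝ) else q (l - 1) * b l) (l + 1) := by
      intro l; simp
    rw [Finset.sum_congr rfl fun l _ => this l, Finset.sum_range_sub']
    simp
  have hS2 : ∑ l ∈ Finset.range (M + 1),
      ((∑ j ∈ Finset.Icc 1 p, t (l + j) l * q (l + j) * b l)
        - ∑ j ∈ Finset.Icc 1 p, (if j ≤ l then t l (l - j) * (q l * b (l - j)) else 0))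
      = ∑ j ∈ Finset.Icc 1 p, ∑ l ∈ Finset.range (M + 1),
          (if M < l + j then t (l + j) l * q (l + j) * b l else 0) := by
    rw [Finset.sum_sub_distrib, Finset.sum_comm, Finset.sum_comm (s := Finset.range (M + 1))]
    rw [← Finset.sum_sub_distrib]
    refine Finset.sum_congr rfl fun j _ => ?_
    have hsplit : ∑ l ∈ Finset.range (M + 1), t (l + j) l * q (l + j) * b l
        = (∑ l ∈ Finset.range (M + 1), if M < l + j then t (l + j) l * q (l + j) * b l else 0)
          + ∑ l ∈ Finset.range (M + 1), (if l + j ≤ M then t (l + j) l * q (l + j) * b l else 0) := by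
      rw [← Finset.sum_add_distrib]
      refine Finset.sum_congr rfl fun l _ => ?_
      by_cases h : M < l + j
      · rw [if_pos h, if_neg (by omega), add_zero]
      · rw [if_neg h, if_pos (by omega), zero_add]
    have hre : ∑ l ∈ Finset.range (M + 1), (if j ≤ l then t l (l - j) * (q l * b (l - j)) else 0)
        = ∑ l ∈ Finset.range (M + 1), (if l + j ≤ M then t (l + j) l * q (l + j) * b l else 0) := by
      rw [aux_sum_ite_ge (fun l => t l (l - j) * (q l * b (l - j))) j (M + 1),
        aux_sum_ite_le (fun l => t (l + j) l * q (l + j) * b l) j M]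
      exact Finset.sum_congr rfl fun m _ => by rw [Nat.add_sub_cancel]; ring
    rw [hsplit, hre]; ring
  rw [hS1, hS2]

end AuxLemmas

theorem stmt_9
    (p : ℕ) (hp : 1 ≤ p)
    (T : ℕ → ℕ → ℝ)
    (hT1 : ∀ n, T n (n + 1) = 1)
    (hTsup : ∀ n m, n + 1 < m → T n m = 0)
    (hTsub : ∀ n m, m + p < n → T n m = 0)
    (hTlow : ∀ n, p ≤ n → T n (n - p) ≠ 0)
    (B : ℕ → Polynomial ℝ)
    (hB0 : B 0 = 1)
    (hBrec : ∀ n, B (n + 1) = (X - C (T n n)) * B n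
      - ∑ j ∈ Finset.Icc 1 p, (if j ≤ n then C (T n (n - j)) * B (n - j) else 0))
    (A : Fin p → ℕ → Polynomial ℝ)
    (hAconst : ∀ a : Fin p, ∀ j < p, ∃ c : ℝ, A a j = C c)
    (hAzero : ∀ a : Fin p, ∀ j : ℕ, j < (a : ℕ) → A a j = 0)
    (hAone : ∀ a : Fin p, A a (a : ℕ) = 1)
    (hArec : ∀ a : Fin p, ∀ n : ℕ,
      (if n = 0 then 0 else A a (n - 1))
        + ∑ i ∈ Finset.range (p + 1), C (T (n + i) n) * A a (n + i) = X * A a n)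
    (N : ℕ) (lam : Fin (N + 1) → ℝ)
    (hroots : ∀ k, eval (lam k) (B (N + 1)) = 0)
    (hanti : StrictAnti lam)
    (hsimple : ∀ k, eval (lam k) (derivative (B (N + 1))) ≠ 0)
    (hden : ∀ k : Fin (N + 1), ∑ l ∈ Finset.range (N + 1),
      eval (lam k) (Qp p A l N) * eval (lam k) (B l) ≠ 0) :
    ∀ m : ℕ, 1 ≤ m → m ≤ N → ∀ n : ℕ, n < m →
      ∑ i : Fin (N + 1),
          (∑ a : Fin p, eval (lam i) (A a m) * mu p A B N lam i a) * (lam i) ^ n = 0 := by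
  obtain ⟨p', rfl⟩ : ∃ q, p = q + 1 := ⟨p - 1, by omega⟩
  haveI : NeZero (p' + 1) := ⟨by omega⟩
  -- B n is monic of degree n
  have hBdeg : ∀ n : ℕ, (B n).Monic ∧ (B n).degree = (n : ℕ) := by
    intro n
    induction n using Nat.strong_induction_on with
    | _ n ih =>
      match n with
      | 0 => rw [hB0]; exact ⟨monic_one, degree_one⟩
      | Nat.succ k =>
        rw [hBrec k]
        have hM : ((X - C (T k k)) * B k).Monic := (monic_X_sub_C _).mul (ih k (by omega)).1
        have hdeg : ((X - C (T k k)) * B k).degree = ((k + 1 : ℕ) : WithBot ℕ) := by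
          rw [degree_mul, degree_X_sub_C, (ih k (by omega)).2]
          rw [← Nat.cast_one, ← Nat.cast_add, Nat.add_comm]
        have hS : (∑ j ∈ Finset.Icc 1 (p' + 1),
            (if j ≤ k then C (T k (k - j)) * B (k - j) else 0)).degree < ((k + 1 : ℕ) : WithBot ℕ) := by
          refine lt_of_le_of_lt (degree_sum_le _ _) ?_
          rw [Finset.sup_lt_iff (by exact WithBot.bot_lt_coe _)]
          intro j hj
          rw [Finset.mem_Icc] at hj
          by_cases hk : j ≤ k
          · rw [if_pos hk]
            refine lt_of_le_of_lt (degree_mul_le _ _) ?_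
            rw [(ih (k - j) (by omega)).2]
            refine lt_of_le_of_lt (add_le_add degree_C_le le_rfl) ?_
            rw [zero_add]
            exact_mod_cast Nat.lt_succ_of_le (Nat.sub_le_of_le_add (by omega))
          · rw [if_neg hk, degree_zero]
            exact WithBot.bot_lt_coe _
        constructor
        · rw [sub_eq_add_neg]
          refine hM.add_of_left ?_
          rw [degree_neg, hdeg]
          exact hS
        · rw [sub_eq_add_neg, degree_add_eq_left_of_degree_lt (by rw [degree_neg, hdeg]; exact hS),
            hdeg]
  -- every polynomial of degree ≤ d is a combination of B_0 .. B_d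
  have hBnat : ∀ n : ℕ, (B n).natDegree = n := fun n =>
    natDegree_eq_of_degree_eq_some (hBdeg n).2
  have hspan : ∀ d : ℕ, ∀ P : Polynomial ℝ, P.degree ≤ (d : ℕ) →
      ∃ c : ℕ → ℝ, P = ∑ l ∈ Finset.range (d + 1), C (c l) * B l := by
    intro d
    induction d with
    | zero =>
      intro P hP
      refine ⟨fun _ => P.coeff 0, ?_⟩
      rw [Finset.sum_range_one, hB0, mul_one]
      exact eq_C_of_degree_le_zero (by exact_mod_cast hP)
    | succ d ih =>
      intro P hP
      have hQdeg : (P - C (P.coeff (d + 1)) * B (d + 1)).degree ≤ (d : ℕ) := by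
        rw [degree_le_iff_coeff_zero]
        intro m hm
        rw [Nat.cast_lt] at hm
        rw [coeff_sub, coeff_C_mul]
        rcases Nat.lt_or_ge m (d + 2) with hm2 | hm2
        · have hmeq : m = d + 1 := by omega
          subst hmeq
          have hcoef : (B (d + 1)).coeff (d + 1) = 1 := by
            have h := (hBdeg (d + 1)).1.coeff_natDegree
            rwa [hBnat (d + 1)] at h
          rw [hcoef, mul_one, sub_self]
        · have h1 : P.coeff m = 0 := by
            apply coeff_eq_zero_of_degree_lt
            exact lt_of_le_of_lt hP (by exact_mod_cast (by omega : d + 1 < m))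
          have h2 : (B (d + 1)).coeff m = 0 := by
            apply coeff_eq_zero_of_degree_lt
            rw [(hBdeg (d + 1)).2]
            exact_mod_cast (by omega : d + 1 < m)
          rw [h1, h2, mul_zero, sub_zero]
      obtain ⟨c, hc⟩ := ih _ hQdeg
      refine ⟨fun l => if l = d + 1 then P.coeff (d + 1) else c l, ?_⟩
      rw [Finset.sum_range_succ]
      beta_reduce
      rw [if_pos rfl, Finset.sum_congr rfl fun l hl => by
          rw [if_neg (by rw [Finset.mem_range] at hl; omega)], ← hc]
      ring
  -- Qp as updateRow of a fixed matrix
  have hQeq : ∀ n : ℕ, Qp (p'+1) A n N =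
      ((Matrix.of fun i a : Fin (p'+1) => if (i:ℕ) = 0 then A a 0 else A a (N + (i:ℕ))).updateRow 0
        (fun a => A a n)).det := by
    intro n
    unfold Qp
    congr 1
    ext i a
    rw [Matrix.of_apply, Matrix.updateRow_apply]
    have hval : ∀ i : Fin (p' + 1), (i : ℕ) = 0 ↔ i = 0 := by
      intro i
      constructor
      · exact fun hc => Fin.ext (hc.trans (Fin.val_zero _).symm)
      · intro hc; rw [hc, Fin.val_zero]
    by_cases h : i = 0
    · rw [if_pos ((hval i).mpr h), if_pos h]
    · rw [if_neg (fun hc => h ((hval i).mp hc)), if_neg h, Matrix.of_apply,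
        if_neg (fun hc => h ((hval i).mp hc))]
  have hdet0 : ∀ M : Matrix (Fin (p'+1)) (Fin (p'+1)) (Polynomial ℝ),
      (M.updateRow 0 0).det = 0 := by
    intro M
    apply Matrix.det_eq_zero_of_row_eq_zero 0
    intro j
    rw [Matrix.updateRow_self]
    rfl
  have hdetsum : ∀ (s : Finset ℕ) (v : ℕ → Fin (p'+1) → Polynomial ℝ)
      (M : Matrix (Fin (p'+1)) (Fin (p'+1)) (Polynomial ℝ)),
      (M.updateRow 0 (∑ i ∈ s, v i)).det = ∑ i ∈ s, (M.updateRow 0 (v i)).det := by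
    intro s v M
    induction s using Finset.induction_on with
    | empty => rw [Finset.sum_empty, Finset.sum_empty]; exact hdet0 M
    | @insert a s h ih =>
      rw [Finset.sum_insert h, Finset.sum_insert h, Matrix.det_updateRow_add, ih]
  have hQrecP : ∀ n, (if n = 0 then 0 else Qp (p'+1) A (n-1) N)
      + ∑ i ∈ Finset.range (p'+1+1), C (T (n+i) n) * Qp (p'+1) A (n+i) N
      = X * Qp (p'+1) A n N := by
    intro n
    rw [hQeq n, ← Matrix.det_updateRow_smul]
    have hrow : ((X : Polynomial ℝ) • fun a => A a n : Fin (p'+1) → Polynomial ℝ)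
        = (if n = 0 then 0 else fun a => A a (n-1))
          + ∑ i ∈ Finset.range (p'+1+1), C (T (n+i) n) • (fun a => A a (n+i)) := by
      funext a
      have h := hArec a n
      simp only [Pi.add_apply, Pi.smul_apply, smul_eq_mul, Finset.sum_apply, Pi.zero_apply,
        apply_ite (fun f : Fin (p'+1) → Polynomial ℝ => f a)]
      exact h.symm
    rw [hrow, Matrix.det_updateRow_add, hdetsum]
    congr 1
    · by_cases h : n = 0
      · rw [if_pos h, if_pos h, hdet0]
      · rw [if_neg h, if_neg h, hQeq (n-1)]
    · refine Finset.sum_congr rfl fun i _ => ?_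
      rw [Matrix.det_updateRow_smul, hQeq (n+i)]
  have hQzero : ∀ r, 1 ≤ r → r < p' + 1 → Qp (p'+1) A (N+r) N = 0 := by
    intro r h1 h2
    unfold Qp
    refine Matrix.det_zero_of_row_eq (i := (0 : Fin (p'+1))) (j := ⟨r, h2⟩)
      (by simp [Fin.ext_iff]; omega) ?_
    funext a
    show (if ((0 : Fin (p'+1)) : ℕ) = 0 then A a (N+r) else A a (N + ((0 : Fin (p'+1)) : ℕ)))
        = (if ((⟨r, h2⟩ : Fin (p'+1)) : ℕ) = 0 then A a (N+r) else A a (N + ((⟨r, h2⟩ : Fin (p'+1)) : ℕ)))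
    simp
  have hcof : ∃ Cof : Fin (p'+1) → Polynomial ℝ, ∀ n,
      Qp (p'+1) A n N = ∑ a, A a n * Cof a := by
    refine ⟨fun a => (-1)^(a:ℕ)
      * (Matrix.of (fun i k : Fin p' => A (a.succAbove k) (N + ((i:ℕ)+1)))).det, fun n => ?_⟩
    unfold Qp
    rw [Matrix.det_succ_row_zero]
    refine Finset.sum_congr rfl fun a _ => ?_
    have h0 : (Matrix.of fun i a : Fin (p'+1) =>
        if (i : ℕ) = 0 then A a n else A a (N + (i:ℕ))) 0 a = A a n := by
      simp
    rw [h0]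
    have hsub : ((Matrix.of fun i b : Fin (p'+1) =>
          if (i:ℕ) = 0 then A b n else A b (N + (i:ℕ))).submatrix Fin.succ a.succAbove)
        = Matrix.of (fun i k : Fin p' => A (a.succAbove k) (N + ((i:ℕ)+1))) := by
      ext i k
      rw [Matrix.submatrix_apply, Matrix.of_apply, Matrix.of_apply, Fin.val_succ,
        if_neg (by omega)]
    rw [hsub]
    ring
  -- nu is invertible (unit lower triangular)
  have hν : (nuMat (p'+1) A)⁻¹ * nuMat (p'+1) A = 1 := by
    have htri : (nuMat (p'+1) A).BlockTriangular OrderDual.toDual := by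
      intro i j h
      show (A j (i:ℕ)).coeff 0 = 0
      rw [hAzero j (i:ℕ) h]
      simp
    have hdet : (nuMat (p'+1) A).det = 1 := by
      rw [Matrix.det_of_lowerTriangular _ htri]
      refine Finset.prod_eq_one fun i _ => ?_
      show (A i (i:ℕ)).coeff 0 = 1
      rw [hAone i]
      exact Polynomial.coeff_one_zero
    exact Matrix.nonsing_inv_mul _ (by rw [hdet]; exact isUnit_one)
  -- evaluated recurrences
  have hqe : ∀ x : ℝ, ∀ n, x * eval x (Qp (p'+1) A n N)
      = (if n = 0 then 0 else eval x (Qp (p'+1) A (n-1) N))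
        + T n n * eval x (Qp (p'+1) A n N)
        + ∑ j ∈ Finset.Icc 1 (p'+1), T (n+j) n * eval x (Qp (p'+1) A (n+j) N) := by
    intro x n
    have h := congrArg (eval x) (hQrecP n)
    simp only [eval_add, eval_mul, eval_X, eval_C, eval_finset_sum, apply_ite (eval x),
      eval_zero] at h
    rw [← h]
    have hsplit : ∑ i ∈ Finset.range (p'+1+1), T (n+i) n * eval x (Qp (p'+1) A (n+i) N)
        = T (n+0) n * eval x (Qp (p'+1) A (n+0) N)
          + ∑ j ∈ Finset.Icc 1 (p'+1), T (n+j) n * eval x (Qp (p'+1) A (n+j) N) := by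
      rw [Finset.sum_range_succ' (fun i => T (n+i) n * eval x (Qp (p'+1) A (n+i) N)) (p'+1),
        aux_icc_range (p'+1) (fun j => T (n+j) n * eval x (Qp (p'+1) A (n+j) N))]
      ring
    rw [hsplit, show n + 0 = n from rfl]
    ring
  have hbe : ∀ y : ℝ, ∀ l, y * eval y (B l)
      = eval y (B (l+1)) + T l l * eval y (B l)
        + ∑ j ∈ Finset.Icc 1 (p'+1), (if j ≤ l then T l (l-j) * eval y (B (l-j)) else 0) := by
    intro y l
    have h := congrArg (eval y) (hBrec l)
    simp only [eval_sub, eval_mul, eval_X, eval_C, eval_finset_sum, apply_ite (eval y),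
      eval_zero] at h
    rw [h]
    ring
  -- Christoffel–Darboux at level N
  have CD : ∀ x y : ℝ,
      (x - y) * ∑ l ∈ Finset.range (N+1), eval x (Qp (p'+1) A l N) * eval y (B l)
      = -(eval x (Qp (p'+1) A N N) * eval y (B (N+1)))
        + T (N+(p'+1)) N * eval x (Qp (p'+1) A (N+(p'+1)) N) * eval y (B N) := by
    intro x y
    have h := aux_CD (p'+1) T (fun n => eval x (Qp (p'+1) A n N)) (fun l => eval y (B l))
      x y (hqe x) (hbe y) N
    rw [Finset.mul_sum]
    rw [show (∑ l ∈ Finset.range (N+1), (x - y) * (eval x (Qp (p'+1) A l N) * eval y (B l)))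
      = -(eval x (Qp (p'+1) A N N) * eval y (B (N + 1)))
        + ∑ j ∈ Finset.Icc 1 (p'+1), ∑ l ∈ Finset.range (N + 1),
          (if N < l + j then T (l + j) l * eval x (Qp (p'+1) A (l+j) N) * eval y (B l) else 0)
      from h]
    congr 1
    have hinner : ∀ j, 1 ≤ j → j ≤ p' + 1 → ∀ l, l < N + 1 → ¬(l = N ∧ j = p' + 1) →
        (if N < l + j then T (l + j) l * eval x (Qp (p'+1) A (l+j) N) * eval y (B l) else 0) = 0 := by
      intro j hj1 hj2 l hl hne
      by_cases hc : N < l + j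
      · rw [if_pos hc]
        have h0 : Qp (p'+1) A (l+j) N = 0 := by
          have := hQzero (l+j-N) (by omega) (by omega)
          rwa [show N + (l+j-N) = l+j by omega] at this
        rw [h0, eval_zero, mul_zero, zero_mul]
      · rw [if_neg hc]
    rw [Finset.sum_eq_single_of_mem (p'+1) (Finset.mem_Icc.mpr ⟨by omega, le_refl _⟩)
      (fun j hj hne => Finset.sum_eq_zero fun l hl =>
        hinner j (Finset.mem_Icc.mp hj).1 (Finset.mem_Icc.mp hj).2 l (Finset.mem_range.mp hl)
          (fun hc => hne hc.2)),
      Finset.sum_eq_single_of_mem N (Finset.self_mem_range_succ N)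
      (fun l hl hne => hinner (p'+1) (by omega) (le_refl _) l (Finset.mem_range.mp hl)
        (fun hc => hne hc.1)),
      if_pos (by omega)]
  have ht : T (N+(p'+1)) N ≠ 0 := by
    have h := hTlow (N+(p'+1)) (by omega)
    rwa [show N+(p'+1)-(p'+1) = N by omega] at h
  -- product identity
  have hprod : C (T (N+(p'+1)) N) * (Qp (p'+1) A (N+(p'+1)) N * B N)
      = Qp (p'+1) A N N * B (N+1) := by
    apply Polynomial.funext
    intro r
    have h := CD r r
    rw [sub_self, zero_mul] at h
    simp only [eval_mul, eval_C]
    nlinarith [h]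
  -- the confluent CD identity
  have hpoly : ∀ k : Fin (N+1),
      (C (lam k) - X) * (∑ l ∈ Finset.range (N+1), C (eval (lam k) (Qp (p'+1) A l N)) * B l)
      = -(C (eval (lam k) (Qp (p'+1) A N N)) * B (N+1))
        + C (T (N+(p'+1)) N * eval (lam k) (Qp (p'+1) A (N+(p'+1)) N)) * B N := by
    intro k
    apply Polynomial.funext
    intro r
    have h := CD (lam k) r
    simp only [eval_add, eval_mul, eval_sub, eval_neg, eval_C, eval_X, eval_finset_sum]
    linear_combination h
  have hevalder : ∀ (c : ℝ) (P : Polynomial ℝ), eval c (derivative ((C c - X) * P)) = -eval c P := by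
    intro c P
    simp [derivative_mul]
  have hconf : ∀ k : Fin (N+1),
      (∑ l ∈ Finset.range (N+1), eval (lam k) (Qp (p'+1) A l N) * eval (lam k) (B l))
      = eval (lam k) (Qp (p'+1) A N N) * eval (lam k) (derivative (B (N+1)))
        - T (N+(p'+1)) N * eval (lam k) (Qp (p'+1) A (N+(p'+1)) N)
          * eval (lam k) (derivative (B N)) := by
    intro k
    have h1 := congrArg (fun P => eval (lam k) (derivative P)) (hpoly k)
    rw [hevalder (lam k)] at h1
    simp only [derivative_add, derivative_neg, derivative_mul, derivative_C, zero_mul, zero_add,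
      eval_add, eval_neg, eval_mul, eval_C, eval_finset_sum] at h1
    linarith [h1]
  -- B N does not vanish at the nodes, and Q_{N+p} does
  have hkey : ∀ k : Fin (N+1), eval (lam k) (B N) ≠ 0
      ∧ eval (lam k) (Qp (p'+1) A (N+(p'+1)) N) = 0 := by
    intro k
    have hcd0 : T (N+(p'+1)) N * eval (lam k) (Qp (p'+1) A (N+(p'+1)) N)
        * eval (lam k) (B N) = 0 := by
      have h := CD (lam k) (lam k)
      rw [sub_self, zero_mul, hroots k] at h
      linarith [h]
    by_cases hbn : eval (lam k) (B N) = 0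
    · exfalso
      have hd := congrArg (fun P => eval (lam k) (derivative P)) hprod
      simp only [derivative_mul, derivative_C, eval_add, eval_mul, eval_C, zero_mul,
        zero_add] at hd
      rw [hbn, hroots k] at hd
      refine hden k ?_
      rw [hconf k]
      nlinarith [hd]
    · have hq0 : eval (lam k) (Qp (p'+1) A (N+(p'+1)) N) = 0 := by
        rcases mul_eq_zero.mp hcd0 with h | h
        · rcases mul_eq_zero.mp h with h' | h'
          · exact absurd h' ht
          · exact h'
        · exact absurd h hbn
      exact ⟨hbn, hq0⟩
  -- discrete dual orthogonality
  have horth : ∀ k j : Fin (N+1), k ≠ j →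
      ∑ l ∈ Finset.range (N+1), eval (lam k) (Qp (p'+1) A l N) * eval (lam j) (B l) = 0 := by
    intro k j hne
    have h := CD (lam k) (lam j)
    rw [hroots j, (hkey k).2, mul_zero, neg_zero, zero_add, mul_zero, zero_mul] at h
    have hlam : lam k - lam j ≠ 0 := sub_ne_zero_of_ne (hanti.injective.ne hne)
    exact (mul_eq_zero.mp h).resolve_left hlam
  -- matrix dual orthogonality
  have hVP : (Matrix.of fun k l : Fin (N+1) => eval (lam k) (Qp (p'+1) A (l:ℕ) N) /
        (∑ l' ∈ Finset.range (N+1), eval (lam k) (Qp (p'+1) A l' N) * eval (lam k) (B l')))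
      * (Matrix.of fun k l : Fin (N+1) => eval (lam k) (B (l:ℕ))).transpose = 1 := by
    ext k j
    rw [Matrix.mul_apply]
    simp only [Matrix.of_apply, Matrix.transpose_apply]
    have hsum : ∑ l : Fin (N+1), eval (lam k) (Qp (p'+1) A (l:ℕ) N) /
          (∑ l' ∈ Finset.range (N+1), eval (lam k) (Qp (p'+1) A l' N) * eval (lam k) (B l'))
          * eval (lam j) (B (l:ℕ))
        = (∑ l ∈ Finset.range (N+1), eval (lam k) (Qp (p'+1) A l N) * eval (lam j) (B l)) /
          (∑ l' ∈ Finset.range (N+1), eval (lam k) (Qp (p'+1) A l' N) * eval (lam k) (B l')) := by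
      rw [Finset.sum_div,
        ← Fin.sum_univ_eq_sum_range (fun l => eval (lam k) (Qp (p'+1) A l N) * eval (lam j) (B l)
          / (∑ l' ∈ Finset.range (N+1), eval (lam k) (Qp (p'+1) A l' N) * eval (lam k) (B l'))) (N+1)]
      exact Finset.sum_congr rfl fun l _ => by ring
    rw [hsum]
    by_cases h : k = j
    · subst h
      rw [Matrix.one_apply_eq, div_self (hden k)]
    · rw [Matrix.one_apply_ne h, horth k j h, zero_div]
  have hPV := mul_eq_one_comm.mp hVP
  -- final computation
  intro m hm1 hm2 n hn
  obtain ⟨Cof, hCof⟩ := hcof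
  have hAm : ∀ i : Fin (N+1), (∑ a : Fin (p'+1), eval (lam i) (A a m) * mu (p'+1) A B N lam i a)
      = eval (lam i) (Qp (p'+1) A m N) /
        (∑ l ∈ Finset.range (N+1), eval (lam i) (Qp (p'+1) A l N) * eval (lam i) (B l)) := by
    intro i
    have hQb : ∀ b : Fin (p'+1), eval (lam i) (Qp (p'+1) A (b:ℕ) N)
        = ∑ c : Fin (p'+1), nuMat (p'+1) A b c * eval (lam i) (Cof c) := by
      intro b
      rw [hCof (b:ℕ), eval_finset_sum]
      refine Finset.sum_congr rfl fun c _ => ?_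
      obtain ⟨cst, hcst⟩ := hAconst c (b:ℕ) b.isLt
      rw [eval_mul, hcst, eval_C]
      congr 1
      show cst = (A c (b:ℕ)).coeff 0
      rw [hcst, coeff_C_zero]
    have hMa : ∀ a : Fin (p'+1),
        (∑ b : Fin (p'+1), (nuMat (p'+1) A)⁻¹ a b * eval (lam i) (Qp (p'+1) A (b:ℕ) N))
        = eval (lam i) (Cof a) := by
      intro a
      calc ∑ b : Fin (p'+1), (nuMat (p'+1) A)⁻¹ a b * eval (lam i) (Qp (p'+1) A (b:ℕ) N)
          = ∑ b : Fin (p'+1), ∑ c : Fin (p'+1),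
              (nuMat (p'+1) A)⁻¹ a b * (nuMat (p'+1) A b c * eval (lam i) (Cof c)) :=
            Finset.sum_congr rfl fun b _ => by rw [hQb b, Finset.mul_sum]
        _ = ∑ c : Fin (p'+1), (∑ b : Fin (p'+1), (nuMat (p'+1) A)⁻¹ a b * nuMat (p'+1) A b c)
              * eval (lam i) (Cof c) := by
            rw [Finset.sum_comm]
            exact Finset.sum_congr rfl fun c _ => by
              rw [Finset.sum_mul]
              exact Finset.sum_congr rfl fun b _ => by ring
        _ = ∑ c : Fin (p'+1), (1 : Matrix (Fin (p'+1)) (Fin (p'+1)) ℝ) a c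
              * eval (lam i) (Cof c) := by
            refine Finset.sum_congr rfl fun c _ => ?_
            congr 1
            rw [← Matrix.mul_apply, hν]
        _ = eval (lam i) (Cof a) := by
            rw [Finset.sum_eq_single_of_mem a (Finset.mem_univ a)
              (fun c _ hc => by rw [Matrix.one_apply_ne (Ne.symm hc), zero_mul]),
              Matrix.one_apply_eq, one_mul]
    have hmu : ∀ a : Fin (p'+1), mu (p'+1) A B N lam i a
        = eval (lam i) (Cof a) /
          (∑ l ∈ Finset.range (N+1), eval (lam i) (Qp (p'+1) A l N) * eval (lam i) (B l)) := by
      intro a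
      simp only [mu, wfun]
      rw [Finset.sum_congr rfl fun b (_ : b ∈ Finset.univ) =>
        (mul_div_assoc ((nuMat (p'+1) A)⁻¹ a b) (eval (lam i) (Qp (p'+1) A (b:ℕ) N))
          (∑ l ∈ Finset.range (N+1), eval (lam i) (Qp (p'+1) A l N) * eval (lam i) (B l))).symm,
        ← Finset.sum_div, hMa a]
    rw [Finset.sum_congr rfl fun a (_ : a ∈ Finset.univ) => by rw [hmu a]]
    rw [Finset.sum_congr rfl fun a (_ : a ∈ Finset.univ) =>
      (mul_div_assoc (eval (lam i) (A a m)) (eval (lam i) (Cof a))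
        (∑ l ∈ Finset.range (N+1), eval (lam i) (Qp (p'+1) A l N) * eval (lam i) (B l))).symm,
      ← Finset.sum_div]
    congr 1
    rw [hCof m, eval_finset_sum]
    exact Finset.sum_congr rfl fun a _ => eval_mul.symm
  obtain ⟨c, hc⟩ := hspan n (X ^ n) (degree_X_pow n).le
  have hxn : ∀ r : ℝ, r ^ n = ∑ l ∈ Finset.range (n+1), c l * eval r (B l) := by
    intro r
    have h := congrArg (eval r) hc
    simpa [eval_finset_sum] using h
  rw [Finset.sum_congr rfl fun i (_ : i ∈ Finset.univ) => by rw [hAm i, hxn (lam i)]]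
  have hswap : ∑ i : Fin (N+1),
      (eval (lam i) (Qp (p'+1) A m N) /
        (∑ l ∈ Finset.range (N+1), eval (lam i) (Qp (p'+1) A l N) * eval (lam i) (B l)))
        * (∑ l ∈ Finset.range (n+1), c l * eval (lam i) (B l))
      = ∑ l ∈ Finset.range (n+1), c l * ∑ i : Fin (N+1), eval (lam i) (B l) *
          (eval (lam i) (Qp (p'+1) A m N) /
            (∑ l' ∈ Finset.range (N+1), eval (lam i) (Qp (p'+1) A l' N) * eval (lam i) (B l'))) := by
    simp_rw [Finset.mul_sum]
    rw [Finset.sum_comm]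
    exact Finset.sum_congr rfl fun l _ => Finset.sum_congr rfl fun i _ => by ring
  rw [hswap]
  have hzero : ∀ l, l < n + 1 → ∑ i : Fin (N+1), eval (lam i) (B l) *
      (eval (lam i) (Qp (p'+1) A m N) /
        (∑ l' ∈ Finset.range (N+1), eval (lam i) (Qp (p'+1) A l' N) * eval (lam i) (B l'))) = 0 := by
    intro l hl
    have hl' : l < N + 1 := by omega
    have hm' : m < N + 1 := by omega
    have h := congrFun (congrFun hPV ⟨l, hl'⟩) ⟨m, hm'⟩
    rw [Matrix.mul_apply, Matrix.one_apply_ne (by simp only [ne_eq, Fin.mk.injEq]; omega)] at h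
    simp only [Matrix.transpose_apply, Matrix.of_apply] at h
    exact h
  rw [Finset.sum_congr rfl fun l hl => by
    rw [hzero l (Finset.mem_range.mp hl), mul_zero]]
  exact Finset.sum_const_zero
end
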